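/- arXiv:1603.08793 — 4 statements merged into one kernel-verified Lean document; each statement's English description precedes it below -/
import Mathlib

section
/- For every integer m, the function x ↦ I_m(x) K_m(x) is strictly decreasing on (0, ∞). -/
open MeasureTheory Real Filter Asymptotics Topology
open scoped Nat

/-- Modified Bessel function of the first kind of integer order `m`. -/
noncomputable def besselI (m : ℤ) (x : ℝ) : ℝ :=
  (1 / Real.pi) * ∫ θ in (0:ℝ)..Real.pi, Real.exp (x * Real.cos θ) * Real.cos ((m : ℝ) * θ)

/-- Modified Bessel function of the second kind of integer order `m`. -/
noncomputable def besselK (m : ℤ) (x : ℝ) : ℝ :=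
  ∫ t in Set.Ioi (0:ℝ), Real.exp (-x * Real.cosh t) * Real.cosh ((m : ℝ) * t)

/-- `ξ_{m,α,d}(κ) = α R_d I_m(κ R_d) K_m(κ R_d) − 1` with `R_d = R + d`. -/
noncomputable def xiA (m : ℤ) (α R d κ : ℝ) : ℝ :=
  α * (R + d) * (besselI m (κ * (R + d)) * besselK m (κ * (R + d))) - 1

/-- `ξ_{m,β}(κ) = β R I_m(κ R) K_m(κ R) − 1`. -/
noncomputable def xiB (m : ℤ) (β R κ : ℝ) : ℝ :=
  β * R * (besselI m (κ * R) * besselK m (κ * R)) - 1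

/-- `ν_m(κ, d) = α β R_d R K_m(κ R_d)² I_m(κ R)²` with `R_d = R + d`. -/
noncomputable def nu (m : ℤ) (α β R κ d : ℝ) : ℝ :=
  α * β * (R + d) * R * (besselK m (κ * (R + d)))^2 * (besselI m (κ * R))^2

/-- `η_m(κ, d) = ν_m(κ, d) − ξ_{m,α,d}(κ) ξ_{m,β}(κ)`. -/
noncomputable def eta (m : ℤ) (α β R κ d : ℝ) : ℝ :=
  nu m α β R κ d - xiA m α R d κ * xiB m β R κ

namespace BesselMono

lemma cosh_le_exp {t : ℝ} (ht : 0 ≤ t) : Real.cosh t ≤ Real.exp t := by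
  rw [Real.cosh_eq]
  have h : Real.exp (-t) ≤ Real.exp t := Real.exp_le_exp.2 (by linarith)
  linarith

lemma cosh_int_mul_le (m : ℤ) {t : ℝ} (ht : 0 ≤ t) :
    Real.cosh ((m : ℝ) * t) ≤ Real.exp (|(m : ℝ)| * t) := by
  rw [← Real.cosh_abs, abs_mul, abs_of_nonneg ht]
  exact cosh_le_exp (by positivity)

lemma one_add_sq_le_cosh (t : ℝ) : 1 + t ^ 2 / 2 ≤ Real.cosh t := by
  have h3 := Real.cosh_two_mul (t / 2)
  rw [show (2 : ℝ) * (t / 2) = t by ring] at h3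
  have hc := Real.cosh_sq (t / 2)
  have h4 : |t / 2| ≤ |Real.sinh (t / 2)| := by
    rw [Real.abs_sinh]
    rcases eq_or_lt_of_le (abs_nonneg (t / 2)) with h | h
    · rw [← h]; simp
    · exact (Real.self_lt_sinh_iff.2 h).le
  have h5 : (t / 2) ^ 2 ≤ Real.sinh (t / 2) ^ 2 := by
    rw [← sq_abs (t / 2), ← sq_abs (Real.sinh (t / 2))]
    exact pow_le_pow_left₀ (abs_nonneg _) h4 2
  nlinarith

lemma one_le_cosh (t : ℝ) : 1 ≤ Real.cosh t := Real.one_le_cosh t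

/-- Master pointwise bound on the `besselK`-type integrands. -/
lemma integrand_bound (m : ℤ) (k : ℕ) {x t : ℝ} (hx : 0 < x) (ht : 0 ≤ t) :
    Real.cosh t ^ k * (Real.exp (-x * Real.cosh t) * Real.cosh ((m : ℝ) * t)) ≤
      Real.exp (((k : ℝ) + |(m : ℝ)| + 1) ^ 2 / (2 * x)) * (Real.exp (-x) * Real.exp (-t)) := by
  have hcpos : (0 : ℝ) < Real.cosh t := Real.cosh_pos t
  have h1 : Real.cosh t ^ k ≤ Real.exp ((k : ℝ) * t) := by
    calc Real.cosh t ^ k ≤ Real.exp t ^ k := pow_le_pow_left₀ hcpos.le (cosh_le_exp ht) k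
      _ = Real.exp ((k : ℝ) * t) := by rw [← Real.exp_nat_mul]
  have h2 := cosh_int_mul_le m ht
  have hchpos : (0 : ℝ) < Real.cosh ((m : ℝ) * t) := Real.cosh_pos _
  have step1 : Real.cosh t ^ k * (Real.exp (-x * Real.cosh t) * Real.cosh ((m : ℝ) * t)) ≤
      Real.exp ((k : ℝ) * t) * (Real.exp (-x * Real.cosh t) * Real.exp (|(m : ℝ)| * t)) := by
    have := Real.exp_pos (-x * Real.cosh t)
    apply mul_le_mul h1 (mul_le_mul_of_nonneg_left h2 this.le) (by positivity) (by positivity)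
  refine step1.trans ?_
  rw [← Real.exp_add, ← Real.exp_add, ← Real.exp_add, ← Real.exp_add]
  apply Real.exp_le_exp.2
  set A : ℝ := (k : ℝ) + |(m : ℝ)| with hA
  have hAnn : 0 ≤ A := by positivity
  -- goal: k*t + (-x*cosh t + |m|*t) ≤ (A+1)^2/(2x) + (-x + -t)
  have hcosh := one_add_sq_le_cosh t
  have key : (A + 1) * t ≤ x * t ^ 2 / 2 + (A + 1) ^ 2 / (2 * x) := by
    have h6 : 0 ≤ (x * t - (A + 1)) ^ 2 := sq_nonneg _
    have h7 : 0 < 2 * x := by linarith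
    rw [div_add_div _ _ (by positivity : (2:ℝ) ≠ 0) (ne_of_gt h7)]
    rw [le_div_iff₀ (by positivity)]
    nlinarith
  have h8 : x * (1 + t ^ 2 / 2) ≤ x * Real.cosh t := by
    apply mul_le_mul_of_nonneg_left hcosh hx.le
  nlinarith

noncomputable def Kc (m : ℤ) (k : ℕ) (x : ℝ) : ℝ :=
  ∫ t in Set.Ioi (0:ℝ), Real.cosh t ^ k * (Real.exp (-x * Real.cosh t) * Real.cosh ((m : ℝ) * t))

lemma continuous_Kint (m : ℤ) (k : ℕ) (x : ℝ) :
    Continuous fun t => Real.cosh t ^ k * (Real.exp (-x * Real.cosh t) * Real.cosh ((m : ℝ) * t)) := by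
  fun_prop

lemma Kint_nonneg (m : ℤ) (k : ℕ) (x t : ℝ) :
    0 ≤ Real.cosh t ^ k * (Real.exp (-x * Real.cosh t) * Real.cosh ((m : ℝ) * t)) := by
  have h1 := Real.cosh_pos t
  have h2 := Real.exp_pos (-x * Real.cosh t)
  have h3 := Real.cosh_pos ((m : ℝ) * t)
  positivity

lemma integrableOn_of_le_K (m : ℤ) (k : ℕ) {x : ℝ} (hx : 0 < x) {f : ℝ → ℝ}
    (hf : Continuous f)
    (hb : ∀ t, 0 ≤ t → |f t| ≤
      Real.cosh t ^ k * (Real.exp (-x * Real.cosh t) * Real.cosh ((m : ℝ) * t))) :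
    IntegrableOn f (Set.Ioi (0:ℝ)) := by
  set C : ℝ := Real.exp (((k : ℝ) + |(m : ℝ)| + 1) ^ 2 / (2 * x)) * Real.exp (-x) with hC
  have hint : IntegrableOn (fun t => C * Real.exp (-(1:ℝ) * t)) (Set.Ioi (0:ℝ)) :=
    (exp_neg_integrableOn_Ioi 0 one_pos).const_mul C
  apply Integrable.mono' hint hf.aestronglyMeasurable
  rw [ae_restrict_iff' measurableSet_Ioi]
  filter_upwards with t ht
  rw [Real.norm_eq_abs]
  calc |f t| ≤ _ := hb t (le_of_lt ht)
    _ ≤ Real.exp (((k : ℝ) + |(m : ℝ)| + 1) ^ 2 / (2 * x)) * (Real.exp (-x) * Real.exp (-t)) :=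
        integrand_bound m k hx (le_of_lt ht)
    _ = C * Real.exp (-(1:ℝ) * t) := by rw [hC]; ring_nf

lemma integrableOn_K_master (m : ℤ) (k : ℕ) {x : ℝ} (hx : 0 < x) :
    IntegrableOn (fun t => Real.cosh t ^ k *
      (Real.exp (-x * Real.cosh t) * Real.cosh ((m : ℝ) * t))) (Set.Ioi (0:ℝ)) :=
  integrableOn_of_le_K m k hx (continuous_Kint m k x)
    (fun t _ => le_of_eq (abs_of_nonneg (Kint_nonneg m k x t)))

lemma Kc_pos (m : ℤ) (k : ℕ) {x : ℝ} (hx : 0 < x) : 0 < Kc m k x := by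
  set f : ℝ → ℝ :=
    fun t => Real.cosh t ^ k * (Real.exp (-x * Real.cosh t) * Real.cosh ((m : ℝ) * t)) with hf
  have h1 : (0:ℝ) < ∫ t in (0:ℝ)..1, f t := by
    apply intervalIntegral.intervalIntegral_pos_of_pos_on
      ((continuous_Kint m k x).intervalIntegrable 0 1)
    · intro t _
      have h1 := Real.cosh_pos t
      have h2 := Real.exp_pos (-x * Real.cosh t)
      have h3 := Real.cosh_pos ((m : ℝ) * t)
      positivity
    · norm_num
  have h2 : (∫ t in (0:ℝ)..1, f t) = ∫ t in Set.Ioc (0:ℝ) 1, f t :=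
    intervalIntegral.integral_of_le (by norm_num)
  have h3 : (∫ t in Set.Ioc (0:ℝ) 1, f t) ≤ ∫ t in Set.Ioi (0:ℝ), f t := by
    apply setIntegral_mono_set (integrableOn_K_master m k hx)
    · exact ae_of_all _ fun t => Kint_nonneg m k x t
    · exact HasSubset.Subset.eventuallyLE Set.Ioc_subset_Ioi_self
  have : (0:ℝ) < ∫ t in Set.Ioi (0:ℝ), f t := by linarith [h2 ▸ h1]
  exact this

lemma hasDerivAt_Kc (m : ℤ) (k : ℕ) {x : ℝ} (hx : 0 < x) :
    HasDerivAt (Kc m k) (-(Kc m (k+1) x)) x := by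
  have key := _root_.hasDerivAt_integral_of_dominated_loc_of_deriv_le
    (μ := volume.restrict (Set.Ioi (0:ℝ)))
    (F := fun (y : ℝ) (t : ℝ) =>
      Real.cosh t ^ k * (Real.exp (-y * Real.cosh t) * Real.cosh ((m : ℝ) * t)))
    (F' := fun (y : ℝ) (t : ℝ) =>
      -(Real.cosh t ^ (k+1) * (Real.exp (-y * Real.cosh t) * Real.cosh ((m : ℝ) * t))))
    (x₀ := x)
    (bound := fun t => Real.cosh t ^ (k+1) *
      (Real.exp (-(x/2) * Real.cosh t) * Real.cosh ((m : ℝ) * t)))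
    (Metric.ball_mem_nhds x (half_pos hx))
    (Eventually.of_forall fun y => (continuous_Kint m k y).aestronglyMeasurable)
    (integrableOn_K_master m k hx)
    ((continuous_Kint m (k+1) x).neg.aestronglyMeasurable)
    ?_ (integrableOn_K_master m (k+1) (half_pos hx)) ?_
  · have h2 : (∫ t in Set.Ioi (0:ℝ),
        -(Real.cosh t ^ (k+1) * (Real.exp (-x * Real.cosh t) * Real.cosh ((m : ℝ) * t))))
        = -(Kc m (k+1) x) := by
      rw [integral_neg]; rfl
    rw [← h2]
    exact key.2
  · rw [ae_restrict_iff' measurableSet_Ioi]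
    filter_upwards with t ht y hy
    rw [norm_neg, Real.norm_eq_abs, abs_of_nonneg (Kint_nonneg m (k+1) y t)]
    have hy2 : x/2 ≤ y := by
      rw [Metric.mem_ball, Real.dist_eq, abs_lt] at hy
      linarith [hy.1]
    have hexp : Real.exp (-y * Real.cosh t) ≤ Real.exp (-(x/2) * Real.cosh t) := by
      apply Real.exp_le_exp.2
      have := (Real.cosh_pos t).le
      nlinarith
    have h1 := Real.cosh_pos t
    have h3 := Real.cosh_pos ((m : ℝ) * t)
    have h4 : (0:ℝ) ≤ Real.cosh t ^ (k+1) := by positivity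
    exact mul_le_mul_of_nonneg_left
      (mul_le_mul_of_nonneg_right hexp h3.le) h4
  · rw [ae_restrict_iff' measurableSet_Ioi]
    filter_upwards with t ht y hy
    have h0 : HasDerivAt (fun y : ℝ => -y * Real.cosh t) (-Real.cosh t) y := by
      simpa using ((hasDerivAt_id y).neg.mul_const (Real.cosh t))
    have hd : HasDerivAt (fun y : ℝ => Real.exp (-y * Real.cosh t))
        (-Real.cosh t * Real.exp (-y * Real.cosh t)) y := by
      simpa [mul_comm] using h0.exp
    have := ((hd.mul_const (Real.cosh ((m : ℝ) * t))).const_mul (Real.cosh t ^ k))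
    refine this.congr_deriv ?_
    ring

lemma abs_sinh_le_cosh (y : ℝ) : |Real.sinh y| ≤ Real.cosh y := by
  rw [Real.abs_sinh, ← Real.cosh_abs]
  have h := Real.exp_pos (-|y|)
  rw [Real.sinh_eq, Real.cosh_eq]
  linarith

lemma integrableOn_Ks (m : ℤ) {x : ℝ} (hx : 0 < x) :
    IntegrableOn (fun t => Real.sinh t * (Real.exp (-x * Real.cosh t) * Real.sinh ((m:ℝ) * t)))
      (Set.Ioi (0:ℝ)) := by
  apply integrableOn_of_le_K m 1 hx (by fun_prop)
  intro t ht
  rw [abs_mul, abs_mul]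
  have h1 := abs_sinh_le_cosh t
  have h2 := abs_sinh_le_cosh ((m:ℝ) * t)
  have h3 : |Real.exp (-x * Real.cosh t)| = Real.exp (-x * Real.cosh t) :=
    abs_of_pos (Real.exp_pos _)
  rw [h3, pow_one]
  have h4 := (Real.exp_pos (-x * Real.cosh t)).le
  have h5 := abs_nonneg (Real.sinh t)
  have h6 := (Real.cosh_pos t).le
  exact mul_le_mul h1 (mul_le_mul_of_nonneg_left h2 h4) (by positivity) h6

lemma integrableOn_Ksq (m : ℤ) {x : ℝ} (hx : 0 < x) :
    IntegrableOn (fun t => Real.sinh t ^ 2 * (Real.exp (-x * Real.cosh t) * Real.cosh ((m:ℝ) * t)))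
      (Set.Ioi (0:ℝ)) := by
  apply integrableOn_of_le_K m 2 hx (by fun_prop)
  intro t ht
  have h0 := Kint_nonneg m 2 x t
  have h1 : Real.sinh t ^ 2 ≤ Real.cosh t ^ 2 := by
    have := Real.cosh_sq t
    nlinarith
  have h2 := Kint_nonneg m 0 x t
  rw [pow_zero, one_mul] at h2
  rw [abs_of_nonneg (by nlinarith [sq_nonneg (Real.sinh t)] : (0:ℝ) ≤ _)]
  exact mul_le_mul_of_nonneg_right h1 h2

lemma integrableOn_Kmaster0 (m : ℤ) {x : ℝ} (hx : 0 < x) :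
    IntegrableOn (fun t => Real.exp (-x * Real.cosh t) * Real.cosh ((m:ℝ) * t))
      (Set.Ioi (0:ℝ)) := by
  have := integrableOn_K_master m 0 hx
  simpa using this

lemma Kbound_tendsto (m : ℤ) {x : ℝ} (hx : 0 < x) (c : ℝ) :
    Tendsto (fun t => c * (Real.exp (-x * Real.cosh t) * Real.cosh ((m:ℝ) * t)))
      atTop (𝓝 0) := by
  apply squeeze_zero_norm' (a := fun t =>
    |c| * (Real.exp (((0 : ℝ) + |(m : ℝ)| + 1) ^ 2 / (2 * x)) * Real.exp (-x)) * Real.exp (-t))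
  · filter_upwards [eventually_ge_atTop (0:ℝ)] with t ht
    rw [Real.norm_eq_abs, abs_mul]
    have h0 : |Real.exp (-x * Real.cosh t) * Real.cosh ((m:ℝ)*t)|
        = Real.exp (-x * Real.cosh t) * Real.cosh ((m:ℝ)*t) := by
      apply abs_of_nonneg
      have := Kint_nonneg m 0 x t
      rwa [pow_zero, one_mul] at this
    rw [h0]
    have hb := integrand_bound m 0 hx ht
    rw [pow_zero, one_mul] at hb
    have : |c| * (Real.exp (-x * Real.cosh t) * Real.cosh ((m:ℝ)*t)) ≤
        |c| * (Real.exp (((0:ℝ) + |(m : ℝ)| + 1) ^ 2 / (2 * x)) * (Real.exp (-x) * Real.exp (-t))) := by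
      apply mul_le_mul_of_nonneg_left _ (abs_nonneg c)
      simpa using hb
    calc |c| * (Real.exp (-x * Real.cosh t) * Real.cosh ((m:ℝ)*t)) ≤ _ := this
      _ = |c| * (Real.exp (((0:ℝ) + |(m : ℝ)| + 1) ^ 2 / (2 * x)) * Real.exp (-x)) *
          Real.exp (-t) := by ring
  · simpa using (Real.tendsto_exp_neg_atTop_nhds_zero.const_mul
      (|c| * (Real.exp (((0:ℝ) + |(m : ℝ)| + 1) ^ 2 / (2 * x)) * Real.exp (-x))))

lemma Kc_zero_eq (m : ℤ) (x : ℝ) :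
    Kc m 0 x = ∫ t in Set.Ioi (0:ℝ), Real.exp (-x * Real.cosh t) * Real.cosh ((m:ℝ) * t) := by
  simp only [Kc, pow_zero, one_mul]

/-- Second integration by parts identity:
`∫ sinh t · e^{-x cosh t} sinh(mt) = (m/x) ∫ e^{-x cosh t} cosh(mt)`. -/
lemma Ks_eq (m : ℤ) {x : ℝ} (hx : 0 < x) :
    (∫ t in Set.Ioi (0:ℝ), Real.sinh t * (Real.exp (-x * Real.cosh t) * Real.sinh ((m:ℝ) * t)))
      = (m : ℝ)/x * Kc m 0 x := by
  set g : ℝ → ℝ := fun t => (-(1/x)) * (Real.exp (-x * Real.cosh t) * Real.sinh ((m:ℝ) * t))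
    with hgdef
  set g' : ℝ → ℝ := fun t =>
    Real.sinh t * (Real.exp (-x * Real.cosh t) * Real.sinh ((m:ℝ) * t))
      - (m : ℝ)/x * (Real.exp (-x * Real.cosh t) * Real.cosh ((m:ℝ) * t)) with hg'def
  have hderiv : ∀ t ∈ Set.Ici (0:ℝ), HasDerivAt g (g' t) t := by
    intro t _
    have hc : HasDerivAt (fun t : ℝ => -x * Real.cosh t) (-x * Real.sinh t) t :=
      (Real.hasDerivAt_cosh t).const_mul (-x)
    have hexp : HasDerivAt (fun t : ℝ => Real.exp (-x * Real.cosh t))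
        (Real.exp (-x * Real.cosh t) * (-x * Real.sinh t)) t := hc.exp
    have hs : HasDerivAt (fun t : ℝ => Real.sinh ((m:ℝ) * t))
        (Real.cosh ((m:ℝ) * t) * (m:ℝ)) t := by
      have h0 : HasDerivAt (fun t : ℝ => (m:ℝ) * t) ((m:ℝ)) t := by
        simpa using (hasDerivAt_id t).const_mul (m:ℝ)
      exact h0.sinh
    have := (hexp.mul hs).const_mul (-(1/x))
    refine this.congr_deriv ?_
    simp only [hg'def]
    field_simp
    ring
  have hint : IntegrableOn g' (Set.Ioi (0:ℝ)) := by
    apply Integrable.sub (integrableOn_Ks m hx)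
    exact (integrableOn_Kmaster0 m hx).const_mul _
  have htends : Tendsto g atTop (𝓝 0) := by
    apply squeeze_zero_norm' (a := fun t =>
      (1/x) * (Real.exp (-x * Real.cosh t) * Real.cosh ((m:ℝ) * t)))
    · filter_upwards [eventually_ge_atTop (0:ℝ)] with t ht
      simp only [hgdef]
      rw [norm_mul, norm_mul, Real.norm_eq_abs, Real.norm_eq_abs, Real.norm_eq_abs,
        abs_of_pos (Real.exp_pos _)]
      have h1 := abs_sinh_le_cosh ((m:ℝ) * t)
      have : |(-(1/x))| = 1/x := by rw [abs_neg, abs_of_pos (by positivity)]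
      rw [this]
      exact mul_le_mul_of_nonneg_left
        (mul_le_mul_of_nonneg_left h1 (Real.exp_pos _).le) (by positivity)
    · have := Kbound_tendsto m hx (1/x)
      simpa using this
  have key := integral_Ioi_of_hasDerivAt_of_tendsto' hderiv hint htends
  have hg0 : g 0 = 0 := by simp [hgdef]
  rw [hg0, sub_zero] at key
  -- key : ∫ g' = 0
  have hsplit : (∫ t in Set.Ioi (0:ℝ), g' t)
      = (∫ t in Set.Ioi (0:ℝ),
          Real.sinh t * (Real.exp (-x * Real.cosh t) * Real.sinh ((m:ℝ) * t)))
        - (m:ℝ)/x * Kc m 0 x := by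
    rw [hg'def]
    rw [integral_sub (integrableOn_Ks m hx) ((integrableOn_Kmaster0 m hx).const_mul _)]
    rw [integral_const_mul, Kc_zero_eq]
  rw [hsplit] at key
  linarith

lemma Kbound_tendsto_k (m : ℤ) (k : ℕ) {x : ℝ} (hx : 0 < x) (c : ℝ) :
    Tendsto (fun t => c * (Real.cosh t ^ k * (Real.exp (-x * Real.cosh t) * Real.cosh ((m:ℝ) * t))))
      atTop (𝓝 0) := by
  apply squeeze_zero_norm' (a := fun t =>
    |c| * (Real.exp (((k : ℝ) + |(m : ℝ)| + 1) ^ 2 / (2 * x)) * Real.exp (-x)) * Real.exp (-t))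
  · filter_upwards [eventually_ge_atTop (0:ℝ)] with t ht
    rw [Real.norm_eq_abs, abs_mul, abs_of_nonneg (Kint_nonneg m k x t)]
    have hb := integrand_bound m k hx ht
    calc |c| * (Real.cosh t ^ k * (Real.exp (-x * Real.cosh t) * Real.cosh ((m:ℝ)*t)))
        ≤ |c| * (Real.exp (((k:ℝ) + |(m : ℝ)| + 1) ^ 2 / (2 * x)) * (Real.exp (-x) * Real.exp (-t))) :=
          mul_le_mul_of_nonneg_left hb (abs_nonneg c)
      _ = |c| * (Real.exp (((k:ℝ) + |(m : ℝ)| + 1) ^ 2 / (2 * x)) * Real.exp (-x)) *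
          Real.exp (-t) := by ring
  · simpa using (Real.tendsto_exp_neg_atTop_nhds_zero.const_mul
      (|c| * (Real.exp (((k:ℝ) + |(m : ℝ)| + 1) ^ 2 / (2 * x)) * Real.exp (-x))))

/-- First integration by parts identity for `besselK`. -/
lemma Ksq_eq (m : ℤ) {x : ℝ} (hx : 0 < x) :
    (∫ t in Set.Ioi (0:ℝ), Real.sinh t ^ 2 * (Real.exp (-x * Real.cosh t) * Real.cosh ((m:ℝ) * t)))
      = 1/x * Kc m 1 x + (m:ℝ)/x * ((m:ℝ)/x * Kc m 0 x) := by
  set f : ℝ → ℝ := fun t =>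
    (-(1/x)) * (Real.exp (-x * Real.cosh t) * (Real.sinh t * Real.cosh ((m:ℝ) * t))) with hfdef
  set f' : ℝ → ℝ := fun t =>
    Real.sinh t ^ 2 * (Real.exp (-x * Real.cosh t) * Real.cosh ((m:ℝ) * t))
      - 1/x * (Real.cosh t ^ 1 * (Real.exp (-x * Real.cosh t) * Real.cosh ((m:ℝ) * t)))
      - (m:ℝ)/x * (Real.sinh t * (Real.exp (-x * Real.cosh t) * Real.sinh ((m:ℝ) * t)))
    with hf'def
  have hderiv : ∀ t ∈ Set.Ici (0:ℝ), HasDerivAt f (f' t) t := by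
    intro t _
    have hc : HasDerivAt (fun t : ℝ => -x * Real.cosh t) (-x * Real.sinh t) t :=
      (Real.hasDerivAt_cosh t).const_mul (-x)
    have hexp : HasDerivAt (fun t : ℝ => Real.exp (-x * Real.cosh t))
        (Real.exp (-x * Real.cosh t) * (-x * Real.sinh t)) t := hc.exp
    have h0 : HasDerivAt (fun t : ℝ => (m:ℝ) * t) ((m:ℝ)) t := by
      simpa using (hasDerivAt_id t).const_mul (m:ℝ)
    have hch : HasDerivAt (fun t : ℝ => Real.cosh ((m:ℝ) * t))
        (Real.sinh ((m:ℝ) * t) * (m:ℝ)) t := h0.cosh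
    have hprod : HasDerivAt (fun t : ℝ => Real.sinh t * Real.cosh ((m:ℝ) * t))
        (Real.cosh t * Real.cosh ((m:ℝ) * t) + Real.sinh t * (Real.sinh ((m:ℝ) * t) * (m:ℝ))) t :=
      (Real.hasDerivAt_sinh t).mul hch
    have := (hexp.mul hprod).const_mul (-(1/x))
    refine this.congr_deriv ?_
    simp only [hf'def]
    field_simp
    ring
  have hint : IntegrableOn f' (Set.Ioi (0:ℝ)) := by
    apply Integrable.sub
    apply Integrable.sub (integrableOn_Ksq m hx)
    · exact (integrableOn_K_master m 1 hx).const_mul _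
    · exact (integrableOn_Ks m hx).const_mul _
  have htends : Tendsto f atTop (𝓝 0) := by
    apply squeeze_zero_norm' (a := fun t =>
      (1/x) * (Real.cosh t ^ 1 * (Real.exp (-x * Real.cosh t) * Real.cosh ((m:ℝ) * t))))
    · filter_upwards [eventually_ge_atTop (0:ℝ)] with t ht
      simp only [hfdef]
      rw [Real.norm_eq_abs, abs_mul, abs_mul, abs_of_pos (Real.exp_pos _), abs_mul]
      have h1 := abs_sinh_le_cosh t
      have h2 : |Real.cosh ((m:ℝ) * t)| = Real.cosh ((m:ℝ) * t) := abs_of_pos (Real.cosh_pos _)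
      have h3 : |(-(1/x))| = 1/x := by rw [abs_neg, abs_of_pos (by positivity)]
      rw [h2, h3, pow_one]
      have h4 : Real.exp (-x * Real.cosh t) * (|Real.sinh t| * Real.cosh ((m:ℝ)*t)) ≤
          Real.cosh t * (Real.exp (-x * Real.cosh t) * Real.cosh ((m:ℝ)*t)) := by
        have h5 := (Real.exp_pos (-x * Real.cosh t)).le
        have h6 := (Real.cosh_pos ((m:ℝ)*t)).le
        have := mul_le_mul_of_nonneg_right h1 (mul_nonneg h5 h6)
        calc Real.exp (-x * Real.cosh t) * (|Real.sinh t| * Real.cosh ((m:ℝ)*t))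
            = |Real.sinh t| * (Real.exp (-x * Real.cosh t) * Real.cosh ((m:ℝ)*t)) := by ring
          _ ≤ Real.cosh t * (Real.exp (-x * Real.cosh t) * Real.cosh ((m:ℝ)*t)) := this
      exact mul_le_mul_of_nonneg_left h4 (by positivity)
    · exact Kbound_tendsto_k m 1 hx (1/x)
  have key := integral_Ioi_of_hasDerivAt_of_tendsto' hderiv hint htends
  have hf0 : f 0 = 0 := by simp [hfdef]
  rw [hf0, sub_zero] at key
  have hsplit : (∫ t in Set.Ioi (0:ℝ), f' t)
      = (∫ t in Set.Ioi (0:ℝ),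
          Real.sinh t ^ 2 * (Real.exp (-x * Real.cosh t) * Real.cosh ((m:ℝ) * t)))
        - 1/x * Kc m 1 x
        - (m:ℝ)/x * (∫ t in Set.Ioi (0:ℝ),
            Real.sinh t * (Real.exp (-x * Real.cosh t) * Real.sinh ((m:ℝ) * t))) := by
    rw [hf'def]
    have i1 : IntegrableOn (fun t =>
        Real.sinh t ^ 2 * (Real.exp (-x * Real.cosh t) * Real.cosh ((m:ℝ) * t))
          - 1/x * (Real.cosh t ^ 1 * (Real.exp (-x * Real.cosh t) * Real.cosh ((m:ℝ) * t))))
        (Set.Ioi (0:ℝ)) := by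
      exact (integrableOn_Ksq m hx).sub ((integrableOn_K_master m 1 hx).const_mul _)
    have i2 : IntegrableOn (fun t =>
        (m:ℝ)/x * (Real.sinh t * (Real.exp (-x * Real.cosh t) * Real.sinh ((m:ℝ) * t))))
        (Set.Ioi (0:ℝ)) := (integrableOn_Ks m hx).const_mul _
    rw [integral_sub i1 i2,
      integral_sub (integrableOn_Ksq m hx) ((integrableOn_K_master m 1 hx).const_mul _),
      integral_const_mul, integral_const_mul]
    rfl
  rw [hsplit, Ks_eq m hx] at key
  linarith

/-- The modified Bessel ODE for `besselK`-type integrals. -/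
lemma K_ode (m : ℤ) {x : ℝ} (hx : 0 < x) :
    x^2 * Kc m 2 x = (x^2 + (m:ℝ)^2) * Kc m 0 x + x * Kc m 1 x := by
  have h1 : Kc m 2 x - Kc m 0 x
      = ∫ t in Set.Ioi (0:ℝ),
          Real.sinh t ^ 2 * (Real.exp (-x * Real.cosh t) * Real.cosh ((m:ℝ) * t)) := by
    rw [show Kc m 2 x - Kc m 0 x
        = ∫ t in Set.Ioi (0:ℝ),
            (Real.cosh t ^ 2 * (Real.exp (-x * Real.cosh t) * Real.cosh ((m:ℝ) * t))
              - Real.cosh t ^ 0 * (Real.exp (-x * Real.cosh t) * Real.cosh ((m:ℝ) * t))) from by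
      rw [integral_sub (integrableOn_K_master m 2 hx) (integrableOn_K_master m 0 hx)]; rfl]
    apply integral_congr_ae
    apply Eventually.of_forall
    intro t
    have := Real.cosh_sq t
    simp only [pow_zero, one_mul]
    linear_combination (Real.exp (-x * Real.cosh t) * Real.cosh ((m:ℝ)*t)) * this
  have h2 := Ksq_eq m hx
  have h3 : Kc m 2 x - Kc m 0 x = 1/x * Kc m 1 x + (m:ℝ)/x * ((m:ℝ)/x * Kc m 0 x) :=
    h1.trans h2
  have hx0 : x ≠ 0 := ne_of_gt hx
  field_simp at h3
  nlinarith [h3, sq_nonneg x]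

noncomputable def Jc (m : ℤ) (k : ℕ) (x : ℝ) : ℝ :=
  ∫ θ in (0:ℝ)..π, Real.cos θ ^ k * (Real.exp (x * Real.cos θ) * Real.cos ((m:ℝ) * θ))

lemma continuous_Jint (m : ℤ) (k : ℕ) (x : ℝ) :
    Continuous fun θ => Real.cos θ ^ k * (Real.exp (x * Real.cos θ) * Real.cos ((m:ℝ) * θ)) := by
  fun_prop

lemma hasDerivAt_Jc (m : ℤ) (k : ℕ) (x : ℝ) :
    HasDerivAt (Jc m k) (Jc m (k+1) x) x := by
  have key := intervalIntegral.hasDerivAt_integral_of_dominated_loc_of_deriv_le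
    (μ := volume) (a := (0:ℝ)) (b := π)
    (F := fun (y : ℝ) (θ : ℝ) =>
      Real.cos θ ^ k * (Real.exp (y * Real.cos θ) * Real.cos ((m:ℝ) * θ)))
    (F' := fun (y : ℝ) (θ : ℝ) =>
      Real.cos θ ^ (k+1) * (Real.exp (y * Real.cos θ) * Real.cos ((m:ℝ) * θ)))
    (x₀ := x) (bound := fun _ => Real.exp (|x| + 1))
    (Metric.ball_mem_nhds x one_pos)
    (Eventually.of_forall fun y => (continuous_Jint m k y).aestronglyMeasurable)
    ((continuous_Jint m k x).intervalIntegrable 0 π)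
    ((continuous_Jint m (k+1) x).aestronglyMeasurable)
    ?_ (intervalIntegrable_const) ?_
  · exact key.2
  · apply Eventually.of_forall
    intro θ _ y hy
    have h1 : |Real.cos θ| ≤ 1 := Real.abs_cos_le_one θ
    have h2 : |Real.cos ((m:ℝ)*θ)| ≤ 1 := Real.abs_cos_le_one _
    have hyx : |y| ≤ |x| + 1 := by
      have h4 : |y - x| < 1 := by rwa [Metric.mem_ball, Real.dist_eq] at hy
      have h5 : |y| - |x| ≤ |y - x| := abs_sub_abs_le_abs_sub y x
      linarith
    have h3 : Real.exp (y * Real.cos θ) ≤ Real.exp (|x| + 1) := by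
      apply Real.exp_le_exp.2
      calc y * Real.cos θ ≤ |y * Real.cos θ| := le_abs_self _
        _ = |y| * |Real.cos θ| := abs_mul _ _
        _ ≤ (|x| + 1) * 1 := mul_le_mul hyx h1 (abs_nonneg _) (by positivity)
        _ = |x| + 1 := mul_one _
    rw [Real.norm_eq_abs, abs_mul, abs_mul]
    calc |Real.cos θ ^ (k+1)| * (|Real.exp (y * Real.cos θ)| * |Real.cos ((m:ℝ)*θ)|)
        ≤ 1 * (|Real.exp (y * Real.cos θ)| * 1) := by
          apply mul_le_mul
          · rw [abs_pow]; exact pow_le_one₀ (abs_nonneg _) h1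
          · apply mul_le_mul_of_nonneg_left h2 (abs_nonneg _)
          · positivity
          · norm_num
      _ = Real.exp (y * Real.cos θ) := by
          rw [abs_of_pos (Real.exp_pos _)]; ring
      _ ≤ Real.exp (|x| + 1) := h3
  · apply Eventually.of_forall
    intro θ _ y hy
    have h0 : HasDerivAt (fun y : ℝ => y * Real.cos θ) (Real.cos θ) y :=
      hasDerivAt_mul_const _
    have hexp : HasDerivAt (fun y : ℝ => Real.exp (y * Real.cos θ))
        (Real.exp (y * Real.cos θ) * Real.cos θ) y := h0.exp
    have := ((hexp.mul_const (Real.cos ((m:ℝ) * θ))).const_mul (Real.cos θ ^ k))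
    refine this.congr_deriv ?_
    ring

lemma besselI_eq_Jc (m : ℤ) (x : ℝ) : besselI m x = (1/π) * Jc m 0 x := by
  simp only [besselI, Jc, pow_zero, one_mul]

lemma integral_cos_int_mul (m : ℤ) (hm : m ≠ 0) :
    (∫ θ in (0:ℝ)..π, Real.cos ((m:ℝ) * θ)) = 0 := by
  have hc : ((m:ℝ)) ≠ 0 := Int.cast_ne_zero.2 hm
  rw [intervalIntegral.integral_comp_mul_left (fun θ => Real.cos θ) hc]
  simp [Real.sin_int_mul_pi]

/-- Second integration by parts identity for `besselI`. -/
lemma Js_eq (m : ℤ) {x : ℝ} (hx : 0 < x) :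
    (∫ θ in (0:ℝ)..π, Real.sin θ * (Real.exp (x * Real.cos θ) * Real.sin ((m:ℝ) * θ)))
      = (m:ℝ)/x * Jc m 0 x := by
  set g : ℝ → ℝ := fun θ => (-(1/x)) * (Real.exp (x * Real.cos θ) * Real.sin ((m:ℝ) * θ))
    with hgdef
  set g' : ℝ → ℝ := fun θ =>
    Real.sin θ * (Real.exp (x * Real.cos θ) * Real.sin ((m:ℝ) * θ))
      - (m:ℝ)/x * (Real.exp (x * Real.cos θ) * Real.cos ((m:ℝ) * θ)) with hg'def
  have hderiv : ∀ θ ∈ Set.uIcc (0:ℝ) π, HasDerivAt g (g' θ) θ := by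
    intro θ _
    have hc : HasDerivAt (fun θ : ℝ => x * Real.cos θ) (x * (-Real.sin θ)) θ :=
      (Real.hasDerivAt_cos θ).const_mul x
    have hexp : HasDerivAt (fun θ : ℝ => Real.exp (x * Real.cos θ))
        (Real.exp (x * Real.cos θ) * (x * (-Real.sin θ))) θ := hc.exp
    have h0 : HasDerivAt (fun θ : ℝ => (m:ℝ) * θ) ((m:ℝ)) θ := by
      simpa using (hasDerivAt_id θ).const_mul (m:ℝ)
    have hs : HasDerivAt (fun θ : ℝ => Real.sin ((m:ℝ) * θ))
        (Real.cos ((m:ℝ) * θ) * (m:ℝ)) θ := h0.sin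
    have := (hexp.mul hs).const_mul (-(1/x))
    refine this.congr_deriv ?_
    simp only [hg'def]
    field_simp
    ring
  have hint : IntervalIntegrable g' volume 0 π := by
    apply Continuous.intervalIntegrable
    fun_prop
  have key := intervalIntegral.integral_eq_sub_of_hasDerivAt hderiv hint
  have hgpi : g π = 0 := by
    simp only [hgdef]
    rw [Real.sin_int_mul_pi]
    ring
  have hg0 : g 0 = 0 := by simp [hgdef]
  rw [hgpi, hg0, sub_zero] at key
  have hsplit : (∫ θ in (0:ℝ)..π, g' θ)
      = (∫ θ in (0:ℝ)..π, Real.sin θ * (Real.exp (x * Real.cos θ) * Real.sin ((m:ℝ) * θ)))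
        - (m:ℝ)/x * Jc m 0 x := by
    rw [hg'def]
    rw [intervalIntegral.integral_sub (by apply Continuous.intervalIntegrable; fun_prop)
      (by apply Continuous.intervalIntegrable; fun_prop)]
    rw [intervalIntegral.integral_const_mul]
    simp only [Jc, pow_zero, one_mul]
  rw [hsplit] at key
  linarith

/-- First integration by parts identity for `besselI`. -/
lemma Jsq_eq (m : ℤ) {x : ℝ} (hx : 0 < x) :
    (∫ θ in (0:ℝ)..π, Real.sin θ ^ 2 * (Real.exp (x * Real.cos θ) * Real.cos ((m:ℝ) * θ)))
      = 1/x * Jc m 1 x - (m:ℝ)/x * ((m:ℝ)/x * Jc m 0 x) := by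
  set f : ℝ → ℝ := fun θ =>
    (1/x) * (Real.exp (x * Real.cos θ) * (Real.sin θ * Real.cos ((m:ℝ) * θ))) with hfdef
  set f' : ℝ → ℝ := fun θ =>
    -(Real.sin θ ^ 2 * (Real.exp (x * Real.cos θ) * Real.cos ((m:ℝ) * θ)))
      + 1/x * (Real.cos θ ^ 1 * (Real.exp (x * Real.cos θ) * Real.cos ((m:ℝ) * θ)))
      - (m:ℝ)/x * (Real.sin θ * (Real.exp (x * Real.cos θ) * Real.sin ((m:ℝ) * θ)))
    with hf'def
  have hderiv : ∀ θ ∈ Set.uIcc (0:ℝ) π, HasDerivAt f (f' θ) θ := by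
    intro θ _
    have hc : HasDerivAt (fun θ : ℝ => x * Real.cos θ) (x * (-Real.sin θ)) θ :=
      (Real.hasDerivAt_cos θ).const_mul x
    have hexp : HasDerivAt (fun θ : ℝ => Real.exp (x * Real.cos θ))
        (Real.exp (x * Real.cos θ) * (x * (-Real.sin θ))) θ := hc.exp
    have h0 : HasDerivAt (fun θ : ℝ => (m:ℝ) * θ) ((m:ℝ)) θ := by
      simpa using (hasDerivAt_id θ).const_mul (m:ℝ)
    have hch : HasDerivAt (fun θ : ℝ => Real.cos ((m:ℝ) * θ))
        (-Real.sin ((m:ℝ) * θ) * (m:ℝ)) θ := h0.cos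
    have hprod : HasDerivAt (fun θ : ℝ => Real.sin θ * Real.cos ((m:ℝ) * θ))
        (Real.cos θ * Real.cos ((m:ℝ) * θ) + Real.sin θ * (-Real.sin ((m:ℝ) * θ) * (m:ℝ))) θ :=
      (Real.hasDerivAt_sin θ).mul hch
    have := (hexp.mul hprod).const_mul (1/x)
    refine this.congr_deriv ?_
    simp only [hf'def]
    field_simp
    ring
  have hint : IntervalIntegrable f' volume 0 π := by
    apply Continuous.intervalIntegrable
    fun_prop
  have key := intervalIntegral.integral_eq_sub_of_hasDerivAt hderiv hint
  have hfpi : f π = 0 := by simp [hfdef]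
  have hf0 : f 0 = 0 := by simp [hfdef]
  rw [hfpi, hf0, sub_zero] at key
  have hsplit : (∫ θ in (0:ℝ)..π, f' θ)
      = -(∫ θ in (0:ℝ)..π, Real.sin θ ^ 2 * (Real.exp (x * Real.cos θ) * Real.cos ((m:ℝ) * θ)))
        + 1/x * Jc m 1 x
        - (m:ℝ)/x * (∫ θ in (0:ℝ)..π,
            Real.sin θ * (Real.exp (x * Real.cos θ) * Real.sin ((m:ℝ) * θ))) := by
    rw [hf'def]
    rw [intervalIntegral.integral_sub (by apply Continuous.intervalIntegrable; fun_prop)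
      (by apply Continuous.intervalIntegrable; fun_prop)]
    rw [intervalIntegral.integral_add (by apply Continuous.intervalIntegrable; fun_prop)
      (by apply Continuous.intervalIntegrable; fun_prop)]
    rw [intervalIntegral.integral_neg, intervalIntegral.integral_const_mul,
      intervalIntegral.integral_const_mul]
    rfl
  rw [hsplit, Js_eq m hx] at key
  linarith

/-- The modified Bessel ODE for `besselI`-type integrals. -/
lemma J_ode (m : ℤ) {x : ℝ} (hx : 0 < x) :
    x^2 * Jc m 2 x = (x^2 + (m:ℝ)^2) * Jc m 0 x - x * Jc m 1 x := by
  have h1 : Jc m 2 x - Jc m 0 x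
      = -(∫ θ in (0:ℝ)..π, Real.sin θ ^ 2 * (Real.exp (x * Real.cos θ) * Real.cos ((m:ℝ) * θ))) := by
    rw [show Jc m 2 x - Jc m 0 x
        = ∫ θ in (0:ℝ)..π,
            (Real.cos θ ^ 2 * (Real.exp (x * Real.cos θ) * Real.cos ((m:ℝ) * θ))
              - Real.cos θ ^ 0 * (Real.exp (x * Real.cos θ) * Real.cos ((m:ℝ) * θ))) from by
      rw [intervalIntegral.integral_sub ((continuous_Jint m 2 x).intervalIntegrable 0 π)
        ((continuous_Jint m 0 x).intervalIntegrable 0 π)]; rfl]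
    rw [← intervalIntegral.integral_neg]
    apply intervalIntegral.integral_congr
    intro θ _
    have := Real.sin_sq_add_cos_sq θ
    simp only [pow_zero, one_mul]
    linear_combination (Real.exp (x * Real.cos θ) * Real.cos ((m:ℝ)*θ)) * this
  have h2 := Jsq_eq m hx
  have h3 : Jc m 2 x - Jc m 0 x = -(1/x * Jc m 1 x - (m:ℝ)/x * ((m:ℝ)/x * Jc m 0 x)) := by
    rw [h1, h2]
  have hx0 : x ≠ 0 := ne_of_gt hx
  field_simp at h3
  nlinarith [h3, sq_nonneg x]

noncomputable def cc (n : ℕ) (m : ℤ) : ℝ :=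
  ∫ θ in (0:ℝ)..π, Real.cos θ ^ n * Real.cos ((m:ℝ) * θ)

lemma cc_zero_zero : cc 0 0 = π := by
  simp [cc]

lemma cc_zero (m : ℤ) (hm : m ≠ 0) : cc 0 m = 0 := by
  simp only [cc, pow_zero, one_mul]
  exact integral_cos_int_mul m hm

lemma cc_rec (n : ℕ) (m : ℤ) : cc (n+1) m = (cc n (m-1) + cc n (m+1))/2 := by
  have h1 : (2:ℝ) * cc (n+1) m
      = ∫ θ in (0:ℝ)..π, (Real.cos θ ^ n * Real.cos (((m-1 : ℤ):ℝ) * θ)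
          + Real.cos θ ^ n * Real.cos (((m+1 : ℤ):ℝ) * θ)) := by
    rw [cc, ← intervalIntegral.integral_const_mul]
    apply intervalIntegral.integral_congr
    intro θ _
    push_cast
    rw [sub_mul, add_mul, one_mul, Real.cos_sub, Real.cos_add]
    ring
  rw [intervalIntegral.integral_add ((by fun_prop : Continuous fun θ =>
      Real.cos θ ^ n * Real.cos (((m-1 : ℤ):ℝ) * θ)).intervalIntegrable 0 π)
    ((by fun_prop : Continuous fun θ =>
      Real.cos θ ^ n * Real.cos (((m+1 : ℤ):ℝ) * θ)).intervalIntegrable 0 π)] at h1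
  have h2 : (∫ θ in (0:ℝ)..π, Real.cos θ ^ n * Real.cos (((m-1 : ℤ):ℝ) * θ)) = cc n (m-1) := rfl
  have h3 : (∫ θ in (0:ℝ)..π, Real.cos θ ^ n * Real.cos (((m+1 : ℤ):ℝ) * θ)) = cc n (m+1) := rfl
  rw [h2, h3] at h1
  linarith

lemma cc_nonneg : ∀ (n : ℕ) (m : ℤ), 0 ≤ cc n m := by
  intro n
  induction n with
  | zero =>
    intro m
    by_cases hm : m = 0
    · subst hm; rw [cc_zero_zero]; exact Real.pi_pos.le
    · rw [cc_zero m hm]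
  | succ n ih =>
    intro m
    rw [cc_rec]
    have h1 := ih (m-1)
    have h2 := ih (m+1)
    linarith

lemma cc_diag_pos : ∀ n : ℕ, 0 < cc n (n : ℤ) := by
  intro n
  induction n with
  | zero => rw [show ((0:ℕ):ℤ) = 0 from rfl, cc_zero_zero]; exact Real.pi_pos
  | succ n ih =>
    rw [cc_rec]
    have h1 : ((n:ℕ)+1 : ℤ) - 1 = (n : ℤ) := by push_cast; ring
    have h2 := cc_nonneg n (((n:ℕ)+1 : ℤ) + 1)
    rw [show (((n:ℕ)+1 : ℕ) : ℤ) = ((n:ℕ)+1 : ℤ) from by push_cast; ring, h1]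
    linarith

lemma cc_le_pi (n : ℕ) (m : ℤ) : cc n m ≤ π := by
  have h1 : cc n m ≤ ∫ _ in (0:ℝ)..π, (1:ℝ) := by
    apply intervalIntegral.integral_mono_on Real.pi_pos.le
      ((by fun_prop : Continuous fun θ =>
        Real.cos θ ^ n * Real.cos ((m:ℝ) * θ)).intervalIntegrable 0 π)
      (intervalIntegrable_const)
    intro θ _
    have h2 : |Real.cos θ ^ n * Real.cos ((m:ℝ)*θ)| ≤ 1 := by
      rw [abs_mul, abs_pow]
      calc |Real.cos θ| ^ n * |Real.cos ((m:ℝ)*θ)| ≤ 1 ^ n * 1 := by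
            apply mul_le_mul (pow_le_pow_left₀ (abs_nonneg _) (Real.abs_cos_le_one θ) n)
              (Real.abs_cos_le_one _) (abs_nonneg _) (by positivity)
        _ = 1 := by norm_num
    calc Real.cos θ ^ n * Real.cos ((m:ℝ)*θ) ≤ |Real.cos θ ^ n * Real.cos ((m:ℝ)*θ)| :=
          le_abs_self _
      _ ≤ 1 := h2
  simpa using h1

lemma exp_mul_cos_eq_tsum (m : ℤ) (x θ : ℝ) :
    Real.exp (x * Real.cos θ) * Real.cos ((m:ℝ) * θ)
      = ∑' n : ℕ, x^n / n ! * (Real.cos θ ^ n * Real.cos ((m:ℝ) * θ)) := by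
  have hexp : Real.exp (x * Real.cos θ) = ∑' n : ℕ, (x * Real.cos θ)^n / n ! := by
    rw [Real.exp_eq_exp_ℝ, NormedSpace.exp_eq_tsum_div]
  rw [hexp, ← tsum_mul_right]
  apply tsum_congr
  intro n
  rw [mul_pow]
  ring

lemma Jc0_eq_tsum (m : ℤ) (x : ℝ) : Jc m 0 x = ∑' n : ℕ, x^n / n ! * cc n m := by
  have h0 : Jc m 0 x = ∫ θ in Set.Ioc (0:ℝ) π,
      Real.exp (x * Real.cos θ) * Real.cos ((m:ℝ) * θ) := by
    rw [Jc]
    simp only [pow_zero, one_mul]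
    exact intervalIntegral.integral_of_le Real.pi_pos.le
  have hswap := MeasureTheory.integral_tsum_of_summable_integral_norm
    (μ := volume.restrict (Set.Ioc (0:ℝ) π))
    (F := fun (n : ℕ) (θ : ℝ) => x^n / n ! * (Real.cos θ ^ n * Real.cos ((m:ℝ) * θ)))
    (fun n => ((by fun_prop : Continuous fun θ =>
      x^n / n ! * (Real.cos θ ^ n * Real.cos ((m:ℝ) * θ))).integrableOn_Ioc))
    ?_
  · have h1 : ∀ n : ℕ, (∫ θ in Set.Ioc (0:ℝ) π,
        x^n / n ! * (Real.cos θ ^ n * Real.cos ((m:ℝ) * θ))) = x^n / n ! * cc n m := by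
      intro n
      rw [integral_const_mul]
      congr 1
      rw [cc, intervalIntegral.integral_of_le Real.pi_pos.le]
    rw [h0]
    have h2 : (∫ θ in Set.Ioc (0:ℝ) π, Real.exp (x * Real.cos θ) * Real.cos ((m:ℝ) * θ))
        = ∫ θ in Set.Ioc (0:ℝ) π,
            (∑' n : ℕ, x^n / n ! * (Real.cos θ ^ n * Real.cos ((m:ℝ) * θ))) := by
      apply integral_congr_ae
      exact Eventually.of_forall fun θ => exp_mul_cos_eq_tsum m x θ
    rw [h2, ← hswap]
    apply tsum_congr
    intro n
    exact h1 n
  · apply Summable.of_nonneg_of_le (fun n => integral_nonneg fun θ => norm_nonneg _)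
      (fun n => ?_) ((Real.summable_pow_div_factorial |x|).mul_left π)
    have hb : ∀ θ : ℝ, ‖x^n / n ! * (Real.cos θ ^ n * Real.cos ((m:ℝ) * θ))‖
        ≤ |x|^n / n ! := by
      intro θ
      rw [Real.norm_eq_abs, abs_mul]
      have h2 : |Real.cos θ ^ n * Real.cos ((m:ℝ)*θ)| ≤ 1 := by
        rw [abs_mul, abs_pow]
        calc |Real.cos θ| ^ n * |Real.cos ((m:ℝ)*θ)| ≤ 1 ^ n * 1 := by
              apply mul_le_mul (pow_le_pow_left₀ (abs_nonneg _) (Real.abs_cos_le_one θ) n)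
                (Real.abs_cos_le_one _) (abs_nonneg _) (by positivity)
          _ = 1 := by norm_num
      calc |x^n / n !| * |Real.cos θ ^ n * Real.cos ((m:ℝ)*θ)| ≤ |x^n / n !| * 1 :=
            mul_le_mul_of_nonneg_left h2 (abs_nonneg _)
        _ = |x|^n / n ! := by
            rw [mul_one, abs_div, abs_pow]
            congr 1
            exact abs_of_nonneg (by positivity)
    calc (∫ θ in Set.Ioc (0:ℝ) π, ‖x^n / n ! * (Real.cos θ ^ n * Real.cos ((m:ℝ) * θ))‖)
        ≤ ∫ _ in Set.Ioc (0:ℝ) π, |x|^n / n ! := by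
          apply setIntegral_mono_on
          · exact ((by fun_prop : Continuous fun θ =>
              x^n / n ! * (Real.cos θ ^ n * Real.cos ((m:ℝ) * θ))).integrableOn_Ioc).norm
          · exact integrableOn_const (by simp)
          · exact measurableSet_Ioc
          · intro θ _; exact hb θ
      _ ≤ π * (|x|^n / n !) := by
          rw [setIntegral_const]
          simp only [Real.volume_Ioc, sub_zero, smul_eq_mul]
          rw [Real.volume_real_Ioc_of_le Real.pi_pos.le, sub_zero]
  
lemma Jc_neg_order (m : ℤ) (k : ℕ) (x : ℝ) : Jc (-m) k x = Jc m k x := by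
  unfold Jc
  apply intervalIntegral.integral_congr
  intro θ _
  push_cast
  rw [neg_mul, Real.cos_neg]

lemma Jc0_pos_of_nonneg (m : ℤ) (hm : 0 ≤ m) {x : ℝ} (hx : 0 < x) : 0 < Jc m 0 x := by
    rw [Jc0_eq_tsum]
    have hsum : Summable fun n : ℕ => x^n / n ! * cc n m := by
      apply Summable.of_nonneg_of_le
        (fun n => mul_nonneg (by positivity) (cc_nonneg n m)) (fun n => ?_)
        ((Real.summable_pow_div_factorial x).mul_right π)
      calc x^n / n ! * cc n m ≤ x^n / n ! * π :=
            mul_le_mul_of_nonneg_left (cc_le_pi n m) (by positivity)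
        _ = x^n / n ! * π := rfl
    set n₀ : ℕ := m.toNat with hn₀
    have hcast : ((n₀ : ℕ) : ℤ) = m := Int.toNat_of_nonneg hm
    have hterm : 0 < x^n₀ / n₀ ! * cc n₀ m := by
      apply mul_pos (by positivity)
      rw [← hcast] at *
      exact cc_diag_pos n₀
    calc (0:ℝ) < x^n₀ / n₀ ! * cc n₀ m := hterm
      _ ≤ ∑' n : ℕ, x^n / n ! * cc n m :=
          Summable.le_tsum hsum n₀ (fun i _ => mul_nonneg (by positivity) (cc_nonneg i m))

lemma Jc0_pos (m : ℤ) {x : ℝ} (hx : 0 < x) : 0 < Jc m 0 x := by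
  rcases le_total 0 m with hm | hm
  · exact Jc0_pos_of_nonneg m hm hx
  · rw [← Jc_neg_order]
    exact Jc0_pos_of_nonneg (-m) (neg_nonneg.2 hm) hx

lemma besselI_pos (m : ℤ) {x : ℝ} (hx : 0 < x) : 0 < besselI m x := by
  rw [besselI_eq_Jc]
  exact mul_pos (by positivity) (Jc0_pos m hx)

lemma besselK_eq_Kc (m : ℤ) (x : ℝ) : besselK m x = Kc m 0 x := by
  rw [besselK, Kc_zero_eq]

section Nfun

lemma N_strictAntiOn {f N : ℝ → ℝ}
    (hder : ∀ x ∈ Set.Ioi (0:ℝ), HasDerivAt N (-2*x*(f x)^2) x)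
    (hpos : ∀ x ∈ Set.Ioi (0:ℝ), 0 < f x) :
    StrictAntiOn N (Set.Ioi (0:ℝ)) := by
  apply strictAntiOn_of_deriv_neg (convex_Ioi 0)
  · intro x hx
    exact (hder x hx).continuousAt.continuousWithinAt
  · intro x hx
    rw [interior_Ioi] at hx
    rw [(hder x hx).deriv]
    have h1 := hpos x hx
    have hx' : (0:ℝ) < x := hx
    have h2 : 0 < 2*x*(f x)^2 := by positivity
    linarith

lemma N_neg {f N : ℝ → ℝ}
    (hder : ∀ x ∈ Set.Ioi (0:ℝ), HasDerivAt N (-2*x*(f x)^2) x)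
    (hpos : ∀ x ∈ Set.Ioi (0:ℝ), 0 < f x)
    (hlim : Tendsto N (𝓝[>] (0:ℝ)) (𝓝 0)) :
    ∀ x ∈ Set.Ioi (0:ℝ), N x < 0 := by
  intro x hx
  have hx' : (0:ℝ) < x := hx
  have hanti := N_strictAntiOn hder hpos
  have hhalf : x/2 ∈ Set.Ioi (0:ℝ) := half_pos hx'
  have h1 : N x < N (x/2) := hanti hhalf hx (by linarith)
  have h2 : N (x/2) ≤ 0 := by
    apply ge_of_tendsto hlim
    filter_upwards [Ioo_mem_nhdsGT_of_mem (Set.left_mem_Ico.2 (half_pos hx'))] with z hz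
    exact (hanti hz.1 hhalf hz.2).le
  linarith

lemma N_pos {f N : ℝ → ℝ}
    (hder : ∀ x ∈ Set.Ioi (0:ℝ), HasDerivAt N (-2*x*(f x)^2) x)
    (hpos : ∀ x ∈ Set.Ioi (0:ℝ), 0 < f x)
    (hlim : Tendsto N atTop (𝓝 0)) :
    ∀ x ∈ Set.Ioi (0:ℝ), 0 < N x := by
  intro x hx
  have hx' : (0:ℝ) < x := hx
  have hanti := N_strictAntiOn hder hpos
  have hx1 : x + 1 ∈ Set.Ioi (0:ℝ) := by simp only [Set.mem_Ioi]; linarith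
  have h1 : N (x+1) < N x := hanti hx hx1 (lt_add_one x)
  have h2 : 0 ≤ N (x+1) := by
    apply le_of_tendsto hlim
    filter_upwards [eventually_gt_atTop (x+1)] with z hz
    exact (hanti hx1 (Set.mem_Ioi.2 (by linarith)) hz).le
  linarith

end Nfun

lemma hasDerivAt_besselI (m : ℤ) (x : ℝ) :
    HasDerivAt (besselI m) ((1/π) * Jc m 1 x) x := by
  have h : besselI m = fun y => (1/π) * Jc m 0 y := funext fun y => besselI_eq_Jc m y
  rw [h]
  exact (hasDerivAt_Jc m 0 x).const_mul (1/π)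

lemma hasDerivAt_besselK (m : ℤ) {x : ℝ} (hx : 0 < x) :
    HasDerivAt (besselK m) (-(Kc m 1 x)) x := by
  have h : besselK m = fun y => Kc m 0 y := funext fun y => besselK_eq_Kc m y
  rw [h]
  exact hasDerivAt_Kc m 0 hx

lemma I_ode (m : ℤ) {x : ℝ} (hx : 0 < x) :
    x^2 * ((1/π) * Jc m 2 x) + x * ((1/π) * Jc m 1 x)
      = (x^2 + (m:ℝ)^2) * besselI m x := by
  rw [besselI_eq_Jc]
  linear_combination (1/π) * J_ode m hx

lemma NI_neg (m : ℤ) {x : ℝ} (hx : 0 < x) :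
    x^2 * ((1/π) * Jc m 1 x)^2 - (x^2 + (m:ℝ)^2) * (besselI m x)^2 < 0 := by
  set N : ℝ → ℝ := fun y =>
    y^2 * ((1/π) * Jc m 1 y)^2 - (y^2 + (m:ℝ)^2) * (besselI m y)^2 with hN
  have hder : ∀ y ∈ Set.Ioi (0:ℝ), HasDerivAt N (-2*y*(besselI m y)^2) y := by
    intro y hy
    have hy' : (0:ℝ) < y := hy
    have hI := hasDerivAt_besselI m y
    have hI1 : HasDerivAt (fun z => (1/π) * Jc m 1 z) ((1/π) * Jc m 2 y) y :=
      (hasDerivAt_Jc m 1 y).const_mul (1/π)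
    have hA := (hasDerivAt_pow 2 y).mul (hI1.pow 2)
    have hB := ((hasDerivAt_pow 2 y).add_const ((m:ℝ)^2)).mul (hI.pow 2)
    have hode := I_ode m hy'
    refine (hA.sub hB).congr_deriv ?_
    push_cast [Pi.pow_apply]
    linear_combination (2 * ((1/π) * Jc m 1 y)) * hode
  have hpos : ∀ y ∈ Set.Ioi (0:ℝ), 0 < besselI m y := fun y hy => besselI_pos m hy
  have hcont : ContinuousAt N 0 := by
    have c1 : ContinuousAt (fun y => Jc m 1 y) 0 := (hasDerivAt_Jc m 1 0).continuousAt
    have c0 : ContinuousAt (besselI m) 0 := (hasDerivAt_besselI m 0).continuousAt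
    exact (((continuousAt_id.pow 2).mul ((continuousAt_const.mul c1).pow 2)).sub
      (((continuousAt_id.pow 2).add continuousAt_const).mul (c0.pow 2)))
  have hval : N 0 = 0 := by
    have hI0 : ((m:ℝ)^2) * (besselI m 0)^2 = 0 := by
      by_cases hm : m = 0
      · subst hm; simp
      · have h1 : Jc m 0 0 = 0 := by
          have h2 : Jc m 0 0 = ∫ θ in (0:ℝ)..π, Real.cos ((m:ℝ) * θ) := by
            unfold Jc
            apply intervalIntegral.integral_congr
            intro θ _
            simp
          rw [h2]
          exact integral_cos_int_mul m hm
        rw [besselI_eq_Jc, h1]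
        ring
    simp only [hN]
    linear_combination (-1 : ℝ) * hI0
  have hlim : Tendsto N (𝓝[>] (0:ℝ)) (𝓝 0) := by
    have h := hcont.tendsto
    rw [hval] at h
    exact h.mono_left nhdsWithin_le_nhds
  exact N_neg hder hpos hlim x hx

lemma Kc_nonneg (m : ℤ) (k : ℕ) (x : ℝ) : 0 ≤ Kc m k x :=
  setIntegral_nonneg measurableSet_Ioi fun t _ => Kint_nonneg m k x t

lemma Kc_le (m : ℤ) (k : ℕ) {x : ℝ} (hx : 1 ≤ x) :
    Kc m k x ≤ Real.exp (((k:ℝ) + |(m:ℝ)| + 1)^2/2) * Real.exp (-x) := by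
  have hx0 : (0:ℝ) < x := lt_of_lt_of_le one_pos hx
  have h1 : Kc m k x ≤ ∫ t in Set.Ioi (0:ℝ),
      Real.exp (((k:ℝ) + |(m:ℝ)| + 1)^2/2) * (Real.exp (-x) * Real.exp (-t)) := by
    apply setIntegral_mono_on (integrableOn_K_master m k hx0)
    · apply (((exp_neg_integrableOn_Ioi 0 one_pos).const_mul
        (Real.exp (((k:ℝ) + |(m:ℝ)| + 1)^2/2) * Real.exp (-x)))).congr
      apply ae_of_all
      intro t
      simp only [neg_one_mul]
      ring
    · exact measurableSet_Ioi
    · intro t ht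
      calc Real.cosh t ^ k * (Real.exp (-x * Real.cosh t) * Real.cosh ((m:ℝ)*t))
          ≤ Real.exp (((k:ℝ) + |(m:ℝ)| + 1)^2/(2*x)) * (Real.exp (-x) * Real.exp (-t)) :=
            integrand_bound m k hx0 (le_of_lt ht)
        _ ≤ Real.exp (((k:ℝ) + |(m:ℝ)| + 1)^2/2) * (Real.exp (-x) * Real.exp (-t)) := by
            apply mul_le_mul_of_nonneg_right _ (by positivity)
            apply Real.exp_le_exp.2
            apply div_le_div_of_nonneg_left (by positivity) (by norm_num) (by linarith)
  calc Kc m k x ≤ _ := h1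
    _ = Real.exp (((k:ℝ) + |(m:ℝ)| + 1)^2/2) * Real.exp (-x) *
        (∫ t in Set.Ioi (0:ℝ), Real.exp (-t)) := by
        rw [← integral_const_mul]
        congr 1
        funext t
        ring
    _ = Real.exp (((k:ℝ) + |(m:ℝ)| + 1)^2/2) * Real.exp (-x) := by
        rw [integral_exp_neg_Ioi]
        norm_num

lemma NK_pos (m : ℤ) {x : ℝ} (hx : 0 < x) :
    0 < x^2 * (Kc m 1 x)^2 - (x^2 + (m:ℝ)^2) * (Kc m 0 x)^2 := by
  set N : ℝ → ℝ := fun y =>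
    y^2 * (Kc m 1 y)^2 - (y^2 + (m:ℝ)^2) * (Kc m 0 y)^2 with hN
  have hder : ∀ y ∈ Set.Ioi (0:ℝ), HasDerivAt N (-2*y*(Kc m 0 y)^2) y := by
    intro y hy
    have hy' : (0:ℝ) < y := hy
    have hK0 := hasDerivAt_Kc m 0 hy'
    have hK1 := hasDerivAt_Kc m 1 hy'
    have hA := (hasDerivAt_pow 2 y).mul (hK1.pow 2)
    have hB := ((hasDerivAt_pow 2 y).add_const ((m:ℝ)^2)).mul (hK0.pow 2)
    have hode := K_ode m hy'
    refine (hA.sub hB).congr_deriv ?_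
    push_cast [Pi.pow_apply]
    linear_combination (-2 * Kc m 1 y) * hode
  have hpos : ∀ y ∈ Set.Ioi (0:ℝ), 0 < Kc m 0 y := fun y hy => Kc_pos m 0 hy
  have hlim : Tendsto N atTop (𝓝 0) := by
    obtain ⟨C0, hC0pos, hb0all⟩ : ∃ C : ℝ, 0 < C ∧ ∀ y : ℝ, 1 ≤ y → Kc m 0 y ≤ C * Real.exp (-y) :=
      ⟨_, Real.exp_pos _, fun y hy => Kc_le m 0 hy⟩
    obtain ⟨C1, hC1pos, hb1all⟩ : ∃ C : ℝ, 0 < C ∧ ∀ y : ℝ, 1 ≤ y → Kc m 1 y ≤ C * Real.exp (-y) :=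
      ⟨_, Real.exp_pos _, fun y hy => Kc_le m 1 hy⟩
    apply squeeze_zero_norm' (a := fun y =>
      (C1^2 + C0^2) * (y^2 * (Real.exp (-y) * Real.exp (-y)))
        + (m:ℝ)^2 * C0^2 * (Real.exp (-y) * Real.exp (-y)))
    · filter_upwards [eventually_ge_atTop (1:ℝ)] with y hy
      have hy0 : (0:ℝ) < y := lt_of_lt_of_le one_pos hy
      have hb0 := hb0all y hy
      have hb1 := hb1all y hy
      have hn0 := Kc_nonneg m 0 y
      have hn1 := Kc_nonneg m 1 y
      have hE := Real.exp_pos (-y)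
      have hsq0 : (Kc m 0 y)^2 ≤ C0^2 * (Real.exp (-y) * Real.exp (-y)) := by nlinarith
      have hsq1 : (Kc m 1 y)^2 ≤ C1^2 * (Real.exp (-y) * Real.exp (-y)) := by nlinarith
      have u1 : y^2 * (Kc m 1 y)^2 ≤ y^2 * (C1^2 * (Real.exp (-y) * Real.exp (-y))) :=
        mul_le_mul_of_nonneg_left hsq1 (sq_nonneg y)
      have u0 : (y^2 + (m:ℝ)^2) * (Kc m 0 y)^2
          ≤ (y^2 + (m:ℝ)^2) * (C0^2 * (Real.exp (-y) * Real.exp (-y))) :=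
        mul_le_mul_of_nonneg_left hsq0 (by positivity)
      have p1 : 0 ≤ C0^2 * (y^2 * (Real.exp (-y) * Real.exp (-y))) := by positivity
      have p2 : 0 ≤ C1^2 * (y^2 * (Real.exp (-y) * Real.exp (-y))) := by positivity
      have p3 : 0 ≤ (m:ℝ)^2 * C0^2 * (Real.exp (-y) * Real.exp (-y)) := by positivity
      have p4 : 0 ≤ (y^2 + (m:ℝ)^2) * (Kc m 0 y)^2 := by positivity
      have p5 : 0 ≤ y^2 * (Kc m 1 y)^2 := by positivity
      rw [Real.norm_eq_abs, abs_le]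
      constructor
      · simp only [hN]
        nlinarith [u0, p2, p5]
      · simp only [hN]
        nlinarith [u1, p1, p3, p4]
    · have hexp2 : Tendsto (fun y : ℝ => Real.exp (-y) * Real.exp (-y)) atTop (𝓝 0) := by
        simpa using Real.tendsto_exp_neg_atTop_nhds_zero.mul Real.tendsto_exp_neg_atTop_nhds_zero
      have hyexp : Tendsto (fun y : ℝ => y^2 * (Real.exp (-y) * Real.exp (-y))) atTop (𝓝 0) := by
        have h1 := tendsto_pow_mul_exp_neg_atTop_nhds_zero 1
        have h2 : Tendsto (fun y : ℝ => (y^1 * Real.exp (-y)) * (y^1 * Real.exp (-y)))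
            atTop (𝓝 0) := by simpa using h1.mul h1
        apply h2.congr
        intro y
        ring
      have := (hyexp.const_mul (C1^2 + C0^2)).add (hexp2.const_mul ((m:ℝ)^2 * C0^2))
      simpa using this
  exact N_pos hder hpos hlim x hx

lemma lt_of_sq_lt_sq' {a b : ℝ} (h : a^2 < b^2) (hb : 0 < b) : a < b := by
  by_contra h'
  push_neg at h'
  nlinarith

end BesselMono

open BesselMono in
/-- `x ↦ I_m(x) K_m(x)` is strictly decreasing on `(0, ∞)`. -/
theorem besselI_mul_besselK_strictAntiOn (m : ℤ) :
    StrictAntiOn (fun x => besselI m x * besselK m x) (Set.Ioi (0:ℝ)) := by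
  have hprod : ∀ x ∈ Set.Ioi (0:ℝ), HasDerivAt (fun y => besselI m y * besselK m y)
      ((1/π) * Jc m 1 x * besselK m x + besselI m x * -(Kc m 1 x)) x := by
    intro x hx
    exact (hasDerivAt_besselI m x).mul (hasDerivAt_besselK m hx)
  apply strictAntiOn_of_deriv_neg (convex_Ioi 0)
  · intro x hx
    exact (hprod x hx).continuousAt.continuousWithinAt
  · intro x hx
    rw [interior_Ioi] at hx
    have hx' : (0:ℝ) < x := hx
    rw [(hprod x hx).deriv]
    set s := Real.sqrt (x^2 + (m:ℝ)^2) with hs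
    have hs2 : s^2 = x^2 + (m:ℝ)^2 := Real.sq_sqrt (by positivity)
    have hspos : 0 < s := Real.sqrt_pos.2 (by positivity)
    have hI := besselI_pos m hx'
    have hK0pos : 0 < Kc m 0 x := Kc_pos m 0 hx'
    have hK1pos := Kc_pos m 1 hx'
    have hNI := NI_neg m hx'
    have hNK := NK_pos m hx'
    have h1 : x * ((1/π) * Jc m 1 x) < s * besselI m x := by
      apply lt_of_sq_lt_sq' _ (by positivity)
      calc (x * ((1/π) * Jc m 1 x))^2 = x^2 * ((1/π) * Jc m 1 x)^2 := by ring
        _ < (x^2 + (m:ℝ)^2) * (besselI m x)^2 := by linarith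
        _ = (s * besselI m x)^2 := by rw [mul_pow, hs2]
    have h2 : s * (Kc m 0 x) < x * Kc m 1 x := by
      apply lt_of_sq_lt_sq' _ (by positivity)
      calc (s * Kc m 0 x)^2 = (x^2 + (m:ℝ)^2) * (Kc m 0 x)^2 := by rw [mul_pow, hs2]
        _ < x^2 * (Kc m 1 x)^2 := by linarith
        _ = (x * Kc m 1 x)^2 := by ring
    have hKx : besselK m x = Kc m 0 x := besselK_eq_Kc m x
    rw [hKx]
    have e1 : (x * ((1/π) * Jc m 1 x)) * Kc m 0 x < (s * besselI m x) * Kc m 0 x :=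
      mul_lt_mul_of_pos_right h1 hK0pos
    have e2 : besselI m x * (s * Kc m 0 x) < besselI m x * (x * Kc m 1 x) :=
      mul_lt_mul_of_pos_left h2 hI
    nlinarith [e1, e2, hx']
end

section
/- Let α, β ∈ ℝ with α + β > 0, R > 0, m an integer with 2|m| < R(α + β), and let κ_m > 0 be the unique positive solution of (α + β) R I_m(κR) K_m(κR) = 1. Then, writing P(x) = I_m(x) K_m(x), the partial derivative of η_m with respect to κ at the point (κ_m, 0) equals (α + β) R² P'(R κ_m), and this quantity is strictly negative. -/
open MeasureTheory Real Filter Asymptotics Topology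

open Set

lemma exp_lin_cosh_le (x b t : ℝ) (hx : 0 < x) (ht : 0 < t) :
    Real.exp (b*t - x*Real.cosh t) ≤ Real.exp (2*(b+1)^2/x) * Real.exp (-t) := by
  have hc : (2*(b+1)^2/x) * x = 2*(b+1)^2 := div_mul_cancel₀ _ (ne_of_gt hx)
  have h1 : Real.cosh t ≥ Real.exp t / 2 := by
    rw [Real.cosh_eq]; nlinarith [Real.exp_pos (-t)]
  have h2 : Real.exp t ≥ t^2/4 := by
    have := Real.add_one_le_exp (t/2)
    have h3 : Real.exp t = (Real.exp (t/2))^2 := by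
      rw [← Real.exp_nat_mul]; norm_num; ring_nf
    nlinarith [Real.exp_pos (t/2)]
  rw [← Real.exp_add]
  apply Real.exp_le_exp.2
  have h4 : x * Real.cosh t ≥ x * t^2/8 := by nlinarith
  nlinarith [sq_nonneg (x*t - 4*(b+1)), mul_pos hx ht]

lemma integrableOn_exp_lin_cosh (x b : ℝ) (hx : 0 < x) :
    IntegrableOn (fun t => Real.exp (b*t - x*Real.cosh t)) (Ioi (0:ℝ)) := by
  apply Integrable.mono' ((exp_neg_integrableOn_Ioi 0 one_pos).const_mul
    (Real.exp (2*(b+1)^2/x)))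
  · exact (Continuous.aestronglyMeasurable (by continuity)).restrict
  · refine (ae_restrict_iff' measurableSet_Ioi).2 (ae_of_all _ fun t ht => ?_)
    rw [Real.norm_eq_abs, Real.abs_exp]
    simpa using exp_lin_cosh_le x b t hx ht

lemma tendsto_exp_lin_cosh (x b : ℝ) (hx : 0 < x) :
    Tendsto (fun t => Real.exp (b*t - x*Real.cosh t)) atTop (𝓝 0) := by
  apply squeeze_zero' (Eventually.of_forall fun t => (Real.exp_pos _).le)
    (eventually_atTop.2 ⟨1, fun t ht => exp_lin_cosh_le x b t hx (by linarith)⟩)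
  rw [show (0:ℝ) = Real.exp (2*(b+1)^2/x) * 0 by ring]
  exact tendsto_exp_neg_atTop_nhds_zero.const_mul _

lemma cosh_le_exp_abs (y : ℝ) : Real.cosh y ≤ Real.exp |y| := by
  rw [← Real.cosh_abs, Real.cosh_eq]
  have := Real.exp_le_exp.2 (by linarith [abs_nonneg y] : -|y| ≤ |y|)
  linarith

lemma abs_sinh_le_cosh (y : ℝ) : |Real.sinh y| ≤ Real.cosh y := by
  rw [abs_le]
  have h1 := Real.sinh_lt_cosh y
  have h2 := Real.sinh_lt_cosh (-y)
  rw [Real.sinh_neg, Real.cosh_neg] at h2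
  constructor <;> linarith

lemma integrableOn_of_le_exp_lin_cosh {g : ℝ → ℝ} (hg : Continuous g) (x b : ℝ) (hx : 0 < x)
    (hb : ∀ t, 0 < t → |g t| ≤ Real.exp (b*t - x*Real.cosh t)) :
    IntegrableOn g (Ioi (0:ℝ)) := by
  apply Integrable.mono' (integrableOn_exp_lin_cosh x b hx) hg.aestronglyMeasurable.restrict
  exact (ae_restrict_iff' measurableSet_Ioi).2 (ae_of_all _ fun t ht => hb t ht)

lemma bound1 (x ν : ℝ) (t : ℝ) (ht : 0 < t) :
    |Real.exp (-x*Real.cosh t) * Real.cosh (ν*t)| ≤ Real.exp (abs ν * t - x*Real.cosh t) := by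
  rw [abs_mul, Real.abs_exp, abs_of_nonneg (Real.cosh_pos _).le, Real.exp_sub,
    show -x*Real.cosh t = -(x*Real.cosh t) by ring, Real.exp_neg, div_eq_mul_inv,
    mul_comm (Real.exp (abs ν * t))]
  apply mul_le_mul_of_nonneg_left _ (by positivity)
  calc Real.cosh (ν*t) ≤ Real.exp |ν*t| := cosh_le_exp_abs _
    _ = Real.exp (abs ν * t) := by rw [abs_mul, abs_of_pos ht]

lemma bound2 (x ν : ℝ) (t : ℝ) (ht : 0 < t) :
    |Real.cosh t * Real.exp (-x*Real.cosh t) * Real.cosh (ν*t)|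
      ≤ Real.exp ((abs ν + 1)*t - x*Real.cosh t) := by
  have h1 := bound1 x ν t ht
  have h2 : Real.cosh t ≤ Real.exp t := by
    calc Real.cosh t ≤ Real.exp |t| := cosh_le_exp_abs t
      _ = Real.exp t := by rw [abs_of_pos ht]
  calc |Real.cosh t * Real.exp (-x*Real.cosh t) * Real.cosh (ν*t)|
      = Real.cosh t * |Real.exp (-x*Real.cosh t) * Real.cosh (ν*t)| := by
        rw [mul_assoc, abs_mul, abs_of_nonneg (Real.cosh_pos t).le]
    _ ≤ Real.exp t * Real.exp (abs ν * t - x*Real.cosh t) := by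
        apply mul_le_mul h2 h1 (abs_nonneg _) (Real.exp_pos _).le
    _ = Real.exp ((abs ν + 1)*t - x*Real.cosh t) := by rw [← Real.exp_add]; ring_nf

lemma bound3 (x ν : ℝ) (t : ℝ) (ht : 0 < t) :
    |Real.sinh t * Real.sinh (ν*t) * Real.exp (-x*Real.cosh t)|
      ≤ Real.exp ((abs ν + 1)*t - x*Real.cosh t) := by
  have h := bound2 x ν t ht
  calc |Real.sinh t * Real.sinh (ν*t) * Real.exp (-x*Real.cosh t)|
      = |Real.sinh t| * |Real.sinh (ν*t)| * Real.exp (-x*Real.cosh t) := by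
        rw [abs_mul, abs_mul, Real.abs_exp]
    _ ≤ Real.cosh t * Real.cosh (ν*t) * Real.exp (-x*Real.cosh t) := by
        apply mul_le_mul_of_nonneg_right _ (Real.exp_pos _).le
        exact mul_le_mul (abs_sinh_le_cosh t) (abs_sinh_le_cosh _) (abs_nonneg _)
          (Real.cosh_pos t).le
    _ ≤ Real.exp ((abs ν + 1)*t - x*Real.cosh t) := by
        calc Real.cosh t * Real.cosh (ν*t) * Real.exp (-x*Real.cosh t)
            = |Real.cosh t * Real.exp (-x*Real.cosh t) * Real.cosh (ν*t)| := by
              rw [abs_mul, abs_mul, Real.abs_exp, abs_of_nonneg (Real.cosh_pos t).le,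
                abs_of_nonneg (Real.cosh_pos _).le]; ring
          _ ≤ _ := h

lemma integrable1 (x ν : ℝ) (hx : 0 < x) :
    IntegrableOn (fun t => Real.exp (-x*Real.cosh t) * Real.cosh (ν*t)) (Ioi (0:ℝ)) :=
  integrableOn_of_le_exp_lin_cosh (by continuity) x (abs ν) hx (bound1 x ν)

lemma integrable2 (x ν : ℝ) (hx : 0 < x) :
    IntegrableOn (fun t => Real.cosh t * Real.exp (-x*Real.cosh t) * Real.cosh (ν*t))
      (Ioi (0:ℝ)) :=
  integrableOn_of_le_exp_lin_cosh (by continuity) x (abs ν + 1) hx (bound2 x ν)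

lemma integrable3 (x ν : ℝ) (hx : 0 < x) :
    IntegrableOn (fun t => Real.sinh t * Real.sinh (ν*t) * Real.exp (-x*Real.cosh t))
      (Ioi (0:ℝ)) :=
  integrableOn_of_le_exp_lin_cosh (by continuity) x (abs ν + 1) hx (bound3 x ν)

noncomputable def realK (ν x : ℝ) : ℝ :=
  ∫ t in Ioi (0:ℝ), Real.exp (-x * Real.cosh t) * Real.cosh (ν * t)

lemma realK_pos (ν x : ℝ) (hx : 0 < x) : 0 < realK ν x := by
  rw [realK, setIntegral_pos_iff_support_of_nonneg_ae
    ((ae_restrict_iff' measurableSet_Ioi).2 (ae_of_all _ fun t _ =>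
      (mul_pos (Real.exp_pos _) (Real.cosh_pos _)).le)) (integrable1 x ν hx)]
  have hsub : Ioi (0:ℝ) ⊆ Function.support
      (fun t => Real.exp (-x * Real.cosh t) * Real.cosh (ν * t)) := fun t _ =>
    ne_of_gt (mul_pos (Real.exp_pos _) (Real.cosh_pos _))
  rw [inter_eq_right.2 hsub]
  simp

lemma cosh_mul_cosh' (ν t : ℝ) :
    Real.cosh t * Real.cosh (ν*t) = (Real.cosh ((ν+1)*t) + Real.cosh ((ν-1)*t))/2 := by
  rw [show (ν+1)*t = ν*t + t by ring, show (ν-1)*t = ν*t - t by ring,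
    Real.cosh_add, Real.cosh_sub]
  ring

lemma sinh_mul_sinh' (ν t : ℝ) :
    Real.sinh t * Real.sinh (ν*t) = (Real.cosh ((ν+1)*t) - Real.cosh ((ν-1)*t))/2 := by
  rw [show (ν+1)*t = ν*t + t by ring, show (ν-1)*t = ν*t - t by ring,
    Real.cosh_add, Real.cosh_sub]
  ring

lemma integral_cosh_exp_split (ν x : ℝ) (hx : 0 < x) :
    ∫ t in Ioi (0:ℝ), Real.cosh t * Real.exp (-x*Real.cosh t) * Real.cosh (ν*t)
      = (realK (ν+1) x + realK (ν-1) x)/2 := by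
  have hfun : (fun t => Real.cosh t * Real.exp (-x*Real.cosh t) * Real.cosh (ν*t))
      = (fun t => (Real.exp (-x*Real.cosh t) * Real.cosh ((ν+1)*t))/2
          + (Real.exp (-x*Real.cosh t) * Real.cosh ((ν-1)*t))/2) := by
    funext t
    rw [show Real.cosh t * Real.exp (-x*Real.cosh t) * Real.cosh (ν*t)
      = Real.exp (-x*Real.cosh t) * (Real.cosh t * Real.cosh (ν*t)) from by ring,
      cosh_mul_cosh']
    ring
  rw [hfun, integral_add ((integrable1 x (ν+1) hx).div_const 2)
    ((integrable1 x (ν-1) hx).div_const 2), integral_div, integral_div]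
  simp only [realK]
  ring

lemma integral_sinh_exp_split (ν x : ℝ) (hx : 0 < x) :
    ∫ t in Ioi (0:ℝ), Real.sinh t * Real.sinh (ν*t) * Real.exp (-x*Real.cosh t)
      = (realK (ν+1) x - realK (ν-1) x)/2 := by
  have hfun : (fun t => Real.sinh t * Real.sinh (ν*t) * Real.exp (-x*Real.cosh t))
      = (fun t => (Real.exp (-x*Real.cosh t) * Real.cosh ((ν+1)*t))/2
          - (Real.exp (-x*Real.cosh t) * Real.cosh ((ν-1)*t))/2) := by
    funext t
    rw [show Real.sinh t * Real.sinh (ν*t) * Real.exp (-x*Real.cosh t)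
      = Real.exp (-x*Real.cosh t) * (Real.sinh t * Real.sinh (ν*t)) from by ring,
      sinh_mul_sinh']
    ring
  rw [hfun, integral_sub ((integrable1 x (ν+1) hx).div_const 2)
    ((integrable1 x (ν-1) hx).div_const 2), integral_div, integral_div]
  simp only [realK]
  ring

lemma realK_hasDerivAt (ν x : ℝ) (hx : 0 < x) :
    HasDerivAt (realK ν) (-(realK (ν-1) x + realK (ν+1) x)/2) x := by
  have main := hasDerivAt_integral_of_dominated_loc_of_deriv_le
    (μ := volume.restrict (Ioi (0:ℝ)))
    (F := fun y t => Real.exp (-y * Real.cosh t) * Real.cosh (ν * t))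
    (F' := fun y t => -(Real.cosh t * Real.exp (-y*Real.cosh t) * Real.cosh (ν*t)))
    (x₀ := x)
    (bound := fun t => Real.cosh t * Real.exp (-(x/2)*Real.cosh t) * Real.cosh (ν*t))
    (Metric.ball_mem_nhds x (half_pos hx))
    (Eventually.of_forall fun y => (Continuous.aestronglyMeasurable (by continuity)).restrict)
    (integrable1 x ν hx)
    ((Continuous.aestronglyMeasurable (by continuity)).restrict)
    (ae_of_all _ fun t => fun y hy => by
      have hy2 : x/2 ≤ y := by
        rw [Metric.mem_ball, Real.dist_eq, abs_lt] at hy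
        linarith
      rw [norm_neg, Real.norm_eq_abs, abs_of_nonneg (by positivity)]
      apply mul_le_mul_of_nonneg_right _ (Real.cosh_pos _).le
      apply mul_le_mul_of_nonneg_left _ (Real.cosh_pos _).le
      apply Real.exp_le_exp.2
      nlinarith [Real.cosh_pos t])
    (integrable2 (x/2) ν (half_pos hx))
    (ae_of_all _ fun t => fun y _ => by
      have h1 : HasDerivAt (fun y : ℝ => -y*Real.cosh t) (-Real.cosh t) y := by
        simpa using (hasDerivAt_id y).neg.mul_const (Real.cosh t)
      have h2 := (h1.exp).mul_const (Real.cosh (ν*t))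
      exact h2.congr_deriv (by ring))
  have h2 := main.2
  rw [integral_neg, integral_cosh_exp_split ν x hx] at h2
  exact h2.congr_deriv (by ring)

lemma realK_recurrence (ν x : ℝ) (hx : 0 < x) :
    x * (realK (ν+1) x - realK (ν-1) x) = 2*ν*realK ν x := by
  have key : ∫ t in Ioi (0:ℝ), (ν * (Real.exp (-x*Real.cosh t) * Real.cosh (ν*t))
      - x * (Real.sinh t * Real.sinh (ν*t) * Real.exp (-x*Real.cosh t))) = 0 := by
    have := integral_Ioi_of_hasDerivAt_of_tendsto
      (f := fun t => Real.sinh (ν*t) * Real.exp (-x*Real.cosh t))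
      (f' := fun t => ν * (Real.exp (-x*Real.cosh t) * Real.cosh (ν*t))
        - x * (Real.sinh t * Real.sinh (ν*t) * Real.exp (-x*Real.cosh t)))
      (a := 0) (m := 0)
      (Continuous.continuousWithinAt (by continuity))
      (fun t _ => by
        have h1 : HasDerivAt (fun u : ℝ => ν*u) ν t := by
          simpa using (hasDerivAt_id t).const_mul ν
        have h3 : HasDerivAt (fun u : ℝ => -x*Real.cosh u) (-x*Real.sinh t) t :=
          (Real.hasDerivAt_cosh t).const_mul (-x)
        have h5 := (h1.sinh).mul h3.exp
        exact h5.congr_deriv (by ring))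
      (((integrable1 x ν hx).const_mul ν).sub ((integrable3 x ν hx).const_mul x))
      (by
        apply squeeze_zero_norm' (a := fun t => Real.exp (abs ν * t - x*Real.cosh t))
        · filter_upwards [eventually_gt_atTop (0:ℝ)] with t ht
          have hb := bound1 x ν t ht
          rw [Real.norm_eq_abs]
          calc |Real.sinh (ν*t) * Real.exp (-x*Real.cosh t)|
              ≤ |Real.exp (-x*Real.cosh t) * Real.cosh (ν*t)| := by
                rw [abs_mul, abs_mul, Real.abs_exp, abs_of_nonneg (Real.cosh_pos _).le]
                nlinarith [abs_sinh_le_cosh (ν*t), Real.exp_pos (-x*Real.cosh t),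
                  abs_nonneg (Real.sinh (ν*t))]
            _ ≤ _ := hb
        · exact tendsto_exp_lin_cosh x (abs ν) hx)
    simpa using this
  rw [integral_sub ((integrable1 x ν hx).const_mul ν) ((integrable3 x ν hx).const_mul x),
    integral_const_mul, integral_const_mul, integral_sinh_exp_split ν x hx] at key
  have : realK ν x = ∫ t in Ioi (0:ℝ), Real.exp (-x*Real.cosh t) * Real.cosh (ν*t) := rfl
  rw [← this] at key
  linarith

lemma realK_le_of_one_le (ν x : ℝ) (hx : 1 ≤ x) :
    realK ν x ≤ Real.exp (1-x) * realK ν 1 := by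
  have : Real.exp (1-x) * realK ν 1
      = ∫ t in Ioi (0:ℝ), Real.exp (1-x) * (Real.exp (-(1:ℝ)*Real.cosh t) * Real.cosh (ν*t)) := by
    rw [realK, ← integral_const_mul]
  rw [this, realK]
  apply setIntegral_mono_on (integrable1 x ν (by linarith))
    ((integrable1 1 ν one_pos).const_mul _) measurableSet_Ioi
  intro t _
  rw [← mul_assoc, ← Real.exp_add]
  apply mul_le_mul_of_nonneg_right _ (Real.cosh_pos _).le
  apply Real.exp_le_exp.2
  nlinarith [Real.one_le_cosh t]

lemma realK_nonneg (ν x : ℝ) : 0 ≤ realK ν x :=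
  setIntegral_nonneg measurableSet_Ioi fun t _ =>
    (mul_pos (Real.exp_pos _) (Real.cosh_pos _)).le

lemma realK_tendsto_zero (ν : ℝ) : Tendsto (fun x => realK ν x) atTop (𝓝 0) := by
  apply squeeze_zero' (Eventually.of_forall fun x => realK_nonneg ν x)
    (eventually_atTop.2 ⟨1, fun x hx => realK_le_of_one_le ν x hx⟩)
  rw [show (0:ℝ) = 0 * realK ν 1 by ring]
  apply Tendsto.mul_const
  apply tendsto_exp_atBot.comp
  apply Filter.tendsto_atBot_add_const_left
  exact tendsto_neg_atTop_atBot

noncomputable def realI (ν x : ℝ) : ℝ :=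
  (1 / Real.pi) * ∫ θ in (0:ℝ)..Real.pi, Real.exp (x * Real.cos θ) * Real.cos (ν * θ)


lemma realI_intervalIntegral (ν x : ℝ) :
    ∫ θ in (0:ℝ)..Real.pi, Real.exp (x * Real.cos θ) * Real.cos (ν * θ) = π * realI ν x := by
  rw [realI]; field_simp

lemma realI_neg (ν x : ℝ) : realI (-ν) x = realI ν x := by
  rw [realI, realI]
  congr 1
  apply intervalIntegral.integral_congr
  intro θ _
  simp [neg_mul]

/-- derivative of the inner integral -/
lemma realI_hasDerivAt_aux (ν x : ℝ) :
    HasDerivAt (fun y => ∫ θ in (0:ℝ)..Real.pi, Real.exp (y * Real.cos θ) * Real.cos (ν * θ))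
      (∫ θ in (0:ℝ)..Real.pi, Real.exp (x * Real.cos θ) * Real.cos θ * Real.cos (ν * θ)) x := by
  have main := intervalIntegral.hasDerivAt_integral_of_dominated_loc_of_deriv_le
    (μ := volume) (a := (0:ℝ)) (b := Real.pi) (x₀ := x)
    (F := fun y θ => Real.exp (y * Real.cos θ) * Real.cos (ν * θ))
    (F' := fun y θ => Real.exp (y * Real.cos θ) * Real.cos θ * Real.cos (ν * θ))
    (bound := fun _ => Real.exp (|x|+1))
    (Metric.ball_mem_nhds x one_pos)
    (Eventually.of_forall fun y => (Continuous.aestronglyMeasurable (by fun_prop)).restrict)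
    ((Continuous.intervalIntegrable (by fun_prop)) _ _)
    ((Continuous.aestronglyMeasurable (by fun_prop)).restrict)
    (ae_of_all _ fun θ _ y hy => by
      have h1 : |y| ≤ |x| + 1 := by
        rw [Metric.mem_ball, Real.dist_eq] at hy
        have := abs_sub_abs_le_abs_sub y x
        linarith
      rw [Real.norm_eq_abs, abs_mul, abs_mul, Real.abs_exp]
      calc Real.exp (y*Real.cos θ) * |Real.cos θ| * |Real.cos (ν*θ)|
          ≤ Real.exp (|x|+1) * 1 * 1 := by
            apply mul_le_mul (mul_le_mul _ (abs_cos_le_one _) (abs_nonneg _) (Real.exp_pos _).le)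
              (abs_cos_le_one _) (abs_nonneg _) (by positivity)
            apply Real.exp_le_exp.2
            calc y * Real.cos θ ≤ |y * Real.cos θ| := le_abs_self _
              _ = |y| * |Real.cos θ| := abs_mul _ _
              _ ≤ (|x|+1) * 1 :=
                  mul_le_mul h1 (abs_cos_le_one _) (abs_nonneg _) (by positivity)
              _ = |x|+1 := by ring
        _ = Real.exp (|x|+1) := by ring)
    ((Continuous.intervalIntegrable (by fun_prop)) _ _)
    (ae_of_all _ fun θ _ y _ => by
      have h1 : HasDerivAt (fun y : ℝ => y * Real.cos θ) (Real.cos θ) y := by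
        simpa using (hasDerivAt_id y).mul_const (Real.cos θ)
      exact (h1.exp).mul_const (Real.cos (ν*θ)))
  exact main.2

lemma cos_mul_cos' (ν θ : ℝ) :
    Real.cos θ * Real.cos (ν*θ) = (Real.cos ((ν+1)*θ) + Real.cos ((ν-1)*θ))/2 := by
  rw [show (ν+1)*θ = ν*θ + θ by ring, show (ν-1)*θ = ν*θ - θ by ring,
    Real.cos_add, Real.cos_sub]
  ring

lemma sin_mul_sin' (ν θ : ℝ) :
    Real.sin θ * Real.sin (ν*θ) = (Real.cos ((ν-1)*θ) - Real.cos ((ν+1)*θ))/2 := by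
  rw [show (ν+1)*θ = ν*θ + θ by ring, show (ν-1)*θ = ν*θ - θ by ring,
    Real.cos_add, Real.cos_sub]
  ring

lemma realI_hasDerivAt (ν x : ℝ) :
    HasDerivAt (realI ν) ((realI (ν-1) x + realI (ν+1) x)/2) x := by
  have main := (realI_hasDerivAt_aux ν x).const_mul (1/Real.pi)
  have hsplit : ∫ θ in (0:ℝ)..Real.pi, Real.exp (x * Real.cos θ) * Real.cos θ * Real.cos (ν * θ)
      = (π * realI (ν+1) x + π * realI (ν-1) x)/2 := by
    rw [← realI_intervalIntegral, ← realI_intervalIntegral]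
    rw [show (fun θ => Real.exp (x * Real.cos θ) * Real.cos θ * Real.cos (ν * θ))
        = (fun θ => (Real.exp (x*Real.cos θ) * Real.cos ((ν+1)*θ))/2
            + (Real.exp (x*Real.cos θ) * Real.cos ((ν-1)*θ))/2) from funext fun θ => by
      rw [show Real.exp (x * Real.cos θ) * Real.cos θ * Real.cos (ν * θ)
        = Real.exp (x*Real.cos θ) * (Real.cos θ * Real.cos (ν*θ)) from by ring, cos_mul_cos']
      ring]
    rw [intervalIntegral.integral_add (((Continuous.intervalIntegrable (by fun_prop)) _ _))
      (((Continuous.intervalIntegrable (by fun_prop)) _ _)),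
      intervalIntegral.integral_div, intervalIntegral.integral_div]
    ring
  rw [hsplit] at main
  have hπ : (π:ℝ) ≠ 0 := Real.pi_ne_zero
  have : (1/Real.pi) * ((π * realI (ν+1) x + π * realI (ν-1) x)/2)
      = (realI (ν-1) x + realI (ν+1) x)/2 := by field_simp; ring
  rw [this] at main
  exact main.congr_deriv rfl

lemma realI_recurrence (ν x : ℝ) (hs : Real.sin (ν*π) = 0) :
    x * (realI (ν-1) x - realI (ν+1) x) = 2*ν*realI ν x := by
  have key : ∫ θ in (0:ℝ)..Real.pi,
      (ν * (Real.exp (x*Real.cos θ) * Real.cos (ν*θ))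
        - x * (Real.sin θ * Real.sin (ν*θ) * Real.exp (x*Real.cos θ))) = 0 := by
    have := intervalIntegral.integral_eq_sub_of_hasDerivAt
      (f := fun θ => Real.sin (ν*θ) * Real.exp (x*Real.cos θ))
      (f' := fun θ => ν * (Real.exp (x*Real.cos θ) * Real.cos (ν*θ))
        - x * (Real.sin θ * Real.sin (ν*θ) * Real.exp (x*Real.cos θ)))
      (a := (0:ℝ)) (b := Real.pi)
      (fun θ _ => by
        have h1 : HasDerivAt (fun u : ℝ => ν*u) ν θ := by
          simpa using (hasDerivAt_id θ).const_mul ν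
        have h3 : HasDerivAt (fun u : ℝ => x*Real.cos u) (-(Real.sin θ) * x) θ := by
          simpa [mul_comm] using (Real.hasDerivAt_cos θ).const_mul x
        have h5 := (h1.sin).mul h3.exp
        exact h5.congr_deriv (by ring))
      ((Continuous.intervalIntegrable (by fun_prop)) _ _)
    rw [this]
    simp [mul_comm π ν, hs]
  rw [intervalIntegral.integral_sub (((Continuous.intervalIntegrable (by fun_prop)) _ _))
      (((Continuous.intervalIntegrable (by fun_prop)) _ _)),
    intervalIntegral.integral_const_mul, intervalIntegral.integral_const_mul,
    realI_intervalIntegral] at key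
  have hsin : ∫ θ in (0:ℝ)..Real.pi, Real.sin θ * Real.sin (ν*θ) * Real.exp (x*Real.cos θ)
      = (π * realI (ν-1) x - π * realI (ν+1) x)/2 := by
    rw [← realI_intervalIntegral, ← realI_intervalIntegral]
    rw [show (fun θ => Real.sin θ * Real.sin (ν*θ) * Real.exp (x*Real.cos θ))
        = (fun θ => (Real.exp (x*Real.cos θ) * Real.cos ((ν-1)*θ))/2
            - (Real.exp (x*Real.cos θ) * Real.cos ((ν+1)*θ))/2) from funext fun θ => by
      rw [show Real.sin θ * Real.sin (ν*θ) * Real.exp (x*Real.cos θ)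
        = Real.exp (x*Real.cos θ) * (Real.sin θ * Real.sin (ν*θ)) from by ring, sin_mul_sin']
      ring]
    rw [intervalIntegral.integral_sub (((Continuous.intervalIntegrable (by fun_prop)) _ _))
      (((Continuous.intervalIntegrable (by fun_prop)) _ _)),
      intervalIntegral.integral_div, intervalIntegral.integral_div]
    ring
  rw [hsin] at key
  have hπ : (π:ℝ) ≠ 0 := Real.pi_ne_zero
  have h3 : π * (x * (realI (ν-1) x - realI (ν+1) x)) = π * (2*ν*realI ν x) := by
    linear_combination (-2 : ℝ) * key
  exact mul_left_cancel₀ hπ h3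

noncomputable def Jint (n : ℕ) (ν : ℝ) : ℝ :=
  ∫ θ in (0:ℝ)..Real.pi, (Real.cos θ)^n * Real.cos (ν*θ)

lemma Jint_zero_int (m : ℤ) : Jint 0 (m:ℝ) = if m = 0 then π else 0 := by
  rw [Jint]
  by_cases hm : m = 0
  · simp [hm]
  · have hν : ((m:ℝ)) ≠ 0 := Int.cast_ne_zero.2 hm
    have := intervalIntegral.integral_eq_sub_of_hasDerivAt
      (f := fun θ => Real.sin ((m:ℝ)*θ)/(m:ℝ))
      (f' := fun θ => (Real.cos θ)^0 * Real.cos ((m:ℝ)*θ))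
      (a := (0:ℝ)) (b := Real.pi)
      (fun θ _ => by
        have h1 : HasDerivAt (fun u : ℝ => (m:ℝ)*u) (m:ℝ) θ := by
          simpa using (hasDerivAt_id θ).const_mul (m:ℝ)
        have h2 := (h1.sin).div_const (m:ℝ)
        exact h2.congr_deriv (by field_simp))
      ((Continuous.intervalIntegrable (by fun_prop)) _ _)
    rw [this]
    simp [hm, Real.sin_int_mul_pi m, mul_comm π (m:ℝ)]

lemma Jint_rec (n : ℕ) (ν : ℝ) : Jint (n+1) ν = (Jint n (ν+1) + Jint n (ν-1))/2 := by
  rw [Jint, Jint, Jint]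
  rw [show (fun θ => (Real.cos θ)^(n+1) * Real.cos (ν*θ))
      = (fun θ => ((Real.cos θ)^n * Real.cos ((ν+1)*θ))/2
          + ((Real.cos θ)^n * Real.cos ((ν-1)*θ))/2) from funext fun θ => by
    rw [show (ν+1)*θ = ν*θ + θ by ring, show (ν-1)*θ = ν*θ - θ by ring,
      Real.cos_add, Real.cos_sub, pow_succ]
    ring]
  rw [intervalIntegral.integral_add ((Continuous.intervalIntegrable (by fun_prop)) _ _)
    ((Continuous.intervalIntegrable (by fun_prop)) _ _),
    intervalIntegral.integral_div, intervalIntegral.integral_div]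
  ring

lemma Jint_nonneg (n : ℕ) : ∀ m : ℤ, 0 ≤ Jint n (m:ℝ) := by
  induction n with
  | zero =>
    intro m
    rw [Jint_zero_int]
    split
    · exact Real.pi_pos.le
    · exact le_rfl
  | succ n ih =>
    intro m
    have h1 : ((m:ℝ)+1) = ((m+1 : ℤ):ℝ) := by push_cast; ring
    have h2 : ((m:ℝ)-1) = ((m-1 : ℤ):ℝ) := by push_cast; ring
    rw [Jint_rec, h1, h2]
    have := ih (m+1)
    have := ih (m-1)
    linarith

lemma Jint_diag_pos : ∀ n : ℕ, 0 < Jint n (n:ℝ) := by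
  intro n
  induction n with
  | zero =>
    have := Jint_zero_int 0
    simp at this
    simpa [this] using Real.pi_pos
  | succ n ih =>
    have hcast : (((n:ℕ)+1 : ℕ):ℝ) = (n:ℝ)+1 := by push_cast; ring
    rw [hcast, Jint_rec]
    have h1 : ((n:ℝ)+1+1) = (((n:ℤ)+2 : ℤ):ℝ) := by push_cast; ring
    have h2 : ((n:ℝ)+1-1) = (n:ℝ) := by ring
    rw [h1, h2]
    have := Jint_nonneg n ((n:ℤ)+2)
    linarith

lemma exp_tsum (y : ℝ) : Real.exp y = ∑' n : ℕ, y^n / n.factorial := by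
  rw [Real.exp_eq_exp_ℝ, NormedSpace.exp_eq_tsum_div]

lemma abs_Jint_le (n : ℕ) (ν : ℝ) : |Jint n ν| ≤ π := by
  have := intervalIntegral.norm_integral_le_of_norm_le_const
    (C := 1) (f := fun θ => (Real.cos θ)^n * Real.cos (ν*θ)) (a := (0:ℝ)) (b := Real.pi)
    (fun θ _ => by
      rw [Real.norm_eq_abs, abs_mul, abs_pow]
      have h1 : |Real.cos θ|^n ≤ 1 := pow_le_one₀ (abs_nonneg _) (abs_cos_le_one _)
      nlinarith [abs_cos_le_one (ν*θ), abs_nonneg (Real.cos (ν*θ)),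
        pow_nonneg (abs_nonneg (Real.cos θ)) n])
  rw [Real.norm_eq_abs] at this
  rw [Jint]
  simpa [sub_zero, abs_of_nonneg Real.pi_pos.le] using this

lemma realI_summable (ν x : ℝ) :
    Summable (fun n : ℕ => x^n / (n.factorial:ℝ) * Jint n ν) := by
  refine Summable.of_norm_bounded
    ((Real.summable_pow_div_factorial |x|).mul_right π) fun n => ?_
  rw [Real.norm_eq_abs, abs_mul, abs_div, abs_pow, Nat.abs_cast]
  have h1 : |Jint n ν| ≤ π := abs_Jint_le n ν
  have h2 : (0:ℝ) ≤ |x|^n / (n.factorial:ℝ) := by positivity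
  nlinarith [abs_nonneg (Jint n ν)]

lemma realI_tsum (ν x : ℝ) :
    π * realI ν x = ∑' n : ℕ, x^n / (n.factorial:ℝ) * Jint n ν := by
  have h1 : π * realI ν x
      = ∫ θ in Ioc (0:ℝ) π, Real.exp (x * Real.cos θ) * Real.cos (ν * θ) := by
    rw [realI]
    rw [intervalIntegral.integral_of_le Real.pi_pos.le]
    field_simp
  have hF_int : ∀ n : ℕ, Integrable
      (fun θ => x^n / (n.factorial:ℝ) * ((Real.cos θ)^n * Real.cos (ν*θ)))
      (volume.restrict (Ioc (0:ℝ) π)) := by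
    intro n
    exact (Continuous.integrableOn_Ioc (by fun_prop))
  have hnorm : ∀ n : ℕ, (∫ θ in Ioc (0:ℝ) π,
      ‖x^n / (n.factorial:ℝ) * ((Real.cos θ)^n * Real.cos (ν*θ))‖) ≤ |x|^n/(n.factorial:ℝ) * π := by
    intro n
    have hle : ∀ θ ∈ Ioc (0:ℝ) π,
        ‖x^n / (n.factorial:ℝ) * ((Real.cos θ)^n * Real.cos (ν*θ))‖ ≤ |x|^n/(n.factorial:ℝ) := by
      intro θ _
      rw [Real.norm_eq_abs, abs_mul, abs_div, abs_pow, abs_mul, abs_pow, Nat.abs_cast]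
      have hc : |Real.cos θ|^n * |Real.cos (ν*θ)| ≤ 1 := by
        have h1 : |Real.cos θ|^n ≤ 1 := pow_le_one₀ (abs_nonneg _) (abs_cos_le_one _)
        nlinarith [abs_cos_le_one (ν*θ), abs_nonneg (Real.cos (ν*θ)),
          pow_nonneg (abs_nonneg (Real.cos θ)) n]
      have h2 : (0:ℝ) ≤ |x|^n / (n.factorial:ℝ) := by positivity
      nlinarith [mul_nonneg (pow_nonneg (abs_nonneg (Real.cos θ)) n)
        (abs_nonneg (Real.cos (ν*θ)))]
    calc (∫ θ in Ioc (0:ℝ) π, ‖x^n / (n.factorial:ℝ) * ((Real.cos θ)^n * Real.cos (ν*θ))‖)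
        ≤ ∫ _ in Ioc (0:ℝ) π, |x|^n/(n.factorial:ℝ) := by
          apply setIntegral_mono_on (hF_int n).norm
            (integrableOn_const measure_Ioc_lt_top.ne) measurableSet_Ioc hle
      _ = |x|^n/(n.factorial:ℝ) * π := by
          rw [setIntegral_const]
          simp [Real.volume_Ioc, Real.pi_pos.le, smul_eq_mul]
          ring
  have hsum : Summable (fun n : ℕ => ∫ θ in Ioc (0:ℝ) π,
      ‖x^n / (n.factorial:ℝ) * ((Real.cos θ)^n * Real.cos (ν*θ))‖) := by
    apply Summable.of_nonneg_of_le (fun n => integral_nonneg (fun θ => norm_nonneg _)) hnorm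
      ((Real.summable_pow_div_factorial |x|).mul_right π)
  have swap := integral_tsum_of_summable_integral_norm hF_int hsum
  have hpt : ∀ θ : ℝ, (∑' n : ℕ, x^n / (n.factorial:ℝ) * ((Real.cos θ)^n * Real.cos (ν*θ)))
      = Real.exp (x * Real.cos θ) * Real.cos (ν * θ) := by
    intro θ
    rw [show (fun n : ℕ => x^n / (n.factorial:ℝ) * ((Real.cos θ)^n * Real.cos (ν*θ)))
        = (fun n : ℕ => ((x * Real.cos θ)^n / (n.factorial:ℝ)) * Real.cos (ν*θ)) from
      funext fun n => by rw [mul_pow]; ring]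
    rw [tsum_mul_right, ← exp_tsum]
  have hJ : ∀ n : ℕ, (∫ θ in Ioc (0:ℝ) π, x^n / (n.factorial:ℝ) * ((Real.cos θ)^n * Real.cos (ν*θ)))
      = x^n / (n.factorial:ℝ) * Jint n ν := by
    intro n
    rw [integral_const_mul, Jint, intervalIntegral.integral_of_le Real.pi_pos.le]
  rw [h1, ← funext hpt, ← swap]
  exact tsum_congr hJ

lemma realI_pos_nat (n : ℕ) (x : ℝ) (hx : 0 < x) : 0 < realI (n:ℝ) x := by
  have key : 0 < π * realI (n:ℝ) x := by
    rw [realI_tsum]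
    refine Summable.tsum_pos (realI_summable (n:ℝ) x) (fun k => ?_) n ?_
    · apply mul_nonneg (by positivity)
      have := Jint_nonneg k (n:ℤ)
      simpa using this
    · exact mul_pos (by positivity) (Jint_diag_pos n)
  nlinarith [Real.pi_pos]

section TuranBlock
open MeasureTheory Real Filter Asymptotics Topology Set

lemma realK_neg (ν x : ℝ) : realK (-ν) x = realK ν x := by
  rw [realK, realK]
  congr 1
  funext t
  rw [show -ν*t = -(ν*t) by ring, Real.cosh_neg]

lemma realI_pos_int (k : ℤ) (x : ℝ) (hx : 0 < x) : 0 < realI (k:ℝ) x := by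
  rcases le_or_gt 0 k with hk | hk
  · have h : ((k.toNat:ℕ):ℝ) = (k:ℝ) := by norm_cast; omega
    rw [← h]
    exact realI_pos_nat k.toNat x hx
  · have h : (((-k).toNat:ℕ):ℝ) = -(k:ℝ) := by
      have : (((-k).toNat:ℕ):ℤ) = -k := by omega
      rw [show (((-k).toNat:ℕ):ℝ) = ((((-k).toNat:ℕ):ℤ):ℝ) by norm_cast, this]
      push_cast; ring
    have h2 := realI_pos_nat (-k).toNat x hx
    rw [h, realI_neg] at h2
    exact h2

lemma realI_zero_of_ne (k : ℤ) (hk : k ≠ 0) : realI (k:ℝ) 0 = 0 := by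
  have h1 : π * realI (k:ℝ) 0 = Jint 0 (k:ℝ) := by
    rw [← realI_intervalIntegral, Jint]
    apply intervalIntegral.integral_congr
    intro θ _
    simp
  rw [Jint_zero_int, if_neg hk] at h1
  exact (mul_eq_zero.1 h1).resolve_left Real.pi_ne_zero

/-- Turán inequality for I at integer order. -/
lemma turanI (m : ℤ) (hm : 0 ≤ m) (x : ℝ) (hx : 0 < x) :
    realI ((m:ℝ)-1) x * realI ((m:ℝ)+1) x < (realI (m:ℝ) x)^2 := by
  set T : ℝ → ℝ := fun y => (realI (m:ℝ) y)^2 - realI ((m:ℝ)-1) y * realI ((m:ℝ)+1) y with hT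
  have hTd : ∀ y : ℝ, HasDerivAt T
      (2 * realI (m:ℝ) y * ((realI ((m:ℝ)-1) y + realI ((m:ℝ)+1) y)/2)
        - (((realI ((m:ℝ)-1-1) y + realI ((m:ℝ)-1+1) y)/2) * realI ((m:ℝ)+1) y
          + realI ((m:ℝ)-1) y * ((realI ((m:ℝ)+1-1) y + realI ((m:ℝ)+1+1) y)/2))) y := by
    intro y
    have hI := realI_hasDerivAt (m:ℝ) y
    have hIm := realI_hasDerivAt ((m:ℝ)-1) y
    have hIp := realI_hasDerivAt ((m:ℝ)+1) y
    have h1 := hI.pow 2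
    have h2 := hIm.mul hIp
    have h3 := h1.sub h2
    exact h3.congr_deriv (by ring)
  have hcontT : Continuous T := by
    have : Differentiable ℝ T := fun y => (hTd y).differentiableAt
    exact this.continuous
  have hderivpos : ∀ y ∈ interior (Ici (0:ℝ)), 0 < deriv T y := by
    intro y hy
    rw [interior_Ici] at hy
    have hy' : (0:ℝ) < y := hy
    rw [(hTd y).deriv]
    have rec1 : y * (realI ((m:ℝ)-1-1) y - realI ((m:ℝ)-1+1) y)
        = 2*((m:ℝ)-1)*realI ((m:ℝ)-1) y := by
      apply realI_recurrence
      rw [show ((m:ℝ)-1)*π = ((m-1 : ℤ):ℝ)*π by push_cast; ring]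
      exact Real.sin_int_mul_pi (m-1)
    have rec2 : y * (realI ((m:ℝ)+1-1) y - realI ((m:ℝ)+1+1) y)
        = 2*((m:ℝ)+1)*realI ((m:ℝ)+1) y := by
      apply realI_recurrence
      rw [show ((m:ℝ)+1)*π = ((m+1 : ℤ):ℝ)*π by push_cast; ring]
      exact Real.sin_int_mul_pi (m+1)
    have hb : 0 < realI ((m:ℝ)-1) y := by
      rw [show (m:ℝ)-1 = ((m-1 : ℤ):ℝ) by push_cast; ring]
      exact realI_pos_int (m-1) y hy'
    have hd : 0 < realI ((m:ℝ)+1) y := by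
      rw [show (m:ℝ)+1 = ((m+1 : ℤ):ℝ) by push_cast; ring]
      exact realI_pos_int (m+1) y hy'
    have key : (2 * realI (m:ℝ) y * ((realI ((m:ℝ)-1) y + realI ((m:ℝ)+1) y)/2)
        - (((realI ((m:ℝ)-1-1) y + realI ((m:ℝ)-1+1) y)/2) * realI ((m:ℝ)+1) y
          + realI ((m:ℝ)-1) y * ((realI ((m:ℝ)+1-1) y + realI ((m:ℝ)+1+1) y)/2)))
        = 2/y * (realI ((m:ℝ)-1) y * realI ((m:ℝ)+1) y) := by
      have hy0 : y ≠ 0 := ne_of_gt hy'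
      have e1 : realI ((m:ℝ)-1+1) y = realI (m:ℝ) y := by norm_num
      have e2 : realI ((m:ℝ)+1-1) y = realI (m:ℝ) y := by norm_num
      rw [show 2/y * (realI ((m:ℝ)-1) y * realI ((m:ℝ)+1) y)
        = (2 * (realI ((m:ℝ)-1) y * realI ((m:ℝ)+1) y))/y by ring, eq_div_iff hy0,
        e1, e2]
      rw [e1] at rec1
      rw [e2] at rec2
      linear_combination (- realI ((m:ℝ)+1) y / 2) * rec1 + (realI ((m:ℝ)-1) y / 2) * rec2
    rw [key]
    positivity
  have hmono : StrictMonoOn T (Ici 0) :=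
    strictMonoOn_of_deriv_pos (convex_Ici 0) hcontT.continuousOn hderivpos
  have hT0 : 0 ≤ T 0 := by
    have hz : realI ((m:ℝ)+1) 0 = 0 := by
      rw [show (m:ℝ)+1 = ((m+1 : ℤ):ℝ) by push_cast; ring]
      exact realI_zero_of_ne (m+1) (by omega)
    simp only [hT, hz, mul_zero, sub_zero]
    positivity
  have := hmono (self_mem_Ici) (mem_Ici.2 hx.le) hx
  have hTx : 0 < T x := lt_of_le_of_lt hT0 this
  simp only [hT] at hTx
  linarith

/-- Turán inequality for K at real order. -/
lemma turanK (ν : ℝ) (x : ℝ) (hx : 0 < x) :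
    (realK ν x)^2 < realK (ν-1) x * realK (ν+1) x := by
  set S : ℝ → ℝ := fun y => realK (ν-1) y * realK (ν+1) y - (realK ν y)^2 with hS
  have hSd : ∀ y : ℝ, 0 < y → HasDerivAt S
      ((-(realK (ν-1-1) y + realK (ν-1+1) y)/2) * realK (ν+1) y
        + realK (ν-1) y * (-(realK (ν+1-1) y + realK (ν+1+1) y)/2)
        - 2 * realK ν y * (-(realK (ν-1) y + realK (ν+1) y)/2)) y := by
    intro y hy
    have hK := realK_hasDerivAt ν y hy
    have hKm := realK_hasDerivAt (ν-1) y hy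
    have hKp := realK_hasDerivAt (ν+1) y hy
    have h := (hKm.mul hKp).sub (hK.pow 2)
    exact h.congr_deriv (by ring)
  have hSderiv : ∀ y : ℝ, 0 < y → deriv S y
      = -(2/y) * (realK (ν-1) y * realK (ν+1) y) := by
    intro y hy
    rw [(hSd y hy).deriv]
    have rec1 : y * (realK (ν-1+1) y - realK (ν-1-1) y) = 2*(ν-1)*realK (ν-1) y :=
      realK_recurrence (ν-1) y hy
    have rec2 : y * (realK (ν+1+1) y - realK (ν+1-1) y) = 2*(ν+1)*realK (ν+1) y :=
      realK_recurrence (ν+1) y hy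
    have hy0 : y ≠ 0 := ne_of_gt hy
    have e1 : realK (ν-1+1) y = realK ν y := by norm_num
    have e2 : realK (ν+1-1) y = realK ν y := by norm_num
    rw [show -(2/y) * (realK (ν-1) y * realK (ν+1) y)
      = (-2 * (realK (ν-1) y * realK (ν+1) y))/y by ring, eq_div_iff hy0, e1, e2]
    rw [e1] at rec1
    rw [e2] at rec2
    linear_combination (realK (ν+1) y / 2) * rec1 + (- realK (ν-1) y / 2) * rec2
  have hcontS : ContinuousOn S (Ici x) := by
    intro y hy
    exact ((hSd y (lt_of_lt_of_le hx hy)).differentiableAt.continuousAt).continuousWithinAt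
  have hanti : StrictAntiOn S (Ici x) := by
    apply strictAntiOn_of_deriv_neg (convex_Ici x) hcontS
    intro y hy
    rw [interior_Ici] at hy
    have hy' : 0 < y := lt_trans hx hy
    rw [hSderiv y hy']
    have h1 : 0 < realK (ν-1) y := realK_pos _ _ hy'
    have h2 : 0 < realK (ν+1) y := realK_pos _ _ hy'
    have : 0 < 2/y * (realK (ν-1) y * realK (ν+1) y) := by positivity
    linarith
  have htend : Tendsto S atTop (𝓝 0) := by
    have h1 := (realK_tendsto_zero (ν-1)).mul (realK_tendsto_zero (ν+1))
    have h2 := (realK_tendsto_zero ν).mul (realK_tendsto_zero ν)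
    have h3 := h1.sub h2
    simp only [mul_zero, sub_zero, sub_self] at h3
    have : S = fun y => realK (ν-1) y * realK (ν+1) y - realK ν y * realK ν y := by
      funext y; simp only [hS]; ring
    rw [this]
    simpa using h3
  have hS1 : 0 ≤ S (x+1) := by
    have hev : ∀ᶠ y in atTop, S y ≤ S (x+1) := by
      filter_upwards [eventually_ge_atTop (x+1)] with y hy
      rcases eq_or_lt_of_le hy with h | h
      · rw [← h]
      · exact (hanti (mem_Ici.2 (by linarith)) (mem_Ici.2 (by linarith)) h).le
    exact le_of_tendsto htend hev
  have hlt : S (x+1) < S x := hanti (self_mem_Ici) (mem_Ici.2 (by linarith)) (by linarith)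
  have : 0 < S x := lt_of_le_of_lt hS1 hlt
  simp only [hS] at this
  linarith

end TuranBlock

section FinalBlock
open MeasureTheory Real Filter Asymptotics Topology Set

lemma PD_neg_aux (m : ℤ) (hm : 0 ≤ m) (x : ℝ) (hx : 0 < x) :
    ((realI ((m:ℝ)-1) x + realI ((m:ℝ)+1) x)/2) * realK (m:ℝ) x
      + realI (m:ℝ) x * (-(realK ((m:ℝ)-1) x + realK ((m:ℝ)+1) x)/2) < 0 := by
  have hb : 0 < realI ((m:ℝ)-1) x := by
    rw [show (m:ℝ)-1 = ((m-1 : ℤ):ℝ) by push_cast; ring]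
    exact realI_pos_int (m-1) x hx
  have hc : 0 < realI (m:ℝ) x := realI_pos_int m x hx
  have hd : 0 < realI ((m:ℝ)+1) x := by
    rw [show (m:ℝ)+1 = ((m+1 : ℤ):ℝ) by push_cast; ring]
    exact realI_pos_int (m+1) x hx
  have hw : 0 < realK ((m:ℝ)-1) x := realK_pos _ _ hx
  have hk : 0 < realK (m:ℝ) x := realK_pos _ _ hx
  have hv : 0 < realK ((m:ℝ)+1) x := realK_pos _ _ hx
  have h1 : realI ((m:ℝ)-1) x * realI ((m:ℝ)+1) x < (realI (m:ℝ) x)^2 := turanI m hm x hx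
  have h2 : (realK (m:ℝ) x)^2 < realK ((m:ℝ)-1) x * realK ((m:ℝ)+1) x := turanK (m:ℝ) x hx
  have recI : x*(realI ((m:ℝ)-1) x - realI ((m:ℝ)+1) x) = 2*(m:ℝ)*realI (m:ℝ) x :=
    realI_recurrence (m:ℝ) x (Real.sin_int_mul_pi m)
  have recK : x*(realK ((m:ℝ)+1) x - realK ((m:ℝ)-1) x) = 2*(m:ℝ)*realK (m:ℝ) x :=
    realK_recurrence (m:ℝ) x hx
  have hμ : 0 ≤ (m:ℝ) := Int.cast_nonneg hm
  -- abbreviations via generalize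
  set b := realI ((m:ℝ)-1) x with hbd
  set c := realI (m:ℝ) x with hcd
  set d := realI ((m:ℝ)+1) x with hdd
  set w := realK ((m:ℝ)-1) x with hwd
  set k := realK (m:ℝ) x with hkd
  set v := realK ((m:ℝ)+1) x with hvd
  set μ := (m:ℝ) with hμd
  have hrecd : x*(b*d) = x*d^2 + 2*μ*(c*d) := by linear_combination d*recI
  have E1 : x*d^2 + 2*μ*(c*d) < x*c^2 := by
    have h1x : x*(b*d) < x*(c^2) := by
      exact mul_lt_mul_of_pos_left h1 hx
    linarith
  have hrecv : x*(w*v) = x*w^2 + 2*μ*(w*k) := by linear_combination w*recK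
  have E2 : x*k^2 < x*w^2 + 2*μ*(w*k) := by
    have h2x : x*(k^2) < x*(w*v) := mul_lt_mul_of_pos_left h2 hx
    linarith
  have hdk : d*k < c*w := by
    by_contra hcon
    push_neg at hcon
    have A1 := mul_lt_mul_of_pos_right E1 (mul_pos hk hk)
    have A2 := mul_lt_mul_of_pos_right E2 (mul_pos hc hc)
    have A3 : (c*w)*(c*w) ≤ (d*k)*(d*k) :=
      mul_self_le_mul_self (mul_nonneg hc.le hw.le) hcon
    have A3x := mul_le_mul_of_nonneg_left A3 hx.le
    have A4 : (2*μ*(c*k))*(c*w) ≤ (2*μ*(c*k))*(d*k) :=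
      mul_le_mul_of_nonneg_left hcon (by positivity)
    nlinarith [A1, A2, A3x, A4]
  have h5 : x*((b+d)*k) - x*(c*(w+v)) = 2*x*(d*k - c*w) := by
    linear_combination k*recI - c*recK
  have h6 : x*((b+d)*k) < x*(c*(w+v)) := by
    have := mul_lt_mul_of_pos_left hdk hx
    linarith
  have h7 : (b+d)*k < c*(w+v) := (mul_lt_mul_iff_right₀ hx).1 h6
  linarith

lemma PD_neg (m : ℤ) (x : ℝ) (hx : 0 < x) :
    ((realI ((m:ℝ)-1) x + realI ((m:ℝ)+1) x)/2) * realK (m:ℝ) x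
      + realI (m:ℝ) x * (-(realK ((m:ℝ)-1) x + realK ((m:ℝ)+1) x)/2) < 0 := by
  rcases le_or_gt 0 m with hm | hm
  · exact PD_neg_aux m hm x hx
  · have h := PD_neg_aux (-m) (by omega) x hx
    push_cast at h
    rw [show -(m:ℝ)-1 = -((m:ℝ)+1) by ring, show -(m:ℝ)+1 = -((m:ℝ)-1) by ring] at h
    rw [realI_neg, realI_neg, realI_neg, realK_neg, realK_neg, realK_neg] at h
    linarith

end FinalBlock

section MainBlock
open MeasureTheory Real Filter Asymptotics Topology Set

noncomputable def PDval (m : ℤ) (x : ℝ) : ℝ :=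
  ((realI ((m:ℝ)-1) x + realI ((m:ℝ)+1) x)/2) * realK (m:ℝ) x
    + realI (m:ℝ) x * (-(realK ((m:ℝ)-1) x + realK ((m:ℝ)+1) x)/2)

lemma PDval_neg (m : ℤ) (x : ℝ) (hx : 0 < x) : PDval m x < 0 := PD_neg m x hx

lemma hasDerivAt_IK (m : ℤ) (x : ℝ) (hx : 0 < x) :
    HasDerivAt (fun y => besselI m y * besselK m y) (PDval m x) x :=
  (realI_hasDerivAt (m:ℝ) x).mul (realK_hasDerivAt (m:ℝ) x hx)



lemma besselI_eq (m : ℤ) : besselI m = realI (m:ℝ) := rfl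
lemma besselK_eq (m : ℤ) : besselK m = realK (m:ℝ) := rfl

lemma hasDerivAt_IK' (m : ℤ) (x : ℝ) (hx : 0 < x) :
    HasDerivAt (fun y => besselI m y * besselK m y) (PDval m x) x := by
  rw [besselI_eq, besselK_eq, PDval]
  exact (realI_hasDerivAt (m:ℝ) x).mul (realK_hasDerivAt (m:ℝ) x hx)


/-- the partial derivative `∂η_m/∂κ` at `(κ_m, 0)` equals
`(α + β) R² P'(R κ_m)` and is strictly negative. -/
theorem eta_deriv_kappa (α β R : ℝ) (m : ℤ)
    (hγ : 0 < α + β) (hR : 0 < R) (hm : 2 * |(m : ℝ)| < R * (α + β))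
    (κm : ℝ) (hκm : 0 < κm)
    (heq : (α + β) * R * (besselI m (κm * R) * besselK m (κm * R)) = 1)
    (huniq : ∀ κ > (0:ℝ),
      (α + β) * R * (besselI m (κ * R) * besselK m (κ * R)) = 1 → κ = κm) :
    deriv (fun κ => eta m α β R κ 0) κm
      = (α + β) * R^2 * deriv (fun x => besselI m x * besselK m x) (R * κm) ∧
    deriv (fun κ => eta m α β R κ 0) κm < 0 := by
  have hx : 0 < R * κm := mul_pos hR hκm
  have hIK := hasDerivAt_IK' m (R*κm) hx
  have hPDneg := PDval_neg m (R*κm) hx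
  have hderivP : deriv (fun y => besselI m y * besselK m y) (R*κm) = PDval m (R*κm) :=
    hIK.deriv
  have hfun : (fun κ => eta m α β R κ 0)
      = fun κ => (α+β)*R*(besselI m (κ*R) * besselK m (κ*R)) - 1 := by
    funext κ
    simp only [eta, nu, xiA, xiB, add_zero]
    ring
  have hinner : HasDerivAt (fun κ : ℝ => κ*R) R κm := by
    simpa using (hasDerivAt_id κm).mul_const R
  have hIK2 : HasDerivAt (fun y => besselI m y * besselK m y) (PDval m (R*κm)) (κm*R) := by
    rw [mul_comm κm R]; exact hIK
  have hcomp : HasDerivAt (fun κ => besselI m (κ*R) * besselK m (κ*R))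
      (PDval m (R*κm) * R) κm := by exact hIK2.comp κm hinner
  have hfinal : HasDerivAt (fun κ => (α+β)*R*(besselI m (κ*R) * besselK m (κ*R)) - 1)
      ((α+β)*R*(PDval m (R*κm)*R)) κm := (hcomp.const_mul ((α+β)*R)).sub_const 1
  constructor
  · rw [hfun, hfinal.deriv, hderivP]
    ring
  · rw [hfun, hfinal.deriv]
    have hpos : 0 < (α+β)*R*R := mul_pos (mul_pos hγ hR) hR
    nlinarith [mul_neg_of_pos_of_neg hpos hPDneg]
end MainBlock
end

section
/- Let R > 0 and κ > 0, and write P(x) = I_0(x) K_0(x). Then ∫_0^R r I_0(κ r)² dr + (I_0(κR)/K_0(κR))² ∫_R^∞ r K_0(κ r)² dr = − (R / (2 κ K_0(κR)²)) P'(κR). In particular the squared L² norm over ℝ² of the radial function equal to I_0(κ r)/√(2π) for r < R and to (I_0(κR)/K_0(κR)) K_0(κ r)/√(2π) for r > R equals − (R / (2 κ K_0(κR)²)) P'(κR) multiplied by 2π·(1/(2π)) = 1 times that quantity. -/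
open MeasureTheory Real Filter Asymptotics Topology
open Set

lemma besselI_zero (x : ℝ) :
    besselI 0 x = (1 / π) * ∫ θ in (0:ℝ)..π, exp (x * cos θ) := by
  simp [besselI]

lemma besselI_one (x : ℝ) :
    besselI 1 x = (1 / π) * ∫ θ in (0:ℝ)..π, exp (x * cos θ) * cos θ := by
  simp [besselI]

lemma besselK_zero (x : ℝ) :
    besselK 0 x = ∫ t in Set.Ioi (0:ℝ), exp (-x * cosh t) := by
  simp [besselK]

lemma besselK_one (x : ℝ) :
    besselK 1 x = ∫ t in Set.Ioi (0:ℝ), exp (-x * cosh t) * cosh t := by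
  simp [besselK]

/-- `y^k e^{-c y} ≤ (k/c)^k` for `y ≥ 0`, `c > 0`. -/
lemma pow_mul_exp_neg_le {c y : ℝ} (hc : 0 < c) (hy : 0 ≤ y) (k : ℕ) :
    y ^ k * exp (-(c * y)) ≤ (k / c) ^ k := by
  rcases Nat.eq_zero_or_pos k with rfl | hk
  · simpa using exp_le_one_iff.2 (by nlinarith : -(c*y) ≤ 0)
  have h1 : y * exp (-(c * y / k)) ≤ k / c := by
    have hk' : (0:ℝ) < k := by exact_mod_cast hk
    have hu := Real.add_one_le_exp (c * y / k)
    rw [exp_neg, inv_eq_one_div, mul_one_div, div_le_div_iff₀ (exp_pos _) hc]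
    have h2 := mul_le_mul_of_nonneg_left hu hk'.le
    have h3 : (k:ℝ) * (c * y / k + 1) = c * y + k := by field_simp
    nlinarith
  calc y ^ k * exp (-(c * y)) = (y * exp (-(c * y / k))) ^ k := by
        rw [mul_pow, ← Real.exp_nat_mul]
        congr 2
        field_simp
    _ ≤ (k / c) ^ k := pow_le_pow_left₀ (by positivity) h1 k

lemma self_le_cosh {t : ℝ} (ht : 0 ≤ t) : t ≤ cosh t := by
  have h1 : t ≤ sinh t := Real.self_le_sinh_iff.2 ht
  have h2 : sinh t ≤ cosh t := by
    have := Real.cosh_sub_sinh t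
    have := Real.exp_pos (-t)
    linarith
  linarith

/-- pointwise bound on the K-integrands -/
lemma cosh_pow_exp_le {x t : ℝ} (hx : 0 < x) (ht : 0 ≤ t) (k : ℕ) :
    cosh t ^ k * exp (-(x * cosh t)) ≤ (k / (x/2)) ^ k * exp (-(x/2 * t)) := by
  have h1 : cosh t ^ k * exp (-(x/2 * cosh t)) ≤ (k / (x/2)) ^ k :=
    pow_mul_exp_neg_le (half_pos hx) (le_trans ht (self_le_cosh ht)) k
  have h2 : exp (-(x/2 * cosh t)) ≤ exp (-(x/2 * t)) := by
    apply exp_le_exp.2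
    have := self_le_cosh ht
    nlinarith
  have h3 : exp (-(x * cosh t)) = exp (-(x/2 * cosh t)) * exp (-(x/2 * cosh t)) := by
    rw [← Real.exp_add]; ring_nf
  rw [h3]
  calc cosh t ^ k * (exp (-(x/2 * cosh t)) * exp (-(x/2 * cosh t)))
      = (cosh t ^ k * exp (-(x/2 * cosh t))) * exp (-(x/2 * cosh t)) := by ring
    _ ≤ (k / (x/2)) ^ k * exp (-(x/2 * t)) := by
        apply mul_le_mul h1 h2 (exp_pos _).le (by positivity)

lemma integrableOn_cosh_pow_exp {x : ℝ} (hx : 0 < x) (k : ℕ) :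
    IntegrableOn (fun t => cosh t ^ k * exp (-(x * cosh t))) (Ioi (0:ℝ)) := by
  have hcont : Continuous fun t : ℝ => cosh t ^ k * exp (-(x * cosh t)) := by
    continuity
  refine Integrable.mono' (g := fun t => (k / (x/2)) ^ k * exp (-(x/2) * t)) ?_ 
    hcont.aestronglyMeasurable ?_
  · exact (exp_neg_integrableOn_Ioi 0 (half_pos hx)).const_mul _
  · filter_upwards [ae_restrict_mem measurableSet_Ioi] with t ht
    have h0 : (0:ℝ) ≤ cosh t ^ k * exp (-(x * cosh t)) := by positivity
    rw [Real.norm_eq_abs, abs_of_nonneg h0]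
    have := cosh_pow_exp_le hx (le_of_lt ht) k
    calc cosh t ^ k * exp (-(x * cosh t)) ≤ (k / (x/2)) ^ k * exp (-(x/2 * t)) := this
      _ = (k / (x/2)) ^ k * exp (-(x/2) * t) := by ring_nf

lemma integrableOn_exp_cosh_mul {g : ℝ → ℝ} (hg : Continuous g) (k : ℕ)
    (hgb : ∀ t, 0 ≤ t → |g t| ≤ cosh t ^ k) {x : ℝ} (hx : 0 < x) :
    IntegrableOn (fun t => exp (-(x * cosh t)) * g t) (Ioi (0:ℝ)) := by
  refine Integrable.mono' (integrableOn_cosh_pow_exp hx k)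
    (by continuity : Continuous fun t : ℝ => exp (-(x * cosh t)) * g t).aestronglyMeasurable ?_
  filter_upwards [ae_restrict_mem measurableSet_Ioi] with t ht
  rw [Real.norm_eq_abs, abs_mul, abs_of_pos (exp_pos _)]
  calc exp (-(x * cosh t)) * |g t| ≤ exp (-(x * cosh t)) * cosh t ^ k :=
        mul_le_mul_of_nonneg_left (hgb t ht.le) (exp_pos _).le
    _ = cosh t ^ k * exp (-(x * cosh t)) := by ring

lemma hasDerivAt_K_integral {g : ℝ → ℝ} (hg : Continuous g)
    (hgb : ∀ t, 0 ≤ t → |g t| ≤ cosh t) {x : ℝ} (hx : 0 < x) :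
    HasDerivAt (fun y => ∫ t in Ioi (0:ℝ), exp (-(y * cosh t)) * g t)
      (∫ t in Ioi (0:ℝ), -(cosh t * (exp (-(x * cosh t)) * g t))) x := by
  have key := hasDerivAt_integral_of_dominated_loc_of_deriv_le (μ := volume.restrict (Ioi (0:ℝ)))
    (F := fun y t => exp (-(y * cosh t)) * g t)
    (F' := fun y t => -(cosh t * (exp (-(y * cosh t)) * g t)))
    (x₀ := x) (bound := fun t => cosh t ^ 2 * exp (-(x/2 * cosh t)))
    (Metric.ball_mem_nhds x (half_pos hx))
    (Eventually.of_forall fun y =>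
      (by continuity : Continuous fun t : ℝ => exp (-(y * cosh t)) * g t).aestronglyMeasurable)
    (integrableOn_exp_cosh_mul hg 1 (by simpa using hgb) hx)
    (by continuity : Continuous fun t : ℝ => -(cosh t * (exp (-(x * cosh t)) * g t))).aestronglyMeasurable
    ?_ ?_ ?_
  · exact key.2
  · filter_upwards [ae_restrict_mem measurableSet_Ioi] with t ht y hy
    have hycosh : exp (-(y * cosh t)) ≤ exp (-(x/2 * cosh t)) := by
      apply exp_le_exp.2
      rw [Metric.mem_ball, Real.dist_eq, abs_lt] at hy
      have h1 : x/2 < y := by linarith [hy.1]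
      have := Real.one_le_cosh t
      nlinarith
    rw [norm_neg, Real.norm_eq_abs, abs_mul, abs_mul, abs_of_pos (Real.cosh_pos t),
      abs_of_pos (exp_pos _)]
    calc cosh t * (exp (-(y * cosh t)) * |g t|) ≤ cosh t * (exp (-(x/2 * cosh t)) * cosh t) := by
          apply mul_le_mul_of_nonneg_left _ (Real.cosh_pos t).le
          exact mul_le_mul hycosh (hgb t ht.le) (abs_nonneg _) (exp_pos _).le
      _ = cosh t ^ 2 * exp (-(x/2 * cosh t)) := by ring
  · exact integrableOn_cosh_pow_exp (half_pos hx) 2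
  · filter_upwards [ae_restrict_mem measurableSet_Ioi] with t _ y _
    have h1 : HasDerivAt (fun y : ℝ => -(y * cosh t)) (-cosh t) y := by
      simpa using ((hasDerivAt_id y).mul_const (cosh t)).fun_neg
    simpa [mul_comm, mul_assoc, mul_left_comm] using (h1.exp.mul_const (g t))

lemma hasDerivAt_besselK_zero {x : ℝ} (hx : 0 < x) :
    HasDerivAt (besselK 0) (-(besselK 1 x)) x := by
  have h := hasDerivAt_K_integral (g := fun _ => 1) continuous_const
    (fun t _ => by simpa using Real.one_le_cosh t) hx
  have e1 : (fun y => ∫ t in Ioi (0:ℝ), exp (-(y * cosh t)) * 1) = besselK 0 := by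
    funext y; simp [besselK, neg_mul]
  have e2 : (∫ t in Ioi (0:ℝ), -(cosh t * (exp (-(x * cosh t)) * 1))) = -(besselK 1 x) := by
    rw [integral_neg, besselK_one]
    congr 1
    apply setIntegral_congr_fun measurableSet_Ioi
    intro t _
    simp [neg_mul]; ring
  rw [e1, e2] at h
  exact h

lemma hasDerivAt_besselK_one {x : ℝ} (hx : 0 < x) :
    HasDerivAt (besselK 1)
      (-(∫ t in Ioi (0:ℝ), cosh t ^ 2 * exp (-(x * cosh t)))) x := by
  have h := hasDerivAt_K_integral (g := fun t => cosh t) Real.continuous_cosh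
    (fun t _ => le_of_eq (abs_of_pos (Real.cosh_pos t))) hx
  have e1 : (fun y => ∫ t in Ioi (0:ℝ), exp (-(y * cosh t)) * cosh t) = besselK 1 := by
    funext y; simp [besselK, neg_mul]
  have e2 : (∫ t in Ioi (0:ℝ), -(cosh t * (exp (-(x * cosh t)) * cosh t)))
      = -(∫ t in Ioi (0:ℝ), cosh t ^ 2 * exp (-(x * cosh t))) := by
    rw [integral_neg]
    congr 1
    apply setIntegral_congr_fun measurableSet_Ioi
    intro t _
    ring
  rw [e1, e2] at h
  exact h

lemma tendsto_exp_half (x : ℝ) (hx : 0 < x) :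
    Tendsto (fun t : ℝ => (1 / (x/2)) * exp (-(x/2 * t))) atTop (𝓝 0) := by
  have h1 : Tendsto (fun t : ℝ => x/2 * t) atTop atTop :=
    Tendsto.const_mul_atTop (half_pos hx) tendsto_id
  have h2 : Tendsto (fun t : ℝ => exp (-(x/2 * t))) atTop (𝓝 0) :=
    Real.tendsto_exp_neg_atTop_nhds_zero.comp h1
  simpa using h2.const_mul (1 / (x/2))

lemma K_parts_zero {x : ℝ} (hx : 0 < x) :
    ∫ t in Ioi (0:ℝ), (cosh t - x * sinh t ^ 2) * exp (-(x * cosh t)) = 0 := by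
  have hfeq : (fun t => (cosh t - x * sinh t ^ 2) * exp (-(x * cosh t)))
      = fun t => cosh t ^ 1 * exp (-(x * cosh t)) - x * (cosh t ^ 2 * exp (-(x * cosh t)))
        + x * (cosh t ^ 0 * exp (-(x * cosh t))) := by
    funext t; rw [Real.sinh_sq]; ring
  have key := integral_Ioi_of_hasDerivAt_of_tendsto (a := (0:ℝ))
    (f := fun t => sinh t * exp (-(x * cosh t)))
    (f' := fun t => (cosh t - x * sinh t ^ 2) * exp (-(x * cosh t)))
    (m := 0)
    ((by continuity : Continuous fun t : ℝ =>
        sinh t * exp (-(x * cosh t))).continuousWithinAt)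
    ?_ ?_ ?_
  · simpa using key
  · intro t _
    have h1 : HasDerivAt (fun t : ℝ => -(x * cosh t)) (-(x * sinh t)) t := by
      simpa using ((Real.hasDerivAt_cosh t).const_mul x).fun_neg
    have := (Real.hasDerivAt_sinh t).fun_mul h1.exp
    refine this.congr_deriv ?_
    ring
  · rw [hfeq]
    exact ((integrableOn_cosh_pow_exp hx 1).sub
      ((integrableOn_cosh_pow_exp hx 2).const_mul x)).add
      ((integrableOn_cosh_pow_exp hx 0).const_mul x)
  · refine squeeze_zero_norm' ?_ (tendsto_exp_half x hx)
    filter_upwards [eventually_ge_atTop (0:ℝ)] with t ht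
    have h1 : |sinh t| ≤ cosh t := by
      rw [Real.abs_sinh, ← Real.cosh_abs]
      have := Real.cosh_sub_sinh |t|
      have := Real.exp_pos (-|t|)
      linarith
    have h2 := cosh_pow_exp_le hx ht 1
    rw [Real.norm_eq_abs, abs_mul, abs_of_pos (exp_pos _)]
    calc |sinh t| * exp (-(x * cosh t)) ≤ cosh t * exp (-(x * cosh t)) :=
          mul_le_mul_of_nonneg_right h1 (exp_pos _).le
      _ = cosh t ^ 1 * exp (-(x * cosh t)) := by ring
      _ ≤ ((1:ℕ) / (x/2)) ^ 1 * exp (-(x/2 * t)) := h2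
      _ = (1 / (x/2)) * exp (-(x/2 * t)) := by norm_num

lemma integral_x_sinh_exp {x : ℝ} (hx : 0 < x) :
    ∫ t in Ioi (0:ℝ), x * sinh t * exp (-(x * cosh t)) = exp (-x) := by
  have key := integral_Ioi_of_hasDerivAt_of_tendsto (a := (0:ℝ))
    (f := fun t => -exp (-(x * cosh t)))
    (f' := fun t => x * sinh t * exp (-(x * cosh t)))
    (m := 0)
    ((by continuity : Continuous fun t : ℝ => -exp (-(x * cosh t))).continuousWithinAt)
    ?_ ?_ ?_
  · simpa [neg_mul] using key
  · intro t _
    have h1 : HasDerivAt (fun t : ℝ => -(x * cosh t)) (-(x * sinh t)) t := by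
      simpa using ((Real.hasDerivAt_cosh t).const_mul x).fun_neg
    have := h1.exp.fun_neg
    convert this using 1
    ring
  · have : (fun t => x * sinh t * exp (-(x * cosh t)))
        = fun t => x * (exp (-(x * cosh t)) * sinh t) := by funext t; ring
    rw [this]
    have hb : ∀ t : ℝ, 0 ≤ t → |sinh t| ≤ cosh t ^ 1 := by
      intro t ht
      rw [Real.abs_sinh, pow_one]
      have := Real.cosh_sub_sinh |t|
      have := Real.exp_pos (-|t|)
      rw [← Real.cosh_abs]
      linarith
    exact (integrableOn_exp_cosh_mul Real.continuous_sinh 1 hb hx).const_mul x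
  · refine squeeze_zero_norm' (f := fun t => -exp (-(x * cosh t))) ?_
      (?_ : Tendsto (fun t : ℝ => exp (-(x * t))) atTop (𝓝 0))
    · filter_upwards [eventually_ge_atTop (0:ℝ)] with t ht
      rw [norm_neg, Real.norm_eq_abs, abs_of_pos (exp_pos _)]
      apply exp_le_exp.2
      have := self_le_cosh ht
      nlinarith
    · have h1 : Tendsto (fun t : ℝ => x * t) atTop atTop :=
        Tendsto.const_mul_atTop hx tendsto_id
      exact Real.tendsto_exp_neg_atTop_nhds_zero.comp h1

lemma besselK_one_eq_pow (x : ℝ) :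
    besselK 1 x = ∫ t in Ioi (0:ℝ), cosh t ^ 1 * exp (-(x * cosh t)) := by
  rw [besselK_one]
  apply setIntegral_congr_fun measurableSet_Ioi
  intro t _; simp [neg_mul]; ring

lemma besselK_zero_eq_pow (x : ℝ) :
    besselK 0 x = ∫ t in Ioi (0:ℝ), cosh t ^ 0 * exp (-(x * cosh t)) := by
  rw [besselK_zero]
  apply setIntegral_congr_fun measurableSet_Ioi
  intro t _; simp [neg_mul]

lemma integral_cosh_sq_exp {x : ℝ} (hx : 0 < x) :
    ∫ t in Ioi (0:ℝ), cosh t ^ 2 * exp (-(x * cosh t))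
      = besselK 0 x + besselK 1 x / x := by
  have h := K_parts_zero hx
  have hfeq : (fun t => (cosh t - x * sinh t ^ 2) * exp (-(x * cosh t)))
      = fun t => (cosh t ^ 1 * exp (-(x * cosh t)) - x * (cosh t ^ 2 * exp (-(x * cosh t))))
        + x * (cosh t ^ 0 * exp (-(x * cosh t))) := by
    funext t; rw [Real.sinh_sq]; ring
  rw [hfeq] at h
  have hA : IntegrableOn (fun t : ℝ => cosh t ^ 1 * exp (-(x * cosh t))
      - x * (cosh t ^ 2 * exp (-(x * cosh t)))) (Ioi 0) :=
    (integrableOn_cosh_pow_exp hx 1).sub ((integrableOn_cosh_pow_exp hx 2).const_mul x)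
  have hB : IntegrableOn (fun t : ℝ => x * (cosh t ^ 0 * exp (-(x * cosh t)))) (Ioi 0) :=
    (integrableOn_cosh_pow_exp hx 0).const_mul x
  rw [integral_add hA hB,
    integral_sub (integrableOn_cosh_pow_exp hx 1)
      ((integrableOn_cosh_pow_exp hx 2).const_mul x),
    integral_const_mul, integral_const_mul] at h
  rw [← besselK_one_eq_pow, ← besselK_zero_eq_pow] at h
  rw [add_div' _ _ _ hx.ne', eq_div_iff hx.ne']
  linarith

lemma hasDerivAt_besselK_one' {x : ℝ} (hx : 0 < x) :
    HasDerivAt (besselK 1) (-(besselK 0 x) - besselK 1 x / x) x := by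
  have h := hasDerivAt_besselK_one hx
  rw [integral_cosh_sq_exp hx] at h
  convert h using 1
  ring

lemma besselK_nonneg (m : ℤ) {x : ℝ} (hm : 0 ≤ (m:ℝ)) (hx : 0 < x) : 0 ≤ besselK m x := by
  apply setIntegral_nonneg measurableSet_Ioi
  intro t _
  positivity

lemma besselK_zero_pos {x : ℝ} (hx : 0 < x) : 0 < besselK 0 x := by
  rw [besselK_zero]
  have h1 : IntegrableOn (fun t => exp (-x * cosh t)) (Ioi (0:ℝ)) := by
    have := integrableOn_exp_cosh_mul continuous_const (g := fun _ => (1:ℝ)) 0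
      (by intro t _; simp) hx
    simpa [neg_mul] using this
  calc (0:ℝ) < exp (-x * cosh 1) * (volume (Ioo (0:ℝ) 1)).toReal := by
        simp [Real.volume_Ioo]
        positivity
    _ ≤ ∫ t in Ioo (0:ℝ) 1, exp (-x * cosh t) := by
        refine setIntegral_ge_of_const_le_real measurableSet_Ioo (by simp) (fun t ht => ?_)
          (h1.mono_set Ioo_subset_Ioi_self)
        apply exp_le_exp.2
        have h2 : cosh t ≤ cosh 1 := by
          rw [Real.cosh_le_cosh, abs_of_pos ht.1, abs_of_pos one_pos]
          exact ht.2.le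
        nlinarith
    _ ≤ ∫ t in Ioi (0:ℝ), exp (-x * cosh t) := by
        apply setIntegral_mono_set h1
        · filter_upwards with t using (exp_pos _).le
        · exact HasSubset.Subset.eventuallyLE Ioo_subset_Ioi_self

lemma besselK_one_bounds {x : ℝ} (hx : 0 < x) :
    exp (-x) ≤ x * besselK 1 x ∧ x * besselK 1 x ≤ exp (-x) + x := by
  have hint1 : IntegrableOn (fun t : ℝ => x * sinh t * exp (-(x * cosh t))) (Ioi 0) := by
    have hb : ∀ t : ℝ, 0 ≤ t → |sinh t| ≤ cosh t ^ 1 := by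
      intro t ht
      rw [Real.abs_sinh, pow_one, ← Real.cosh_abs]
      have := Real.cosh_sub_sinh |t|
      have := Real.exp_pos (-|t|)
      linarith
    have heq : (fun t : ℝ => x * sinh t * exp (-(x * cosh t)))
        = fun t : ℝ => x * (exp (-(x * cosh t)) * sinh t) := by funext t; ring
    rw [heq]
    exact (integrableOn_exp_cosh_mul Real.continuous_sinh 1 hb hx).const_mul x
  have hint2 : IntegrableOn (fun t : ℝ => x * ((cosh t - sinh t) * exp (-(x * cosh t))))
      (Ioi 0) := by
    have hb : ∀ t : ℝ, 0 ≤ t → |cosh t - sinh t| ≤ cosh t ^ 1 := by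
      intro t ht
      have h1 := Real.cosh_sub_sinh t
      have h2 : sinh t ≥ 0 := Real.sinh_nonneg_iff.2 ht
      rw [pow_one, abs_of_pos (by rw [h1]; exact exp_pos _)]
      linarith
    have heq : (fun t : ℝ => x * ((cosh t - sinh t) * exp (-(x * cosh t))))
        = fun t : ℝ => x * (exp (-(x * cosh t)) * (cosh t - sinh t)) := by funext t; ring
    rw [heq]
    exact (integrableOn_exp_cosh_mul (Real.continuous_cosh.sub Real.continuous_sinh)
      1 hb hx).const_mul x
  have hsplit : x * besselK 1 x = exp (-x)
      + x * ∫ t in Ioi (0:ℝ), (cosh t - sinh t) * exp (-(x * cosh t)) := by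
    rw [besselK_one, ← integral_const_mul]
    have he : ∀ t ∈ Ioi (0:ℝ), x * (exp (-x * cosh t) * cosh t)
        = x * sinh t * exp (-(x * cosh t)) + x * ((cosh t - sinh t) * exp (-(x * cosh t))) := by
      intro t _; rw [neg_mul]; ring
    rw [setIntegral_congr_fun measurableSet_Ioi he, integral_add hint1 hint2,
      integral_x_sinh_exp hx, integral_const_mul]
  have hnn : 0 ≤ ∫ t in Ioi (0:ℝ), (cosh t - sinh t) * exp (-(x * cosh t)) := by
    apply setIntegral_nonneg measurableSet_Ioi
    intro t _
    have h1 := Real.cosh_sub_sinh t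
    have h2 := Real.exp_pos (-t)
    nlinarith [Real.exp_pos (-(x * cosh t))]
  have hub : (∫ t in Ioi (0:ℝ), (cosh t - sinh t) * exp (-(x * cosh t))) ≤ 1 := by
    rw [← integral_exp_neg_Ioi_zero]
    apply setIntegral_mono_on _ _ measurableSet_Ioi
    · intro t _
      rw [← Real.cosh_sub_sinh t]
      nlinarith [Real.cosh_sub_sinh t, Real.exp_pos (-t),
        Real.exp_le_one_iff.2 (by nlinarith [Real.one_le_cosh t] : -(x * cosh t) ≤ 0)]
    · have heq : (fun t : ℝ => (cosh t - sinh t) * exp (-(x * cosh t)))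
          = fun t : ℝ => (1/x) * (x * ((cosh t - sinh t) * exp (-(x * cosh t)))) := by
        funext t; field_simp
      rw [heq]
      exact hint2.const_mul (1/x)
    · have heq : (fun t : ℝ => exp (-t)) = fun t : ℝ => exp (-1 * t) := by
        funext t; rw [neg_one_mul]
      rw [heq]
      exact exp_neg_integrableOn_Ioi 0 one_pos
  constructor
  · nlinarith
  · nlinarith

lemma tendsto_x_besselK_one : Tendsto (fun x => x * besselK 1 x) (𝓝[>] 0) (𝓝 1) := by
  have h1 : Tendsto (fun x : ℝ => exp (-x)) (𝓝[>] 0) (𝓝 1) := by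
    have : Tendsto (fun x : ℝ => exp (-x)) (𝓝 0) (𝓝 1) := by
      simpa [Function.comp_def] using (Real.continuous_exp.comp continuous_neg).tendsto 0
    exact this.mono_left nhdsWithin_le_nhds
  have h2 : Tendsto (fun x : ℝ => exp (-x) + x) (𝓝[>] 0) (𝓝 1) := by
    have : Tendsto (fun x : ℝ => exp (-x) + x) (𝓝 0) (𝓝 1) := by
      simpa [Function.comp_def, Pi.add_def] using ((Real.continuous_exp.comp continuous_neg).add continuous_id).tendsto 0
    exact this.mono_left nhdsWithin_le_nhds
  apply tendsto_of_tendsto_of_tendsto_of_le_of_le' h1 h2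
  · filter_upwards [self_mem_nhdsWithin] with x hx
    exact (besselK_one_bounds hx).1
  · filter_upwards [self_mem_nhdsWithin] with x hx
    exact (besselK_one_bounds hx).2

lemma cosh_ge_half_sq {t : ℝ} (ht : 0 ≤ t) : t ^ 2 / 2 ≤ cosh t := by
  have h1 : t / 2 ≤ sinh (t / 2) := Real.self_le_sinh_iff.2 (by linarith)
  have h2 : cosh t = 2 * sinh (t/2) ^ 2 + 1 := by
    have := Real.cosh_sq (t/2)
    have h3 := Real.cosh_two_mul (t/2)
    have h4 : (2:ℝ) * (t/2) = t := by ring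
    rw [h4] at h3
    nlinarith
  nlinarith

lemma tendsto_x_besselK_zero : Tendsto (fun x => x * besselK 0 x) (𝓝[>] 0) (𝓝 0) := by
  have hub : ∀ x : ℝ, 0 < x → x * besselK 0 x ≤ Real.sqrt (2 * π * x) := by
    intro x hx
    have hK : besselK 0 x ≤ Real.sqrt (π / (x/2)) := by
      rw [besselK_zero, ← integral_gaussian (x/2)]
      have hg : Integrable (fun t : ℝ => exp (-(x/2) * t ^ 2)) := integrable_exp_neg_mul_sq (half_pos hx)
      calc (∫ t in Ioi (0:ℝ), exp (-x * cosh t))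
          ≤ ∫ t in Ioi (0:ℝ), exp (-(x/2) * t ^ 2) := by
            apply setIntegral_mono_on _ hg.integrableOn measurableSet_Ioi
            · intro t ht
              apply exp_le_exp.2
              have := cosh_ge_half_sq ht.le
              nlinarith
            · have hb : ∀ t : ℝ, 0 ≤ t → |(1:ℝ)| ≤ cosh t ^ 0 := by intro t _; simp
              have := integrableOn_exp_cosh_mul continuous_const 0 hb hx
              apply this.congr_fun _ measurableSet_Ioi
              intro t _; simp [neg_mul]
        _ ≤ ∫ t : ℝ, exp (-(x/2) * t ^ 2) := by
            apply setIntegral_le_integral hg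
            filter_upwards with t using (exp_pos _).le
    calc x * besselK 0 x ≤ x * Real.sqrt (π / (x/2)) :=
          mul_le_mul_of_nonneg_left hK hx.le
      _ = Real.sqrt (2 * π * x) := by
          rw [← Real.sqrt_sq hx.le, ← Real.sqrt_mul (sq_nonneg x)]
          congr 1
          field_simp
          ring
          rw [Real.sq_sqrt (sq_nonneg x)]
  have hlb : ∀ x : ℝ, 0 < x → 0 ≤ x * besselK 0 x := by
    intro x hx
    exact mul_nonneg hx.le (besselK_nonneg 0 (by norm_num) hx)
  have hsq : Tendsto (fun x : ℝ => Real.sqrt (2 * π * x)) (𝓝[>] 0) (𝓝 0) := by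
    have : Tendsto (fun x : ℝ => Real.sqrt (2 * π * x)) (𝓝 0) (𝓝 0) := by
      have := (Real.continuous_sqrt.comp
        (by continuity : Continuous fun x : ℝ => 2 * π * x)).tendsto 0
      simpa [Function.comp_def] using this
    exact this.mono_left nhdsWithin_le_nhds
  apply tendsto_of_tendsto_of_tendsto_of_le_of_le' tendsto_const_nhds hsq
  · filter_upwards [self_mem_nhdsWithin] with x hx using hlb x hx
  · filter_upwards [self_mem_nhdsWithin] with x hx using hub x hx

lemma hasDerivAt_I_integral {g : ℝ → ℝ} (hg : Continuous g) (hgb : ∀ θ, |g θ| ≤ 1) (x : ℝ) :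
    HasDerivAt (fun y => ∫ θ in (0:ℝ)..π, exp (y * cos θ) * g θ)
      (∫ θ in (0:ℝ)..π, exp (x * cos θ) * cos θ * g θ) x := by
  have key := intervalIntegral.hasDerivAt_integral_of_dominated_loc_of_deriv_le
    (μ := volume) (a := (0:ℝ)) (b := π)
    (F := fun y θ => exp (y * cos θ) * g θ)
    (F' := fun y θ => exp (y * cos θ) * cos θ * g θ)
    (x₀ := x) (bound := fun _ => exp (|x| + 1))
    (Metric.ball_mem_nhds x one_pos)
    (Eventually.of_forall fun y =>
      (by continuity : Continuous fun θ : ℝ => exp (y * cos θ) * g θ).aestronglyMeasurable)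
    ((by continuity : Continuous fun θ : ℝ => exp (x * cos θ) * g θ).intervalIntegrable 0 π)
    (by continuity : Continuous fun θ : ℝ => exp (x * cos θ) * cos θ * g θ).aestronglyMeasurable
    ?_ (continuous_const.intervalIntegrable 0 π) ?_
  · exact key.2
  · filter_upwards with θ _ y hy
    rw [Metric.mem_ball, Real.dist_eq] at hy
    rw [Real.norm_eq_abs, abs_mul, abs_mul, abs_of_pos (exp_pos _)]
    have hcos : |cos θ| ≤ 1 := Real.abs_cos_le_one θ
    have h1 : exp (y * cos θ) ≤ exp (|x| + 1) := by
      apply exp_le_exp.2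
      have : |y * cos θ| ≤ |y| := by
        rw [abs_mul]
        nlinarith [abs_nonneg y]
      have h2 : |y| ≤ |x| + 1 := by
        have := abs_sub_abs_le_abs_sub y x
        linarith
      have := le_abs_self (y * cos θ)
      linarith
    calc exp (y * cos θ) * |cos θ| * |g θ| ≤ exp (|x| + 1) * 1 * 1 := by
          apply mul_le_mul (mul_le_mul h1 hcos (abs_nonneg _) (exp_pos _).le) (hgb θ)
            (abs_nonneg _) (by positivity)
      _ = exp (|x| + 1) := by ring
  · filter_upwards with θ _ y _
    have h1 : HasDerivAt (fun y : ℝ => y * cos θ) (cos θ) y := hasDerivAt_mul_const (cos θ)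
    exact h1.exp.mul_const (g θ)

lemma hasDerivAt_besselI_zero (x : ℝ) : HasDerivAt (besselI 0) (besselI 1 x) x := by
  have h := (hasDerivAt_I_integral continuous_const (g := fun _ => 1) (by simp) x).const_mul (1/π)
  have e1 : (fun y => (1/π) * ∫ θ in (0:ℝ)..π, exp (y * cos θ) * 1) = besselI 0 := by
    funext y; rw [besselI_zero]; congr 1; apply intervalIntegral.integral_congr
    intro θ _; simp
  have e2 : (1/π) * (∫ θ in (0:ℝ)..π, exp (x * cos θ) * cos θ * 1) = besselI 1 x := by
    rw [besselI_one]; congr 1; apply intervalIntegral.integral_congr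
    intro θ _; simp
  rw [e1, e2] at h
  exact h

lemma hasDerivAt_besselI_one (x : ℝ) :
    HasDerivAt (besselI 1) ((1/π) * ∫ θ in (0:ℝ)..π, exp (x * cos θ) * cos θ ^ 2) x := by
  have h := (hasDerivAt_I_integral Real.continuous_cos
    (fun θ => Real.abs_cos_le_one θ) x).const_mul (1/π)
  have e1 : (fun y => (1/π) * ∫ θ in (0:ℝ)..π, exp (y * cos θ) * cos θ) = besselI 1 := by
    funext y; rw [besselI_one]
  have e2 : (1/π) * (∫ θ in (0:ℝ)..π, exp (x * cos θ) * cos θ * cos θ)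
      = (1/π) * ∫ θ in (0:ℝ)..π, exp (x * cos θ) * cos θ ^ 2 := by
    congr 1; apply intervalIntegral.integral_congr
    intro θ _; ring
  rw [e1, e2] at h
  exact h

lemma I_parts_zero (x : ℝ) :
    ∫ θ in (0:ℝ)..π, exp (x * cos θ) * (cos θ - x * sin θ ^ 2) = 0 := by
  have key : ∀ θ ∈ uIcc (0:ℝ) π, HasDerivAt (fun θ => exp (x * cos θ) * sin θ)
      (exp (x * cos θ) * (cos θ - x * sin θ ^ 2)) θ := by
    intro θ _
    have h1 : HasDerivAt (fun θ : ℝ => x * cos θ) (-(x * sin θ)) θ := by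
      simpa using (Real.hasDerivAt_cos θ).const_mul x
    have := h1.exp.fun_mul (Real.hasDerivAt_sin θ)
    refine this.congr_deriv ?_
    ring
  have := intervalIntegral.integral_eq_sub_of_hasDerivAt key
    ((by continuity : Continuous fun θ : ℝ =>
      exp (x * cos θ) * (cos θ - x * sin θ ^ 2)).intervalIntegrable 0 π)
  rw [this]
  simp

lemma I_recurrence (x : ℝ) :
    (∫ θ in (0:ℝ)..π, exp (x * cos θ) * cos θ)
      = x * (∫ θ in (0:ℝ)..π, exp (x * cos θ))
        - x * ∫ θ in (0:ℝ)..π, exp (x * cos θ) * cos θ ^ 2 := by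
  have h := I_parts_zero x
  have hfeq : ∀ θ ∈ uIcc (0:ℝ) π, exp (x * cos θ) * (cos θ - x * sin θ ^ 2)
      = exp (x * cos θ) * cos θ
        - (x * exp (x * cos θ) - x * (exp (x * cos θ) * cos θ ^ 2)) := by
    intro θ _
    have h2 : sin θ ^ 2 = 1 - cos θ ^ 2 := by
      have := Real.sin_sq_add_cos_sq θ; linarith
    rw [h2]; ring
  rw [intervalIntegral.integral_congr hfeq] at h
  rw [intervalIntegral.integral_sub
      ((by continuity : Continuous fun θ : ℝ => exp (x * cos θ) * cos θ).intervalIntegrable 0 π)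
      (((by continuity : Continuous fun θ : ℝ => x * exp (x * cos θ)).intervalIntegrable 0 π).sub
        ((by continuity : Continuous fun θ : ℝ =>
          x * (exp (x * cos θ) * cos θ ^ 2)).intervalIntegrable 0 π)),
    intervalIntegral.integral_sub
      ((by continuity : Continuous fun θ : ℝ => x * exp (x * cos θ)).intervalIntegrable 0 π)
      ((by continuity : Continuous fun θ : ℝ =>
          x * (exp (x * cos θ) * cos θ ^ 2)).intervalIntegrable 0 π),
    intervalIntegral.integral_const_mul, intervalIntegral.integral_const_mul] at h
  linarith

lemma hasDerivAt_besselI_one' {x : ℝ} (hx : x ≠ 0) :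
    HasDerivAt (besselI 1) (besselI 0 x - besselI 1 x / x) x := by
  have h := hasDerivAt_besselI_one x
  have hrec := I_recurrence x
  have hpi : (π:ℝ) ≠ 0 := Real.pi_ne_zero
  have h2 : (∫ θ in (0:ℝ)..π, exp (x * cos θ) * cos θ) / x
      = (∫ θ in (0:ℝ)..π, exp (x * cos θ)) - ∫ θ in (0:ℝ)..π, exp (x * cos θ) * cos θ ^ 2 := by
    rw [hrec]; field_simp
  have e : (1/π) * (∫ θ in (0:ℝ)..π, exp (x * cos θ) * cos θ ^ 2)
      = besselI 0 x - besselI 1 x / x := by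
    rw [besselI_zero, besselI_one, mul_div_assoc, h2]
    ring
  rw [e] at h
  exact h

lemma besselI_zero_at_zero : besselI 0 0 = 1 := by
  rw [besselI_zero]
  simp [Real.pi_ne_zero]

lemma besselI_one_at_zero : besselI 1 0 = 0 := by
  rw [besselI_one]
  simp [integral_cos]

noncomputable def W (x : ℝ) : ℝ :=
  x * (besselI 0 x * besselK 1 x + besselI 1 x * besselK 0 x)

lemma wronskian_hasDerivAt {x : ℝ} (hx : 0 < x) : HasDerivAt W 0 x := by
  have d1 := hasDerivAt_besselI_zero x
  have d2 := hasDerivAt_besselI_one' hx.ne'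
  have d3 := hasDerivAt_besselK_zero hx
  have d4 := hasDerivAt_besselK_one' hx
  have h := (hasDerivAt_id x).fun_mul ((d1.fun_mul d4).fun_add (d2.fun_mul d3))
  have e : 1 * (besselI 0 x * besselK 1 x + besselI 1 x * besselK 0 x)
      + id x * (besselI 1 x * besselK 1 x
        + besselI 0 x * (-(besselK 0 x) - besselK 1 x / x)
        + ((besselI 0 x - besselI 1 x / x) * besselK 0 x
          + besselI 1 x * -(besselK 1 x))) = 0 := by
    simp only [id_eq]
    field_simp
    ring
  rw [e] at h
  exact h

lemma wronskian_const {a b : ℝ} (ha : 0 < a) (hab : a ≤ b) : W b = W a := by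
  have key : ∀ θ ∈ uIcc a b, HasDerivAt W 0 θ := by
    intro θ hθ
    rw [uIcc_of_le hab] at hθ
    exact wronskian_hasDerivAt (lt_of_lt_of_le ha hθ.1)
  have := intervalIntegral.integral_eq_sub_of_hasDerivAt key
    (intervalIntegrable_const)
  simp at this
  linarith

lemma wronskian_eq_one {x : ℝ} (hx : 0 < x) :
    x * (besselI 0 x * besselK 1 x + besselI 1 x * besselK 0 x) = 1 := by
  have hWx : ∀ y, 0 < y → W y = W x := by
    intro y hy
    rcases le_total y x with h | h
    · exact (wronskian_const hy h).symm
    · exact wronskian_const hx h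
  have hW1 : Tendsto W (𝓝[>] (0:ℝ)) (𝓝 1) := by
    have e : ∀ y : ℝ, W y = (y * besselK 1 y) * besselI 0 y
        + besselI 1 y * (y * besselK 0 y) := by
      intro y; unfold W; ring
    have hI0 : Tendsto (besselI 0) (𝓝[>] (0:ℝ)) (𝓝 1) := by
      have := (hasDerivAt_besselI_zero 0).continuousAt.tendsto
      rw [besselI_zero_at_zero] at this
      exact this.mono_left nhdsWithin_le_nhds
    have hI1 : Tendsto (besselI 1) (𝓝[>] (0:ℝ)) (𝓝 0) := by
      have := (hasDerivAt_besselI_one 0).continuousAt.tendsto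
      rw [besselI_one_at_zero] at this
      exact this.mono_left nhdsWithin_le_nhds
    have := (tendsto_x_besselK_one.mul hI0).add (hI1.mul tendsto_x_besselK_zero)
    simp only [one_mul, mul_zero, add_zero] at this
    apply Tendsto.congr (fun y => (e y).symm) this
  have hW2 : Tendsto W (𝓝[>] (0:ℝ)) (𝓝 (W x)) := by
    apply Tendsto.congr' _ (tendsto_const_nhds (α := ℝ))
    filter_upwards [self_mem_nhdsWithin] with y hy
    exact (hWx y hy).symm
  have := tendsto_nhds_unique hW2 hW1
  rw [← this]
  rfl

lemma besselK_cont {m : ℤ} : ∀ x : ℝ, 0 < x → ContinuousAt (besselK m) x → True := fun _ _ _ => trivial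

lemma integrableOn_besselK (m : ℤ) {x : ℝ} (hm : (m:ℝ) = 0 ∨ (m:ℝ) = 1) (hx : 0 < x) :
    IntegrableOn (fun t => exp (-x * cosh t) * cosh ((m:ℝ) * t)) (Ioi (0:ℝ)) := by
  have hb : ∀ t : ℝ, 0 ≤ t → |cosh ((m:ℝ) * t)| ≤ cosh t ^ 1 := by
    intro t ht
    rw [abs_of_pos (Real.cosh_pos _), pow_one]
    rcases hm with h | h <;> rw [h] <;> simp [Real.one_le_cosh]
  have := integrableOn_exp_cosh_mul (by continuity) 1 hb hx
  apply this.congr (EventuallyEq.symm _)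
  filter_upwards with t
  rw [neg_mul]

lemma besselK_zero_le_one {x : ℝ} (hx : 0 < x) : besselK 0 x ≤ besselK 1 x := by
  rw [besselK_zero, besselK_one]
  apply setIntegral_mono_on _ _ measurableSet_Ioi
  · intro t _
    nlinarith [Real.one_le_cosh t, Real.exp_pos (-x * cosh t)]
  · have := integrableOn_besselK 0 (Or.inl (by norm_num)) hx
    apply this.congr (EventuallyEq.symm _)
    filter_upwards with t
    simp
  · have := integrableOn_besselK 1 (Or.inr (by norm_num)) hx
    apply this.congr (EventuallyEq.symm _)
    filter_upwards with t
    simp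

lemma besselK_one_decay {c x : ℝ} (hc : 0 < c) (hcx : c ≤ x) :
    besselK 1 x ≤ exp (c - x) * besselK 1 c := by
  have h1 : besselK 1 x ≤ ∫ t in Ioi (0:ℝ), exp (c - x) * (exp (-c * cosh t) * cosh t) := by
    rw [besselK_one]
    apply setIntegral_mono_on _ _ measurableSet_Ioi
    · intro t _
      have hcosh := Real.one_le_cosh t
      have : exp (-x * cosh t) ≤ exp (c - x) * exp (-c * cosh t) := by
        rw [← Real.exp_add]
        apply exp_le_exp.2
        nlinarith
      nlinarith [Real.cosh_pos t, Real.exp_pos (-x * cosh t), Real.exp_pos (c - x),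
        Real.exp_pos (-c * cosh t)]
    · have h0 : 0 < x := lt_of_lt_of_le hc hcx
      have := integrableOn_besselK 1 (Or.inr (by norm_num)) h0
      apply this.congr (EventuallyEq.symm _)
      filter_upwards with t
      simp
    · have := (integrableOn_besselK 1 (Or.inr (by norm_num)) hc).const_mul (exp (c - x))
      apply this.congr (EventuallyEq.symm _)
      filter_upwards with t
      simp
  calc besselK 1 x ≤ ∫ t in Ioi (0:ℝ), exp (c - x) * (exp (-c * cosh t) * cosh t) := h1
    _ = exp (c - x) * besselK 1 c := by
        rw [integral_const_mul, besselK_one]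

lemma hasDerivAt_scale {f : ℝ → ℝ} {d : ℝ} (κ r : ℝ) (hf : HasDerivAt f d (κ * r)) :
    HasDerivAt (fun s => f (κ * s)) (d * κ) r := by
  have hg : HasDerivAt (fun s : ℝ => κ * s) κ r := by
    simpa using (hasDerivAt_id r).const_mul κ
  exact hf.comp r hg

lemma continuous_besselI_zero : Continuous (besselI 0) :=
  continuous_iff_continuousAt.2 fun x => (hasDerivAt_besselI_zero x).continuousAt

lemma continuous_besselI_one : Continuous (besselI 1) :=
  continuous_iff_continuousAt.2 fun x => (hasDerivAt_besselI_one x).continuousAt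

lemma integral_I_side {R κ : ℝ} (hκ : 0 < κ) :
    ∫ r in (0:ℝ)..R, r * (besselI 0 (κ * r))^2
      = R^2/2 * ((besselI 0 (κ * R))^2 - (besselI 1 (κ * R))^2) := by
  have key : ∀ r ∈ uIcc (0:ℝ) R,
      HasDerivAt (fun r => r^2/2 * ((besselI 0 (κ * r))^2 - (besselI 1 (κ * r))^2))
        (r * (besselI 0 (κ * r))^2) r := by
    intro r _
    rw [show (fun r : ℝ => r^2/2 * ((besselI 0 (κ * r))^2 - (besselI 1 (κ * r))^2))
      = fun y => y^2/2 * (besselI 0 (κ * y) * besselI 0 (κ * y)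
        - besselI 1 (κ * y) * besselI 1 (κ * y)) from by funext y; ring]
    have hI0 : HasDerivAt (fun s => besselI 0 (κ * s)) (besselI 1 (κ * r) * κ) r :=
      hasDerivAt_scale κ r (hasDerivAt_besselI_zero (κ * r))
    set D := (1/π) * ∫ θ in (0:ℝ)..π, exp (κ * r * cos θ) * cos θ ^ 2 with hD
    have hI1 : HasDerivAt (fun s => besselI 1 (κ * s)) (D * κ) r :=
      hasDerivAt_scale κ r (hasDerivAt_besselI_one (κ * r))
    have hpow : HasDerivAt (fun s : ℝ => s^2/2) (r) r := by
      have := (hasDerivAt_pow 2 r).div_const 2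
      simpa using this
    have h := hpow.fun_mul ((hI0.fun_mul hI0).fun_sub (hI1.fun_mul hI1))
    rcases eq_or_ne r 0 with rfl | hr
    · refine h.congr_deriv ?_
      norm_num
    · have hkr : κ * r ≠ 0 := by
        rcases lt_or_gt_of_ne hr with h' | h'
        · exact ne_of_lt (by nlinarith)
        · exact ne_of_gt (by positivity)
      have hDval : D = besselI 0 (κ * r) - besselI 1 (κ * r) / (κ * r) :=
        HasDerivAt.unique (hasDerivAt_besselI_one (κ * r)) (hasDerivAt_besselI_one' hkr)
      rw [hDval] at h
      refine h.congr_deriv ?_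
      field_simp
      ring
  have hint : IntervalIntegrable (fun r => r * (besselI 0 (κ * r))^2) volume 0 R :=
    (continuous_id.mul ((continuous_besselI_zero.comp
      (continuous_const.mul continuous_id)).pow 2)).intervalIntegrable 0 R
  have := intervalIntegral.integral_eq_sub_of_hasDerivAt key hint
  rw [this]
  norm_num

lemma continuousAt_besselK_zero {x : ℝ} (hx : 0 < x) : ContinuousAt (besselK 0) x :=
  (hasDerivAt_besselK_zero hx).continuousAt

lemma continuousAt_besselK_one {x : ℝ} (hx : 0 < x) : ContinuousAt (besselK 1) x :=
  (hasDerivAt_besselK_one hx).continuousAt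

lemma rK0_sq_bound {R κ : ℝ} (hR : 0 < R) (hκ : 0 < κ) {r : ℝ} (hr : R ≤ r) :
    r * (besselK 0 (κ * r))^2
      ≤ ((besselK 1 (κ * R))^2 * exp (2 * (κ * R)) / κ) * exp (-κ * r) := by
  have hkr : 0 < κ * r := mul_pos hκ (lt_of_lt_of_le hR hr)
  have h0 : 0 ≤ besselK 0 (κ * r) := besselK_nonneg 0 (by norm_num) hkr
  have h1 : besselK 0 (κ * r) ≤ exp (κ * R - κ * r) * besselK 1 (κ * R) :=
    (besselK_zero_le_one hkr).trans
      (besselK_one_decay (mul_pos hκ hR) (by nlinarith))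
  have h2 : (besselK 0 (κ * r))^2 ≤ (exp (κ * R - κ * r))^2 * (besselK 1 (κ * R))^2 := by
    nlinarith [Real.exp_pos (κ * R - κ * r),
      besselK_nonneg 1 (by norm_num : (0:ℝ) ≤ ((1:ℤ):ℝ)) (mul_pos hκ hR)]
  have h3 : r * exp (-(κ * r)) ≤ 1 / κ := by
    have := pow_mul_exp_neg_le hκ (by linarith : (0:ℝ) ≤ r) 1
    simpa using this
  have hKR : 0 ≤ besselK 1 (κ * R) := besselK_nonneg 1 (by norm_num) (mul_pos hκ hR)
  calc r * (besselK 0 (κ * r))^2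
      ≤ r * ((exp (κ * R - κ * r))^2 * (besselK 1 (κ * R))^2) := by nlinarith
    _ = (besselK 1 (κ * R))^2 * exp (2 * (κ * R)) * ((r * exp (-(κ * r))) * exp (-(κ * r))) := by
        have e1 : (exp (κ * R - κ * r))^2
            = exp (2*(κ*R)) * (exp (-(κ * r)) * exp (-(κ * r))) := by
          rw [sq, ← Real.exp_add, ← Real.exp_add, ← Real.exp_add]
          ring_nf
        rw [e1]
        ring
    _ ≤ (besselK 1 (κ * R))^2 * exp (2 * (κ * R)) * ((1/κ) * exp (-(κ * r))) := by
        have hp : (0:ℝ) ≤ (besselK 1 (κ * R))^2 * exp (2 * (κ * R)) := by positivity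
        apply mul_le_mul_of_nonneg_left _ hp
        exact mul_le_mul_of_nonneg_right h3 (exp_pos _).le
    _ = ((besselK 1 (κ * R))^2 * exp (2 * (κ * R)) / κ) * exp (-κ * r) := by
        rw [neg_mul]
        ring

lemma continuousOn_rK0_sq {R κ : ℝ} (hR : 0 < R) (hκ : 0 < κ) :
    ContinuousOn (fun r => r * (besselK 0 (κ * r))^2) (Ici R) := by
  intro r hr
  have hkr : 0 < κ * r := mul_pos hκ (lt_of_lt_of_le hR hr)
  apply ContinuousAt.continuousWithinAt
  exact continuousAt_id.mul ((((continuousAt_besselK_zero hkr).comp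
    (by exact (continuous_const.mul continuous_id).continuousAt)).pow 2))

lemma integrableOn_rK0_sq {R κ : ℝ} (hR : 0 < R) (hκ : 0 < κ) :
    IntegrableOn (fun r => r * (besselK 0 (κ * r))^2) (Ioi R) := by
  refine Integrable.mono'
    (((exp_neg_integrableOn_Ioi R hκ).const_mul ((besselK 1 (κ * R))^2 * exp (2 * (κ * R)) / κ)))
    (((continuousOn_rK0_sq hR hκ).mono Ioi_subset_Ici_self).aestronglyMeasurable measurableSet_Ioi) ?_
  filter_upwards [ae_restrict_mem measurableSet_Ioi] with r hr
  have hR' : R < r := hr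
  have hkr : 0 < κ * r := mul_pos hκ (lt_trans hR hR')
  have h0 : 0 ≤ besselK 0 (κ * r) := besselK_nonneg 0 (by norm_num) hkr
  rw [Real.norm_eq_abs, abs_of_nonneg
    (mul_nonneg (le_of_lt (lt_trans hR hR')) (sq_nonneg _))]
  exact rK0_sq_bound hR hκ (le_of_lt hr)

lemma integral_K_side {R κ : ℝ} (hR : 0 < R) (hκ : 0 < κ) :
    ∫ r in Ioi R, r * (besselK 0 (κ * r))^2
      = R^2/2 * ((besselK 1 (κ * R))^2 - (besselK 0 (κ * R))^2) := by
  set f : ℝ → ℝ := fun r =>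
    -(r^2/2 * (besselK 1 (κ * r) * besselK 1 (κ * r) - besselK 0 (κ * r) * besselK 0 (κ * r)))
    with hf
  have hderiv : ∀ r ∈ Ioi R, HasDerivAt f (r * (besselK 0 (κ * r))^2) r := by
    intro r hr
    have hkr : 0 < κ * r := mul_pos hκ (lt_trans hR hr)
    have hK0 : HasDerivAt (fun s => besselK 0 (κ * s)) (-(besselK 1 (κ * r)) * κ) r :=
      hasDerivAt_scale κ r (hasDerivAt_besselK_zero hkr)
    have hK1 : HasDerivAt (fun s => besselK 1 (κ * s))
        ((-(besselK 0 (κ * r)) - besselK 1 (κ * r) / (κ * r)) * κ) r :=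
      hasDerivAt_scale κ r (hasDerivAt_besselK_one' hkr)
    have hpow : HasDerivAt (fun s : ℝ => s^2/2) (r) r := by
      have := (hasDerivAt_pow 2 r).div_const 2
      simpa using this
    have h := (hpow.fun_mul ((hK1.fun_mul hK1).fun_sub (hK0.fun_mul hK0))).fun_neg
    refine h.congr_deriv ?_
    have hr0 : r ≠ 0 := (lt_trans hR hr).ne'
    field_simp
    ring
  have hcont : ContinuousWithinAt f (Ici R) R := by
    apply ContinuousAt.continuousWithinAt
    have hkR : 0 < κ * R := mul_pos hκ hR
    have c0 : ContinuousAt (fun s => besselK 0 (κ * s)) R :=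
      (continuousAt_besselK_zero hkR).comp (continuous_const.mul continuous_id).continuousAt
    have c1 : ContinuousAt (fun s => besselK 1 (κ * s)) R :=
      (continuousAt_besselK_one hkR).comp (continuous_const.mul continuous_id).continuousAt
    exact (((continuousAt_id.pow 2).div_const 2).mul ((c1.mul c1).sub (c0.mul c0))).neg
  have htend : Tendsto f atTop (𝓝 0) := by
    have hC : (0:ℝ) ≤ (besselK 1 (κ * R))^2 * exp (2 * (κ * R)) := by positivity
    refine squeeze_zero_norm' ?_
      (?_ : Tendsto (fun r : ℝ => ((besselK 1 (κ * R))^2 * exp (2 * (κ * R)) / (4 * κ^2))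
        * ((2*κ*r)^2 * exp (-(2*κ*r)))) atTop (𝓝 0))
    · filter_upwards [eventually_ge_atTop (max R 0)] with r hr
      have hrR : R ≤ r := le_trans (le_max_left _ _) hr
      have hr0 : 0 ≤ r := le_trans (le_max_right _ _) hr
      have hkr : 0 < κ * r := mul_pos hκ (lt_of_lt_of_le hR hrR)
      have hK0nn : 0 ≤ besselK 0 (κ * r) := besselK_nonneg 0 (by norm_num) hkr
      have hK1nn : 0 ≤ besselK 1 (κ * r) := besselK_nonneg 1 (by norm_num) hkr
      have hd : besselK 1 (κ * r) ≤ exp (κ * R - κ * r) * besselK 1 (κ * R) :=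
        besselK_one_decay (mul_pos hκ hR) (by nlinarith)
      have hd0 : besselK 0 (κ * r) ≤ exp (κ * R - κ * r) * besselK 1 (κ * R) :=
        (besselK_zero_le_one hkr).trans hd
      have hsq : besselK 1 (κ * r) * besselK 1 (κ * r) ≤
          exp (κ * R - κ * r)^2 * (besselK 1 (κ * R))^2 := by nlinarith [Real.exp_pos (κ * R - κ * r), besselK_nonneg 1 (by norm_num : (0:ℝ) ≤ ((1:ℤ):ℝ)) (mul_pos hκ hR)]
      have hsq0 : besselK 0 (κ * r) * besselK 0 (κ * r) ≤
          exp (κ * R - κ * r)^2 * (besselK 1 (κ * R))^2 := by nlinarith [Real.exp_pos (κ * R - κ * r), besselK_nonneg 1 (by norm_num : (0:ℝ) ≤ ((1:ℤ):ℝ)) (mul_pos hκ hR)]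
      have hexp : exp (κ * R - κ * r)^2 = exp (2*(κ*R)) * exp (-(2*κ*r)) := by
        rw [sq, ← Real.exp_add, ← Real.exp_add]
        ring_nf
      rw [hf, norm_neg, Real.norm_eq_abs]
      have habs : |r^2/2 * (besselK 1 (κ * r) * besselK 1 (κ * r)
          - besselK 0 (κ * r) * besselK 0 (κ * r))|
          ≤ r^2 * (exp (κ * R - κ * r)^2 * (besselK 1 (κ * R))^2) := by
        rw [abs_mul, abs_of_nonneg (by positivity : (0:ℝ) ≤ r^2/2)]
        have h1 : |besselK 1 (κ * r) * besselK 1 (κ * r)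
            - besselK 0 (κ * r) * besselK 0 (κ * r)|
            ≤ 2 * (exp (κ * R - κ * r)^2 * (besselK 1 (κ * R))^2) := by
          rw [abs_le]
          constructor <;> nlinarith
        nlinarith [sq_nonneg r, abs_nonneg (besselK 1 (κ * r) * besselK 1 (κ * r)
          - besselK 0 (κ * r) * besselK 0 (κ * r))]
      calc |r^2/2 * (besselK 1 (κ * r) * besselK 1 (κ * r)
            - besselK 0 (κ * r) * besselK 0 (κ * r))|
          ≤ r^2 * (exp (κ * R - κ * r)^2 * (besselK 1 (κ * R))^2) := habs
        _ = ((besselK 1 (κ * R))^2 * exp (2 * (κ * R)) / (4 * κ^2))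
            * ((2*κ*r)^2 * exp (-(2*κ*r))) := by
            rw [hexp]
            field_simp
            ring
    · have h1 : Tendsto (fun r : ℝ => 2*κ*r) atTop atTop :=
        Tendsto.const_mul_atTop (by positivity) tendsto_id
      have h2 : Tendsto (fun y : ℝ => y^2 * exp (-y)) atTop (𝓝 0) :=
        tendsto_pow_mul_exp_neg_atTop_nhds_zero 2
      have h3 := (h2.comp h1).const_mul
        ((besselK 1 (κ * R))^2 * exp (2 * (κ * R)) / (4 * κ^2))
      simpa [Function.comp] using h3
  have := integral_Ioi_of_hasDerivAt_of_tendsto hcont hderiv (integrableOn_rK0_sq hR hκ) htend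
  rw [this, hf]
  ring

lemma part1 (R κ : ℝ) (hR : 0 < R) (hκ : 0 < κ) :
    (∫ r in (0:ℝ)..R, r * (besselI 0 (κ * r))^2) +
      (besselI 0 (κ * R) / besselK 0 (κ * R))^2 *
        ∫ r in Set.Ioi R, r * (besselK 0 (κ * r))^2
      = -(R / (2 * κ * (besselK 0 (κ * R))^2)) *
          deriv (fun x => besselI 0 x * besselK 0 x) (κ * R) := by
  have hkR : 0 < κ * R := mul_pos hκ hR
  have hd : deriv (fun x => besselI 0 x * besselK 0 x) (κ * R)
      = besselI 1 (κ * R) * besselK 0 (κ * R) + besselI 0 (κ * R) * -(besselK 1 (κ * R)) :=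
    ((hasDerivAt_besselI_zero (κ * R)).mul (hasDerivAt_besselK_zero hkR)).deriv
  rw [hd, integral_I_side hκ, integral_K_side hR hκ]
  have hw := wronskian_eq_one hkR
  have hK0 : besselK 0 (κ * R) ≠ 0 := ne_of_gt (besselK_zero_pos hkR)
  set i0 := besselI 0 (κ * R)
  set i1 := besselI 1 (κ * R)
  set k0 := besselK 0 (κ * R)
  set k1 := besselK 1 (κ * R)
  have key : κ * R * (i0^2*k1^2 - i1^2*k0^2) = i0*k1 - i1*k0 := by
    linear_combination (i0*k1 - i1*k0) * hw
  field_simp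
  linear_combination key

lemma volume_ball_two :
    (volume (Metric.ball (0 : EuclideanSpace ℝ (Fin 2)) 1)).toReal = π := by
  rw [EuclideanSpace.volume_ball]
  have h2 : (Fintype.card (Fin 2) : ℝ) = 2 := by simp
  rw [Fintype.card_fin]
  norm_num
  exact Real.sq_sqrt Real.pi_pos.le

lemma part2 (R κ : ℝ) (hR : 0 < R) (hκ : 0 < κ) :
    (∫ x : EuclideanSpace ℝ (Fin 2),
        (if ‖x‖ < R then besselI 0 (κ * ‖x‖) / Real.sqrt (2 * Real.pi)
          else (besselI 0 (κ * R) / besselK 0 (κ * R)) * besselK 0 (κ * ‖x‖) /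
            Real.sqrt (2 * Real.pi))^2)
      = (∫ r in (0:ℝ)..R, r * (besselI 0 (κ * r))^2) +
        (besselI 0 (κ * R) / besselK 0 (κ * R))^2 *
          ∫ r in Set.Ioi R, r * (besselK 0 (κ * r))^2 := by
  have hkR : 0 < κ * R := mul_pos hκ hR
  have hK0 : besselK 0 (κ * R) ≠ 0 := ne_of_gt (besselK_zero_pos hkR)
  set c : ℝ := besselI 0 (κ * R) / besselK 0 (κ * R) with hc
  set f : ℝ → ℝ := fun r =>
    (if r < R then besselI 0 (κ * r) / Real.sqrt (2 * π)
      else c * besselK 0 (κ * r) / Real.sqrt (2 * π))^2 with hfdef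
  have hpol := integral_fun_norm_addHaar (volume : Measure (EuclideanSpace ℝ (Fin 2))) f
  have hrank : Module.finrank ℝ (EuclideanSpace ℝ (Fin 2)) = 2 := by
    simp [finrank_euclideanSpace]
  rw [hrank, measureReal_def, volume_ball_two] at hpol
  have heq : (∫ x : EuclideanSpace ℝ (Fin 2),
      (if ‖x‖ < R then besselI 0 (κ * ‖x‖) / Real.sqrt (2 * Real.pi)
        else (besselI 0 (κ * R) / besselK 0 (κ * R)) * besselK 0 (κ * ‖x‖) /
          Real.sqrt (2 * Real.pi))^2) = ∫ x : EuclideanSpace ℝ (Fin 2), f ‖x‖ := rfl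
  rw [heq, hpol]
  -- now compute the radial integral
  have hs2 : Real.sqrt (2 * π) ^ 2 = 2 * π := Real.sq_sqrt (by positivity)
  have hg1 : EqOn (fun y : ℝ => y ^ 1 • f y)
      (fun y : ℝ => y * (besselI 0 (κ * y))^2 / (2 * π)) (Ioc 0 R) := by
    intro y hy
    simp only [pow_one, smul_eq_mul, hfdef]
    rcases lt_or_eq_of_le hy.2 with h | h
    · rw [if_pos h, div_pow, hs2]
      ring
    · subst h
      rw [if_neg (lt_irrefl _), hc, div_mul_cancel₀ _ hK0, div_pow, hs2]
      ring
  have hg2 : EqOn (fun y : ℝ => y ^ 1 • f y)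
      (fun y : ℝ => c^2 / (2 * π) * (y * (besselK 0 (κ * y))^2)) (Ioi R) := by
    intro y hy
    simp only [pow_one, smul_eq_mul, hfdef]
    rw [if_neg (not_lt.2 (le_of_lt hy)), div_pow, hs2, mul_pow]
    ring
  have hint1 : IntegrableOn (fun y : ℝ => y ^ 1 • f y) (Ioc 0 R) := by
    apply (Continuous.integrableOn_Ioc _).congr_fun hg1.symm measurableSet_Ioc
    exact (continuous_id.mul ((continuous_besselI_zero.comp
      (continuous_const.mul continuous_id)).pow 2)).div_const (2 * π)
  have hint2 : IntegrableOn (fun y : ℝ => y ^ 1 • f y) (Ioi R) := by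
    exact IntegrableOn.congr_fun ((integrableOn_rK0_sq hR hκ).const_mul (c^2 / (2*π)))
      hg2.symm measurableSet_Ioi
  have hsplit : (∫ y in Ioi (0:ℝ), y ^ 1 • f y)
      = (∫ y in Ioc 0 R, y ^ 1 • f y) + ∫ y in Ioi R, y ^ 1 • f y := by
    rw [← Ioc_union_Ioi_eq_Ioi hR.le]
    exact setIntegral_union (Ioc_disjoint_Ioi le_rfl) measurableSet_Ioi hint1 hint2
  have hval1 : (∫ y in Ioc 0 R, y ^ 1 • f y)
      = (∫ r in (0:ℝ)..R, r * (besselI 0 (κ * r))^2) / (2 * π) := by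
    rw [setIntegral_congr_fun measurableSet_Ioc hg1,
      ← intervalIntegral.integral_of_le hR.le, intervalIntegral.integral_div]
  have hval2 : (∫ y in Ioi R, y ^ 1 • f y)
      = c^2 / (2 * π) * ∫ r in Ioi R, r * (besselK 0 (κ * r))^2 := by
    rw [setIntegral_congr_fun measurableSet_Ioi hg2, integral_const_mul]
  rw [hsplit, hval1, hval2]
  have hpi : (π:ℝ) ≠ 0 := Real.pi_ne_zero
  simp only [nsmul_eq_mul, smul_eq_mul, Nat.cast_ofNat]
  generalize (∫ r in (0:ℝ)..R, r * (besselI 0 (κ * r))^2) = A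
  generalize (∫ r in Ioi R, r * (besselK 0 (κ * r))^2) = B
  field_simp

/-- squared norm of the single-circle ground-state eigenfunction. -/
theorem ground_state_norm (R κ : ℝ) (hR : 0 < R) (hκ : 0 < κ) :
    ((∫ r in (0:ℝ)..R, r * (besselI 0 (κ * r))^2) +
      (besselI 0 (κ * R) / besselK 0 (κ * R))^2 *
        ∫ r in Set.Ioi R, r * (besselK 0 (κ * r))^2
      = -(R / (2 * κ * (besselK 0 (κ * R))^2)) *
          deriv (fun x => besselI 0 x * besselK 0 x) (κ * R)) ∧
    (∫ x : EuclideanSpace ℝ (Fin 2),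
        (if ‖x‖ < R then besselI 0 (κ * ‖x‖) / Real.sqrt (2 * Real.pi)
          else (besselI 0 (κ * R) / besselK 0 (κ * R)) * besselK 0 (κ * ‖x‖) /
            Real.sqrt (2 * Real.pi))^2
      = -(R / (2 * κ * (besselK 0 (κ * R))^2)) *
          deriv (fun x => besselI 0 x * besselK 0 x) (κ * R)) := by
  exact ⟨part1 R κ hR hκ, (part2 R κ hR hκ).trans (part1 R κ hR hκ)⟩
end

section
/- Let α > 0 and β ∈ ℝ with α + β > 0. For R > 0 let κ_0(R) be the unique positive solution of (α + β) R I_0(κR) K_0(κR) = 1, write P(x) = I_0(x) K_0(x), and define ς(R) = α (1 − β R) P(R κ_0(R)) + α κ_0(R) R P'(R κ_0(R)). Then there exists R₀ > 0 such that ς(R) > 0 for all 0 < R < R₀ (hence the first-order correction t_0 = −2 κ_0 P(Rκ_0) ς(R)/(R P'(Rκ_0)) · (1/α) · α is negative for all sufficiently small R). -/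
open MeasureTheory Real Filter Asymptotics Topology

section AuxLemmas
open MeasureTheory Real Filter Set

lemma self_le_cosh_s12 (t : ℝ) : t ≤ Real.cosh t := by
  rcases le_or_gt t 0 with h | h
  · exact h.trans (by positivity)
  · have h1 : t ≤ Real.sinh t := Real.self_le_sinh_iff.2 h.le
    have h2 : Real.sinh t < Real.cosh t := Real.sinh_lt_cosh t
    linarith

lemma u_le_exp_half (u : ℝ) (hu : 0 ≤ u) : u ≤ Real.exp (u / 2) := by
  have h1 : 1 + u / 4 ≤ Real.exp (u / 4) := by
    have := Real.add_one_le_exp (u / 4); linarith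
  have h2 : Real.exp (u / 2) = Real.exp (u / 4) ^ 2 := by
    rw [sq, ← Real.exp_add]; ring_nf
  have h3 : (1 + u/4)^2 ≤ Real.exp (u/4)^2 := by nlinarith
  nlinarith [sq_nonneg (u/4 - 1)]

lemma integrableOn_K0aux {x : ℝ} (hx : 0 < x) :
    IntegrableOn (fun t => Real.exp (-x * Real.cosh t)) (Ioi 0) := by
  apply (exp_neg_integrableOn_Ioi 0 hx).mono'
  · exact (Real.continuous_exp.comp ((continuous_const.mul Real.continuous_cosh))).aestronglyMeasurable
  · filter_upwards [ae_restrict_mem measurableSet_Ioi] with t ht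
    rw [Real.norm_eq_abs, abs_of_pos (Real.exp_pos _)]
    apply Real.exp_le_exp.2
    nlinarith [self_le_cosh_s12 t]

lemma integrableOn_K1aux {x : ℝ} (hx : 0 < x) :
    IntegrableOn (fun t => Real.cosh t * Real.exp (-x * Real.cosh t)) (Ioi 0) := by
  apply (((exp_neg_integrableOn_Ioi 0 (half_pos hx)).const_mul (1/x))).mono'
  · exact (Real.continuous_cosh.mul (Real.continuous_exp.comp
      (continuous_const.mul Real.continuous_cosh))).aestronglyMeasurable
  · filter_upwards [ae_restrict_mem measurableSet_Ioi] with t ht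
    have hc : (0:ℝ) < Real.cosh t := Real.cosh_pos t
    rw [Real.norm_eq_abs, abs_of_pos (by positivity)]
    have key : x * Real.cosh t * Real.exp (-x * Real.cosh t) ≤ Real.exp (-(x * Real.cosh t / 2)) := by
      have h := u_le_exp_half (x * Real.cosh t) (by positivity)
      calc x * Real.cosh t * Real.exp (-x * Real.cosh t)
          ≤ Real.exp (x * Real.cosh t / 2) * Real.exp (-x * Real.cosh t) :=
            mul_le_mul_of_nonneg_right h (Real.exp_pos _).le
        _ = Real.exp (-(x * Real.cosh t / 2)) := by rw [← Real.exp_add]; ring_nf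
    have h2 : Real.exp (-(x * Real.cosh t / 2)) ≤ Real.exp (-(x/2) * t) := by
      apply Real.exp_le_exp.2
      nlinarith [self_le_cosh_s12 t]
    calc Real.cosh t * Real.exp (-x * Real.cosh t)
        = (1/x) * (x * Real.cosh t * Real.exp (-x * Real.cosh t)) := by
          field_simp
      _ ≤ (1/x) * Real.exp (-(x/2) * t) :=
          mul_le_mul_of_nonneg_left (key.trans h2) (by positivity)

lemma besselI_zero_eq (x : ℝ) :
    besselI 0 x = (1 / Real.pi) * ∫ θ in (0:ℝ)..Real.pi, Real.exp (x * Real.cos θ) := by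
  simp [besselI]

lemma besselK_zero_eq (x : ℝ) :
    besselK 0 x = ∫ t in Set.Ioi (0:ℝ), Real.exp (-x * Real.cosh t) := by
  simp [besselK]

lemma hasDerivAt_besselI0 (x₀ : ℝ) :
    HasDerivAt (besselI 0)
      ((1 / Real.pi) * ∫ θ in (0:ℝ)..Real.pi, Real.exp (x₀ * Real.cos θ) * Real.cos θ) x₀ := by
  have key : HasDerivAt (fun x => ∫ θ in (0:ℝ)..Real.pi, Real.exp (x * Real.cos θ))
      (∫ θ in (0:ℝ)..Real.pi, Real.exp (x₀ * Real.cos θ) * Real.cos θ) x₀ := by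
    have := intervalIntegral.hasDerivAt_integral_of_dominated_loc_of_deriv_le
      (F := fun x θ => Real.exp (x * Real.cos θ))
      (F' := fun x θ => Real.exp (x * Real.cos θ) * Real.cos θ)
      (x₀ := x₀) (bound := fun _ => Real.exp (|x₀| + 1)) (a := 0) (b := Real.pi)
      (μ := volume) (Metric.ball_mem_nhds x₀ one_pos)
      (Eventually.of_forall fun x =>
        ((Real.continuous_exp.comp (continuous_const.mul Real.continuous_cos)).aestronglyMeasurable))
      ((Real.continuous_exp.comp (continuous_const.mul Real.continuous_cos)).intervalIntegrable _ _)
      (((Real.continuous_exp.comp (continuous_const.mul Real.continuous_cos)).mul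
        Real.continuous_cos).aestronglyMeasurable)
      (Eventually.of_forall fun θ => fun _ x hx => ?_)
      (intervalIntegrable_const)
      (Eventually.of_forall fun θ => fun _ x hx => ?_)
    · exact this.2
    · have h1 : |Real.cos θ| ≤ 1 := Real.abs_cos_le_one θ
      have h2 : x * Real.cos θ ≤ |x₀| + 1 := by
        have : |x - x₀| < 1 := by simpa [Real.dist_eq] using Metric.mem_ball.1 hx
        have : |x| ≤ |x₀| + 1 := by
          have := abs_sub_abs_le_abs_sub x x₀; linarith
        calc x * Real.cos θ ≤ |x * Real.cos θ| := le_abs_self _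
          _ = |x| * |Real.cos θ| := abs_mul _ _
          _ ≤ (|x₀| + 1) * 1 := by
              apply mul_le_mul ‹|x| ≤ |x₀| + 1› h1 (abs_nonneg _) (by positivity)
          _ = |x₀| + 1 := mul_one _
      rw [Real.norm_eq_abs, abs_mul, abs_of_pos (Real.exp_pos _)]
      calc Real.exp (x * Real.cos θ) * |Real.cos θ| ≤ Real.exp (|x₀| + 1) * 1 := by
            apply mul_le_mul (Real.exp_le_exp.2 h2) h1 (abs_nonneg _) (Real.exp_pos _).le
        _ = _ := mul_one _
    · have h := ((hasDerivAt_id x).mul_const (Real.cos θ)).exp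
      simpa using h
  have : besselI 0 = fun x => (1/Real.pi) * ∫ θ in (0:ℝ)..Real.pi, Real.exp (x * Real.cos θ) := by
    funext x; exact besselI_zero_eq x
  rw [this]
  exact key.const_mul _

lemma hasDerivAt_besselK0 {x₀ : ℝ} (hx₀ : 0 < x₀) :
    HasDerivAt (besselK 0)
      (-∫ t in Set.Ioi (0:ℝ), Real.cosh t * Real.exp (-x₀ * Real.cosh t)) x₀ := by
  have key := hasDerivAt_integral_of_dominated_loc_of_deriv_le
      (F := fun x t => Real.exp (-x * Real.cosh t))
      (F' := fun x t => -(Real.cosh t * Real.exp (-x * Real.cosh t)))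
      (x₀ := x₀) (bound := fun t => Real.cosh t * Real.exp (-(x₀/2) * Real.cosh t))
      (μ := volume.restrict (Ioi 0)) (Metric.ball_mem_nhds x₀ (half_pos hx₀))
      (Eventually.of_forall fun x =>
        (Real.continuous_exp.comp (continuous_const.mul Real.continuous_cosh)).aestronglyMeasurable)
      (integrableOn_K0aux hx₀)
      ((Real.continuous_cosh.mul (Real.continuous_exp.comp
        (continuous_const.mul Real.continuous_cosh))).aestronglyMeasurable.neg)
      (Eventually.of_forall fun t x hx => ?_)
      (integrableOn_K1aux (half_pos hx₀))
      (Eventually.of_forall fun t x hx => ?_)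
  · have : besselK 0 = fun x => ∫ t in Set.Ioi (0:ℝ), Real.exp (-x * Real.cosh t) := by
      funext x; simp [besselK]
    rw [this, ← integral_neg]
    exact key.2
  · have hc : (0:ℝ) < Real.cosh t := Real.cosh_pos t
    have hxh : x₀/2 ≤ x := by
      have : |x - x₀| < x₀/2 := by simpa [Real.dist_eq] using Metric.mem_ball.1 hx
      have := abs_sub_lt_iff.1 this
      linarith [this.1, this.2]
    rw [norm_neg, Real.norm_eq_abs, abs_of_pos (by positivity)]
    apply mul_le_mul_of_nonneg_left _ hc.le
    apply Real.exp_le_exp.2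
    nlinarith
  · have h : HasDerivAt (fun y => Real.exp (-y * Real.cosh t)) _ x :=
      (((hasDerivAt_id x).neg).mul_const (Real.cosh t)).exp
    refine h.congr_deriv ?_
    simp only [Pi.neg_apply, id_eq]
    ring

lemma I1_nonneg {x : ℝ} (hx : 0 ≤ x) :
    0 ≤ ∫ θ in (0:ℝ)..Real.pi, Real.exp (x * Real.cos θ) * Real.cos θ := by
  have parts := intervalIntegral.integral_mul_deriv_eq_deriv_mul
    (u := fun θ => Real.exp (x * Real.cos θ)) (v := Real.sin)
    (u' := fun θ => Real.exp (x * Real.cos θ) * (x * (-Real.sin θ)))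
    (v' := Real.cos) (a := 0) (b := Real.pi)
    (fun θ _ => by simpa using ((Real.hasDerivAt_cos θ).const_mul x).exp)
    (fun θ _ => Real.hasDerivAt_sin θ)
    (((Real.continuous_exp.comp (continuous_const.mul Real.continuous_cos)).mul
      ((continuous_const.mul Real.continuous_sin.neg))).intervalIntegrable _ _)
    (Real.continuous_cos.intervalIntegrable _ _)
  rw [parts]
  simp only [Real.sin_pi, Real.sin_zero, mul_zero, zero_sub, sub_zero, zero_mul]
  rw [← intervalIntegral.integral_neg]
  apply intervalIntegral.integral_nonneg Real.pi_pos.le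
  intro θ _
  have h : -(Real.exp (x * Real.cos θ) * (x * (-Real.sin θ)) * Real.sin θ)
      = Real.exp (x * Real.cos θ) * x * (Real.sin θ)^2 := by ring
  show (0:ℝ) ≤ -(Real.exp (x * Real.cos θ) * (x * (-Real.sin θ)) * Real.sin θ)
  rw [h]; positivity

lemma K0_nonneg (x : ℝ) : 0 ≤ besselK 0 x := by
  rw [besselK_zero_eq]
  exact setIntegral_nonneg measurableSet_Ioi fun t _ => (Real.exp_pos _).le

lemma I0_nonneg (x : ℝ) : 0 ≤ besselI 0 x := by
  rw [besselI_zero_eq]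
  apply mul_nonneg (by positivity)
  exact intervalIntegral.integral_nonneg Real.pi_pos.le fun θ _ => (Real.exp_pos _).le

lemma I0_le_exp {x : ℝ} (hx : 0 ≤ x) : besselI 0 x ≤ Real.exp x := by
  rw [besselI_zero_eq]
  have h : ∫ θ in (0:ℝ)..Real.pi, Real.exp (x * Real.cos θ) ≤
      ∫ _ in (0:ℝ)..Real.pi, Real.exp x := by
    apply intervalIntegral.integral_mono_on Real.pi_pos.le
      ((Real.continuous_exp.comp (continuous_const.mul Real.continuous_cos)).intervalIntegrable _ _)
      (intervalIntegrable_const)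
    intro θ _
    apply Real.exp_le_exp.2
    show x * Real.cos θ ≤ x
    nlinarith [Real.cos_le_one θ]
  calc (1/Real.pi) * ∫ θ in (0:ℝ)..Real.pi, Real.exp (x * Real.cos θ)
      ≤ (1/Real.pi) * ∫ _ in (0:ℝ)..Real.pi, Real.exp x := by
        apply mul_le_mul_of_nonneg_left h (by positivity)
    _ = Real.exp x := by
        rw [intervalIntegral.integral_const, sub_zero, smul_eq_mul]
        field_simp

lemma integral_aux_one {x : ℝ} (hx : 0 < x) :
    ∫ t in Ioi (0:ℝ), x * Real.cosh t * Real.exp (-x * Real.sinh t) = 1 := by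
  have hderiv : ∀ t ∈ Ioi (0:ℝ), HasDerivAt (fun t => -Real.exp (-x * Real.sinh t))
      (x * Real.cosh t * Real.exp (-x * Real.sinh t)) t := by
    intro t _
    have h : HasDerivAt (fun t => -Real.exp (-x * Real.sinh t)) _ t :=
      (((Real.hasDerivAt_sinh t).const_mul (-x)).exp).neg
    convert h using 1
    ring
  have hsinh : Tendsto Real.sinh atTop atTop := by
    apply tendsto_atTop_mono' atTop ?_ tendsto_id
    filter_upwards [eventually_ge_atTop (0:ℝ)] with t ht
    exact Real.self_le_sinh_iff.2 ht
  have htend : Tendsto (fun t => -Real.exp (-x * Real.sinh t)) atTop (nhds 0) := by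
    rw [show (0:ℝ) = -0 by ring]
    apply Tendsto.neg
    apply Real.tendsto_exp_atBot.comp
    exact Tendsto.const_mul_atTop_of_neg (by linarith) hsinh
  have := integral_Ioi_of_hasDerivAt_of_nonneg
    (g := fun t => -Real.exp (-x * Real.sinh t))
    (g' := fun t => x * Real.cosh t * Real.exp (-x * Real.sinh t)) (a := 0)
    ((Real.continuous_exp.comp (continuous_const.mul Real.continuous_sinh)).neg.continuousWithinAt)
    hderiv (fun t _ => by positivity) htend
  rw [this]
  simp

lemma integrableOn_aux_one {x : ℝ} (hx : 0 < x) :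
    IntegrableOn (fun t => x * Real.cosh t * Real.exp (-x * Real.sinh t)) (Ioi 0) := by
  have hderiv : ∀ t ∈ Ioi (0:ℝ), HasDerivAt (fun t => -Real.exp (-x * Real.sinh t))
      (x * Real.cosh t * Real.exp (-x * Real.sinh t)) t := by
    intro t _
    have h : HasDerivAt (fun t => -Real.exp (-x * Real.sinh t)) _ t :=
      (((Real.hasDerivAt_sinh t).const_mul (-x)).exp).neg
    convert h using 1
    ring
  have hsinh : Tendsto Real.sinh atTop atTop := by
    apply tendsto_atTop_mono' atTop ?_ tendsto_id
    filter_upwards [eventually_ge_atTop (0:ℝ)] with t ht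
    exact Real.self_le_sinh_iff.2 ht
  have htend : Tendsto (fun t => -Real.exp (-x * Real.sinh t)) atTop (nhds 0) := by
    rw [show (0:ℝ) = -0 by ring]
    apply Tendsto.neg
    apply Real.tendsto_exp_atBot.comp
    exact Tendsto.const_mul_atTop_of_neg (by linarith) hsinh
  exact integrableOn_Ioi_deriv_of_nonneg
    ((Real.continuous_exp.comp (continuous_const.mul Real.continuous_sinh)).neg.continuousWithinAt)
    hderiv (fun t _ => by positivity) htend

lemma xK1_le_one {x : ℝ} (hx : 0 < x) :
    x * ∫ t in Ioi (0:ℝ), Real.cosh t * Real.exp (-x * Real.cosh t) ≤ 1 := by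
  rw [← integral_aux_one hx, ← integral_const_mul]
  apply setIntegral_mono_on ((integrableOn_K1aux hx).const_mul x) (integrableOn_aux_one hx)
    measurableSet_Ioi
  intro t _
  have hc : (0:ℝ) < Real.cosh t := Real.cosh_pos t
  have : Real.exp (-x * Real.cosh t) ≤ Real.exp (-x * Real.sinh t) := by
    apply Real.exp_le_exp.2
    have := Real.sinh_lt_cosh t
    nlinarith
  calc x * (Real.cosh t * Real.exp (-x * Real.cosh t))
      = x * Real.cosh t * Real.exp (-x * Real.cosh t) := by ring
    _ ≤ x * Real.cosh t * Real.exp (-x * Real.sinh t) := by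
        apply mul_le_mul_of_nonneg_left this (by positivity)

lemma K0_le_exp {x : ℝ} (hx : 1 ≤ x) : besselK 0 x ≤ Real.exp (1 - x) := by
  have hx0 : (0:ℝ) < x := lt_of_lt_of_le one_pos hx
  rw [besselK_zero_eq]
  have key : ∫ t in Ioi (0:ℝ), Real.exp (-x * Real.cosh t)
      ≤ ∫ t in Ioi (0:ℝ), Real.exp (1 - x) * Real.exp (-t) := by
    have hint : IntegrableOn (fun t => Real.exp (1-x) * Real.exp (-t)) (Ioi 0) := by
      have := (exp_neg_integrableOn_Ioi 0 one_pos).const_mul (Real.exp (1-x))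
      simpa [IntegrableOn] using this
    apply setIntegral_mono_on (integrableOn_K0aux hx0) hint measurableSet_Ioi
    intro t ht
    rw [← Real.exp_add]
    apply Real.exp_le_exp.2
    have h1 := self_le_cosh_s12 t
    have h2 := Real.one_le_cosh t
    nlinarith
  calc ∫ t in Ioi (0:ℝ), Real.exp (-x * Real.cosh t)
      ≤ ∫ t in Ioi (0:ℝ), Real.exp (1 - x) * Real.exp (-t) := key
    _ = Real.exp (1 - x) * ∫ t in Ioi (0:ℝ), Real.exp (-t) := integral_const_mul _ _
    _ = Real.exp (1 - x) := by rw [integral_exp_neg_Ioi_zero, mul_one]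

end AuxLemmas

/-- the quantity `ς(R)` is positive for all sufficiently small `R`. -/
theorem varsigma_pos_small_R (α β : ℝ) (hα : 0 < α) (hγ : 0 < α + β)
    (κ0 : ℝ → ℝ)
    (hκ0 : ∀ R > (0:ℝ), 0 < κ0 R ∧
      (α + β) * R * (besselI 0 (κ0 R * R) * besselK 0 (κ0 R * R)) = 1) :
    ∃ R₀ > (0:ℝ), ∀ R : ℝ, 0 < R → R < R₀ →
      0 < α * (1 - β * R) * (besselI 0 (R * κ0 R) * besselK 0 (R * κ0 R))
          + α * κ0 R * R * deriv (fun x => besselI 0 x * besselK 0 x) (R * κ0 R) := by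
  classical
  refine ⟨min (1 / (2 * (|β| + 1))) (1 / (7 * (α + β))), ?_, ?_⟩
  · have h1 : (0:ℝ) < 1 / (2 * (|β| + 1)) := by positivity
    have h2 : (0:ℝ) < 1 / (7 * (α + β)) := by positivity
    exact lt_min h1 h2
  intro R hR hRlt
  obtain ⟨hκpos, hconstr⟩ := hκ0 R hR
  set x : ℝ := R * κ0 R with hxdef
  have hxpos : 0 < x := mul_pos hR hκpos
  have hcomm : κ0 R * R = x := by rw [hxdef]; ring
  rw [hcomm] at hconstr
  -- bounds on R
  have hRb1 : R < 1 / (2 * (|β| + 1)) := lt_of_lt_of_le hRlt (min_le_left _ _)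
  have hRb2 : R < 1 / (7 * (α + β)) := lt_of_lt_of_le hRlt (min_le_right _ _)
  have hβR : β * R ≤ 1 / 2 := by
    have h1 : β * R ≤ |β| * R := mul_le_mul_of_nonneg_right (le_abs_self β) hR.le
    have h2 : |β| * R ≤ |β| * (1 / (2 * (|β| + 1))) :=
      mul_le_mul_of_nonneg_left hRb1.le (abs_nonneg β)
    have h3 : |β| * (1 / (2 * (|β| + 1))) ≤ 1 / 2 := by
      rw [mul_one_div, div_le_div_iff₀ (by positivity) (by norm_num : (0:ℝ) < 2)]
      nlinarith [abs_nonneg β]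
    linarith
  have hγR : (α + β) * R < 1 / 7 := by
    have h := mul_lt_mul_of_pos_left hRb2 hγ
    calc (α + β) * R < (α + β) * (1 / (7 * (α + β))) := h
      _ = 1 / 7 := by field_simp
  have hγRpos : 0 < (α + β) * R := mul_pos hγ hR
  have hPnn : 0 ≤ besselI 0 x * besselK 0 x := mul_nonneg (I0_nonneg x) (K0_nonneg x)
  have hP7 : 7 < besselI 0 x * besselK 0 x := by
    by_contra hcon
    push_neg at hcon
    nlinarith [hconstr]
  -- x < 1
  have hx1 : x < 1 := by
    by_contra hcon
    push_neg at hcon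
    have h1 : besselI 0 x * besselK 0 x ≤ Real.exp x * Real.exp (1 - x) :=
      mul_le_mul (I0_le_exp hxpos.le) (K0_le_exp hcon) (K0_nonneg x) (Real.exp_pos _).le
    rw [← Real.exp_add] at h1
    have h2 : x + (1 - x) = 1 := by ring
    rw [h2] at h1
    have h3 : Real.exp 1 < 3 := by
      have := Real.exp_one_lt_d9
      linarith
    linarith
  -- the derivative
  set A : ℝ := (1 / Real.pi) * ∫ θ in (0:ℝ)..Real.pi, Real.exp (x * Real.cos θ) * Real.cos θ
    with hAdef
  set B : ℝ := ∫ t in Set.Ioi (0:ℝ), Real.cosh t * Real.exp (-x * Real.cosh t) with hBdef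
  have hD : HasDerivAt (fun y => besselI 0 y * besselK 0 y)
      (A * besselK 0 x + besselI 0 x * (-B)) x :=
    (hasDerivAt_besselI0 x).mul (hasDerivAt_besselK0 hxpos)
  rw [hD.deriv]
  -- positivity facts
  have hA : 0 ≤ A := by
    rw [hAdef]
    exact mul_nonneg (by positivity) (I1_nonneg hxpos.le)
  have hB0 : 0 ≤ B := by
    rw [hBdef]
    exact MeasureTheory.setIntegral_nonneg measurableSet_Ioi fun t _ =>
      mul_nonneg (Real.cosh_pos t).le (Real.exp_pos _).le
  have hxB : x * B ≤ 1 := xK1_le_one hxpos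
  have hexp3 : Real.exp x < 3 := by
    have h1 : Real.exp x < Real.exp 1 := Real.exp_lt_exp.2 hx1
    have h2 : Real.exp 1 < 3 := by
      have := Real.exp_one_lt_d9
      linarith
    linarith
  -- main estimate
  have e1 : α * κ0 R * R * (A * besselK 0 x + besselI 0 x * (-B))
      = α * (x * (A * besselK 0 x)) - α * (besselI 0 x * (x * B)) := by
    rw [hxdef]; ring
  have e2 : 0 ≤ α * (x * (A * besselK 0 x)) := by
    have := K0_nonneg x
    positivity
  have e3 : besselI 0 x * (x * B) ≤ Real.exp x := by
    calc besselI 0 x * (x * B) ≤ Real.exp x * 1 :=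
        mul_le_mul (I0_le_exp hxpos.le) hxB (by positivity) (Real.exp_pos _).le
      _ = Real.exp x := mul_one _
  have e4 : α * (besselI 0 x * (x * B)) ≤ α * 3 :=
    mul_le_mul_of_nonneg_left (by linarith) hα.le
  have e5 : α * (1/2) * 7 < α * (1 - β * R) * (besselI 0 x * besselK 0 x) := by
    have h1 : α * (1/2) ≤ α * (1 - β * R) :=
      mul_le_mul_of_nonneg_left (by linarith) hα.le
    have h2 : (0:ℝ) < α * (1/2) := by positivity
    calc α * (1/2) * 7 < α * (1/2) * (besselI 0 x * besselK 0 x) :=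
        mul_lt_mul_of_pos_left hP7 h2
      _ ≤ α * (1 - β * R) * (besselI 0 x * besselK 0 x) :=
        mul_le_mul_of_nonneg_right h1 hPnn
  rw [e1]
  linarith
end
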